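/- arXiv:1410.4230 — 10 statements merged into one kernel-verified Lean document; each statement's English description precedes it below -/
import Mathlib

section
/- Let X be a Mackey complete Hausdorff locally convex space whose topology is induced by a family Γ_X of continuous seminorms, and let (T(t))_{t≥0} be a C₀-semigroup on X. Then the following are equivalent: (iv) for every x ∈ X there exists ω > 0 such that e^{ωt} T(t)x → 0 in X as t → ∞ (strong exponential stability); (v) for every bounded set B ⊆ X there exists ω > 0 such that for every q ∈ Γ_X one has lim_{t→∞} sup_{x∈B} q(e^{ωt} T(t)x) = 0. -/
open Filter Topology Bornology Pointwise Set
open scoped ENNReal NNReal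

/-- `X` is Mackey complete: every Mackey Cauchy sequence converges. -/
def MackeyComplete (X : Type*) [AddCommGroup X] [Module ℝ X] [TopologicalSpace X] : Prop :=
  ∀ x : ℕ → X,
    (∃ (B : Set X) (b : ℕ → ℕ → ℝ), Bornology.IsVonNBounded ℝ B ∧
      Filter.Tendsto (fun p : ℕ × ℕ => b p.1 p.2) Filter.atTop (nhds 0) ∧
      ∀ n k : ℕ, x n - x k ∈ b n k • B) →
    ∃ l : X, Filter.Tendsto x Filter.atTop (nhds l)

section EGaugeAux

variable {X : Type*} [AddCommGroup X] [Module ℝ X] {D : Set X}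

lemma smul_subset_abs_smul (hbal : Balanced ℝ D) (c : ℝ) : c • D ⊆ |c| • D :=
  hbal.smul_mono (by simp [Real.norm_eq_abs])

lemma egauge_add_le' (hconv : Convex ℝ D) (hbal : Balanced ℝ D) (x y : X) :
    egauge ℝ D (x + y) ≤ egauge ℝ D x + egauge ℝ D y := by
  refine ENNReal.le_of_forall_pos_le_add fun ε hε hfin => ?_
  have hxfin : egauge ℝ D x ≠ ∞ := (lt_of_le_of_lt le_self_add hfin).ne
  have hyfin : egauge ℝ D y ≠ ∞ := (lt_of_le_of_lt le_add_self hfin).ne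
  have hε2 : ((ε / 2 : ℝ≥0) : ℝ≥0∞) ≠ 0 := by
    simp only [ne_eq, ENNReal.coe_eq_zero]
    positivity
  obtain ⟨a, hax, ha⟩ := egauge_lt_iff.1 (ENNReal.lt_add_right hxfin hε2)
  obtain ⟨b, hby, hb⟩ := egauge_lt_iff.1 (ENNReal.lt_add_right hyfin hε2)
  have hmem : x + y ∈ (|a| + |b|) • D := by
    have h1 : x ∈ |a| • D := smul_subset_abs_smul hbal a hax
    have h2 : y ∈ |b| • D := smul_subset_abs_smul hbal b hby
    have := Set.add_mem_add h1 h2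
    rwa [← hconv.add_smul (abs_nonneg a) (abs_nonneg b)] at this
  have h1 : egauge ℝ D (x + y) ≤ ‖|a| + |b|‖₊ := egauge_le_of_mem_smul hmem
  have h2 : (‖|a| + |b|‖₊ : ℝ≥0∞) ≤ (‖a‖₊ : ℝ≥0∞) + ‖b‖₊ := by
    rw [← ENNReal.coe_add, ENNReal.coe_le_coe]
    exact (nnnorm_add_le _ _).trans (by simp [Real.nnnorm_abs])
  calc egauge ℝ D (x + y) ≤ (‖a‖₊ : ℝ≥0∞) + ‖b‖₊ := h1.trans h2
    _ ≤ (egauge ℝ D x + (ε / 2 : ℝ≥0)) + (egauge ℝ D y + (ε / 2 : ℝ≥0)) := add_le_add ha.le hb.le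
    _ = egauge ℝ D x + egauge ℝ D y + (((ε / 2 : ℝ≥0) : ℝ≥0∞) + ((ε / 2 : ℝ≥0) : ℝ≥0∞)) := by
        rw [add_add_add_comm]
    _ = egauge ℝ D x + egauge ℝ D y + ε := by
        rw [← ENNReal.coe_add]
        norm_num

lemma egauge_neg' (hbal : Balanced ℝ D) (x : X) : egauge ℝ D (-x) = egauge ℝ D x := by
  have key : ∀ z : X, egauge ℝ D (-z) ≤ egauge ℝ D z := by
    intro z
    rw [le_egauge_iff]
    intro c hc
    obtain ⟨d, hd, rfl⟩ := hc
    have : -(c • d) ∈ (-c) • D := by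
      rw [← neg_smul]; exact Set.smul_mem_smul_set hd
    simpa using egauge_le_of_mem_smul this
  exact le_antisymm (key x) (by simpa using key (-x))

end EGaugeAux

/-- Type synonym carrying the pseudo-extended-metric induced by the gauge of `D`. -/
def BDisk {X : Type*} (_D : Set X) : Type _ := X

namespace BDisk

variable {X : Type*} [AddCommGroup X] [Module ℝ X] {D : Set X}

instance : AddCommGroup (BDisk D) := inferInstanceAs (AddCommGroup X)
instance : Module ℝ (BDisk D) := inferInstanceAs (Module ℝ X)
instance : Nonempty (BDisk D) := ⟨(0 : X)⟩

/-- Identity map to the underlying space. -/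
def toX (x : BDisk D) : X := x

/-- Identity map from the underlying space. -/
def ofX (x : X) : BDisk D := x

@[simp] lemma toX_ofX (x : X) : toX (ofX x : BDisk D) = x := rfl

/-- The gauge pseudo-extended-metric on `BDisk D`. -/
noncomputable def pems (hconv : Convex ℝ D) (hbal : Balanced ℝ D) (h0 : (0 : X) ∈ D) :
    PseudoEMetricSpace (BDisk D) where
  edist x y := egauge ℝ D (toX x - toX y)
  edist_self x := by
    show egauge ℝ D (toX x - toX x) = 0
    rw [sub_self]
    exact egauge_zero_right ℝ ⟨0, h0⟩
  edist_comm x y := by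
    show egauge ℝ D (toX x - toX y) = egauge ℝ D (toX y - toX x)
    rw [← neg_sub (toX y) (toX x), egauge_neg' hbal]
  edist_triangle x y z := by
    show egauge ℝ D (toX x - toX z) ≤
      egauge ℝ D (toX x - toX y) + egauge ℝ D (toX y - toX z)
    rw [← sub_add_sub_cancel (toX x) (toX y) (toX z)]
    exact egauge_add_le' hconv hbal _ _

lemma edist_def (hconv : Convex ℝ D) (hbal : Balanced ℝ D) (h0 : (0 : X) ∈ D) (x y : BDisk D) :
    @edist _ (pems hconv hbal h0).toEDist x y = egauge ℝ D (toX x - toX y) := rfl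

end BDisk

lemma bdisk_complete {X : Type*} [AddCommGroup X] [Module ℝ X] [TopologicalSpace X]
    [IsTopologicalAddGroup X] [ContinuousConstSMul ℝ X]
    {D : Set X} (hX : MackeyComplete X) (hconv : Convex ℝ D) (hbal : Balanced ℝ D)
    (h0 : (0 : X) ∈ D) (hcl : IsClosed D) (hbdd : IsVonNBounded ℝ D) :
    letI := BDisk.pems hconv hbal h0
    CompleteSpace (BDisk D) := by
  letI := BDisk.pems hconv hbal h0
  refine EMetric.complete_of_convergent_controlled_sequences
      (fun N => ENNReal.ofReal ((1 / 2) ^ N)) (fun N => ENNReal.ofReal_pos.2 (by positivity)) ?_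
  intro u hu
  have key : ∀ n m : ℕ, ∃ c : ℝ, (BDisk.toX (u n) - BDisk.toX (u m)) ∈ c • D ∧
      |c| < (1 / 2 : ℝ) ^ (min n m) := by
    intro n m
    have h := hu (min n m) n m (min_le_left _ _) (min_le_right _ _)
    rw [BDisk.edist_def hconv hbal h0,
      ← Real.enorm_eq_ofReal (by positivity : (0:ℝ) ≤ (1 / 2) ^ (min n m))] at h
    obtain ⟨c, hc1, hc2⟩ := egauge_lt_iff.1 h
    refine ⟨c, hc1, ?_⟩
    have := ENNReal.coe_lt_coe.1 hc2
    have h3 : ‖c‖ < ‖(1 / 2 : ℝ) ^ (min n m)‖ := this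
    rwa [Real.norm_eq_abs, Real.norm_eq_abs,
      abs_of_nonneg (by positivity : (0:ℝ) ≤ (1 / 2) ^ (min n m))] at h3
  choose c hc1 hc2 using key
  have hmin : Tendsto (fun p : ℕ × ℕ => min p.1 p.2) atTop atTop := by
    rw [Filter.tendsto_atTop_atTop]
    exact fun b => ⟨(b, b), fun p hp => le_min hp.1 hp.2⟩
  have hpow : Tendsto (fun k : ℕ => (1 / 2 : ℝ) ^ k) atTop (nhds 0) :=
    tendsto_pow_atTop_nhds_zero_of_lt_one (by norm_num) (by norm_num)
  obtain ⟨l, hl⟩ := hX (fun n => BDisk.toX (u n))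
    ⟨D, c, hbdd, squeeze_zero_norm
      (fun p => by rw [Real.norm_eq_abs]; exact (hc2 p.1 p.2).le) (hpow.comp hmin),
      fun n m => hc1 n m⟩
  refine ⟨BDisk.ofX l, ?_⟩
  rw [EMetric.tendsto_atTop]
  intro ε hε
  obtain ⟨N, hN⟩ : ∃ N : ℕ, ENNReal.ofReal ((1 / 2) ^ N) < ε := by
    have h2 : Tendsto (fun N : ℕ => ENNReal.ofReal ((1 / 2 : ℝ) ^ N)) atTop (nhds 0) := by
      rw [show (0 : ℝ≥0∞) = ENNReal.ofReal 0 by simp]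
      exact (ENNReal.continuous_ofReal.tendsto 0).comp hpow
    exact (h2.eventually_lt_const hε).exists
  refine ⟨N, fun n hn => ?_⟩
  have hmem : ∀ m, m ≥ N → BDisk.toX (u n) - BDisk.toX (u m) ∈ ((1 / 2 : ℝ) ^ N) • D := by
    intro m hm
    have hle : |c n m| ≤ (1 / 2 : ℝ) ^ N :=
      (hc2 n m).le.trans (pow_le_pow_of_le_one (by norm_num) (by norm_num) (le_min hn hm))
    refine hbal.smul_mono ?_ (hc1 n m)
    rw [Real.norm_eq_abs, Real.norm_eq_abs,
      abs_of_nonneg (by positivity : (0:ℝ) ≤ (1 / 2) ^ N)]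
    exact hle
  have hclosed : IsClosed (((1 / 2 : ℝ) ^ N) • D) := hcl.smul_of_ne_zero (by positivity)
  have hlim : Tendsto (fun m => BDisk.toX (u n) - BDisk.toX (u m)) atTop
      (nhds (BDisk.toX (u n) - l)) := tendsto_const_nhds.sub hl
  have hmem2 : BDisk.toX (u n) - l ∈ ((1 / 2 : ℝ) ^ N) • D :=
    hclosed.mem_of_tendsto hlim (Filter.eventually_atTop.2 ⟨N, hmem⟩)
  calc edist (u n) (BDisk.ofX l) = egauge ℝ D (BDisk.toX (u n) - l) := rfl
    _ ≤ ‖(1 / 2 : ℝ) ^ N‖₊ := egauge_le_of_mem_smul hmem2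
    _ = ENNReal.ofReal ((1 / 2) ^ N) := Real.enorm_eq_ofReal (by positivity)
    _ < ε := hN

lemma bdisk_toX_continuous {X : Type*} [AddCommGroup X] [Module ℝ X] [TopologicalSpace X]
    {ι : Type*} [Nonempty ι] {Γ : ι → Seminorm ℝ X} (hΓ : WithSeminorms Γ)
    {D : Set X} (hconv : Convex ℝ D) (hbal : Balanced ℝ D) (h0 : (0 : X) ∈ D)
    (hbdd : IsVonNBounded ℝ D) :
    letI := BDisk.pems hconv hbal h0
    Continuous (BDisk.toX : BDisk D → X) := by
  letI := BDisk.pems hconv hbal h0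
  rw [continuous_iff_continuousAt]
  intro x₀
  unfold ContinuousAt
  rw [hΓ.tendsto_nhds]
  intro i ε hε
  obtain ⟨R, hR, hRD⟩ := hΓ.isVonNBounded_iff_seminorm_bounded.1 hbdd i
  rw [EMetric.nhds_basis_eball.eventually_iff]
  refine ⟨ENNReal.ofReal (ε / R), ENNReal.ofReal_pos.2 (by positivity), ?_⟩
  intro y hy
  rw [EMetric.mem_ball, BDisk.edist_def hconv hbal h0,
    ← Real.enorm_eq_ofReal (by positivity : (0:ℝ) ≤ ε / R)] at hy
  obtain ⟨c, hc1, hc2⟩ := egauge_lt_iff.1 hy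
  obtain ⟨d, hd, hcd⟩ := hc1
  have hcabs : |c| < ε / R := by
    have h3 : ‖c‖ < ‖ε / R‖ := ENNReal.coe_lt_coe.1 hc2
    rwa [Real.norm_eq_abs, Real.norm_eq_abs,
      abs_of_nonneg (by positivity : (0:ℝ) ≤ ε / R)] at h3
  have heq : Γ i (BDisk.toX y - BDisk.toX x₀) = |c| * Γ i d := by
    rw [← hcd, map_smul_eq_mul, Real.norm_eq_abs]
  calc Γ i (BDisk.toX y - BDisk.toX x₀) = |c| * Γ i d := heq
    _ ≤ |c| * R := mul_le_mul_of_nonneg_left (hRD d hd).le (abs_nonneg c)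
    _ < (ε / R) * R := mul_lt_mul_of_pos_right hcabs hR
    _ = ε := div_mul_cancel₀ ε hR.ne'
/-- For a Mackey complete Hausdorff locally convex space `X` and a `C₀`-semigroup
`(T(t))_{t ≥ 0}` on `X`, strong exponential stability (iv) is equivalent to condition (v). -/
theorem statement1 {X : Type*} [AddCommGroup X] [Module ℝ X] [TopologicalSpace X]
    [T2Space X] (hX : MackeyComplete X)
    {ι : Type*} [Nonempty ι] (Γ : ι → Seminorm ℝ X) (hΓ : WithSeminorms Γ)
    (T : ℝ → X →L[ℝ] X)
    (hT0 : T 0 = ContinuousLinearMap.id ℝ X)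
    (hTsg : ∀ s t : ℝ, 0 ≤ s → 0 ≤ t → T (s + t) = (T s).comp (T t))
    (hTc : ∀ x : X, ContinuousOn (fun t : ℝ => T t x) (Set.Ici 0)) :
    (∀ x : X, ∃ ω > (0:ℝ),
        Tendsto (fun t : ℝ => Real.exp (ω * t) • T t x) atTop (nhds 0)) ↔
    (∀ B : Set X, IsVonNBounded ℝ B → ∃ ω > (0:ℝ), ∀ i : ι, ∀ ε > (0:ℝ),
        ∃ t₀ : ℝ, ∀ t ≥ t₀, ∀ x ∈ B, Γ i (Real.exp (ω * t) • T t x) ≤ ε) := by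
  haveI : IsTopologicalAddGroup X := hΓ.topologicalAddGroup
  haveI : ContinuousSMul ℝ X := hΓ.continuousSMul
  constructor
  · -- (iv) → (v)
    intro hiv B hB
    choose r hrpos hrB using hΓ.isVonNBounded_iff_seminorm_bounded.1 hB
    set D : Set X := {x | ∀ i, Γ i x ≤ r i} with hDdef
    have hBD : B ⊆ D := fun x hx i => (hrB i x hx).le
    have hconv : Convex ℝ D := by
      intro x hx y hy a b ha hb hab i
      calc Γ i (a • x + b • y) ≤ Γ i (a • x) + Γ i (b • y) := map_add_le_add _ _ _
        _ = ‖a‖ * Γ i x + ‖b‖ * Γ i y := by rw [map_smul_eq_mul, map_smul_eq_mul]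
        _ ≤ a * r i + b * r i := by
            rw [Real.norm_eq_abs, Real.norm_eq_abs, abs_of_nonneg ha, abs_of_nonneg hb]
            gcongr
            · exact hx i
            · exact hy i
        _ = r i := by rw [← add_mul, hab, one_mul]
    have hbal : Balanced ℝ D := by
      rw [balanced_iff_smul_mem]
      intro a ha x hx i
      rw [map_smul_eq_mul]
      calc ‖a‖ * Γ i x ≤ 1 * Γ i x := by
            have := apply_nonneg (Γ i) x
            gcongr
        _ = Γ i x := one_mul _
        _ ≤ r i := hx i
    have h0 : (0 : X) ∈ D := fun i => by
      rw [map_zero]; exact (hrpos i).le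
    have hcl : IsClosed D := by
      have : D = ⋂ i, {x : X | Γ i x ≤ r i} := by ext x; simp [hDdef]
      rw [this]
      exact isClosed_iInter fun i => isClosed_le (hΓ.continuous_seminorm i) continuous_const
    have hbdd : IsVonNBounded ℝ D := hΓ.isVonNBounded_iff_seminorm_bounded.2 fun i =>
      ⟨r i + 1, by linarith [hrpos i], fun x hx => by linarith [hx i]⟩
    letI instP : PseudoEMetricSpace (BDisk D) := BDisk.pems hconv hbal h0
    haveI : CompleteSpace (BDisk D) := bdisk_complete hX hconv hbal h0 hcl hbdd
    have hcont : Continuous (BDisk.toX : BDisk D → X) :=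
      bdisk_toX_continuous hΓ hconv hbal h0 hbdd
    set Z : ℕ → Set (BDisk D) := fun n => {x | ∀ i : ι, ∃ m : ℕ, ∀ t : ℝ, 0 ≤ t →
        Real.exp (t / ((n : ℝ) + 1)) * Γ i (T t (BDisk.toX x)) ≤ m} with hZdef
    -- every point lies in some Z n
    have hcover : ∀ x : BDisk D, ∃ n, x ∈ Z n := by
      intro x
      obtain ⟨ω', hω', htend⟩ := hiv (BDisk.toX x)
      obtain ⟨n, hn⟩ := exists_nat_gt (1 / ω')
      refine ⟨n, fun i => ?_⟩
      have hrate' : 1 ≤ ω' * ((n : ℝ) + 1) := by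
        rw [div_lt_iff₀ hω'] at hn
        nlinarith [hω']
      rw [hΓ.tendsto_nhds] at htend
      obtain ⟨t₀, ht₀⟩ := Filter.eventually_atTop.1 (htend i 1 one_pos)
      set t₁ := max t₀ 0 with ht₁def
      have hconton : ContinuousOn
          (fun t : ℝ => Real.exp (t / ((n : ℝ) + 1)) * Γ i (T t (BDisk.toX x)))
          (Set.Icc 0 t₁) := by
        refine ContinuousOn.mul ?_ ?_
        · exact (Real.continuous_exp.comp (continuous_id.div_const _)).continuousOn
        · exact (hΓ.continuous_seminorm i).comp_continuousOn
            ((hTc (BDisk.toX x)).mono (fun s hs => hs.1))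
      obtain ⟨Mb, hMb⟩ := isCompact_Icc.exists_bound_of_continuousOn hconton
      obtain ⟨m, hm⟩ := exists_nat_ge (max Mb 1)
      refine ⟨m, fun t ht => ?_⟩
      have hm1 : (1 : ℝ) ≤ m := le_trans (le_max_right _ _) hm
      by_cases hcase : t ≤ t₁
      · have h1 := hMb t ⟨ht, hcase⟩
        rw [Real.norm_eq_abs] at h1
        have := le_abs_self (Real.exp (t / ((n : ℝ) + 1)) * Γ i (T t (BDisk.toX x)))
        have hMble : Mb ≤ (m : ℝ) := le_trans (le_max_left _ _) hm
        linarith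
      · push_neg at hcase
        have htt₀ : t₀ ≤ t := le_trans (le_max_left _ _) hcase.le
        have h2 := ht₀ t htt₀
        rw [sub_zero, map_smul_eq_mul, Real.norm_eq_abs,
          abs_of_pos (Real.exp_pos _)] at h2
        have hΓle : Γ i (T t (BDisk.toX x)) ≤ Real.exp (-(ω' * t)) := by
          rw [Real.exp_neg, ← one_div, le_div_iff₀ (Real.exp_pos _)]
          nlinarith [h2]
        have harg : t / ((n : ℝ) + 1) - ω' * t ≤ 0 := by
          rw [sub_nonpos, div_le_iff₀ (by positivity : (0:ℝ) < (n : ℝ) + 1)]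
          calc t = t * 1 := (mul_one t).symm
            _ ≤ t * (ω' * ((n : ℝ) + 1)) := mul_le_mul_of_nonneg_left hrate' ht
            _ = ω' * t * ((n : ℝ) + 1) := by ring
        calc Real.exp (t / ((n : ℝ) + 1)) * Γ i (T t (BDisk.toX x))
            ≤ Real.exp (t / ((n : ℝ) + 1)) * Real.exp (-(ω' * t)) :=
              mul_le_mul_of_nonneg_left hΓle (Real.exp_pos _).le
          _ = Real.exp (t / ((n : ℝ) + 1) - ω' * t) := by rw [← Real.exp_add]; ring_nf
          _ ≤ 1 := Real.exp_le_one_iff.2 harg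
          _ ≤ m := hm1
    -- pick a non-meagre Z n
    obtain ⟨n, hn⟩ : ∃ n, ¬ IsMeagre (Z n) := by
      by_contra h
      push_neg at h
      have hU : IsMeagre (⋃ n, Z n) := isMeagre_iUnion h
      have huniv : IsMeagre (Set.univ : Set (BDisk D)) :=
        hU.mono (fun x _ => Set.mem_iUnion.2 (hcover x))
      rw [IsMeagre, Set.compl_univ] at huniv
      exact Set.not_nonempty_empty (dense_of_mem_residual huniv).nonempty
    set ω : ℝ := 1 / (2 * ((n : ℝ) + 1)) with hωdef
    have hω0 : 0 < ω := by rw [hωdef]; positivity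
    refine ⟨ω, hω0, ?_⟩
    intro i ε hε
    set C : ℕ → Set (BDisk D) := fun m => {x | ∀ t : ℝ, 0 ≤ t →
        Real.exp (t / ((n : ℝ) + 1)) * Γ i (T t (BDisk.toX x)) ≤ m} with hCdef
    have hCcl : ∀ m, IsClosed (C m) := by
      intro m
      have : C m = ⋂ t ∈ Set.Ici (0:ℝ), {x : BDisk D |
          Real.exp (t / ((n : ℝ) + 1)) * Γ i (T t (BDisk.toX x)) ≤ m} := by
        ext x
        simp only [hCdef, Set.mem_setOf_eq, Set.mem_iInter, Set.mem_Ici]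
      rw [this]
      refine isClosed_biInter fun t _ => isClosed_le ?_ continuous_const
      exact continuous_const.mul
        ((hΓ.continuous_seminorm i).comp ((T t).continuous.comp hcont))
    obtain ⟨m, hm⟩ : ∃ m, ¬ IsMeagre (C m) := by
      by_contra h
      push_neg at h
      exact hn ((isMeagre_iUnion h).mono (fun x hx => Set.mem_iUnion.2 (hx i)))
    have hint : (interior (C m)).Nonempty := by
      by_contra h
      rw [Set.not_nonempty_iff_eq_empty] at h
      refine hm (isMeagre_iff_countable_union_isNowhereDense.2
        ⟨{C m}, ?_, Set.countable_singleton _, by simp⟩)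
      intro t htmem
      rw [Set.mem_singleton_iff] at htmem
      subst htmem
      rw [(hCcl m).isNowhereDense_iff]
      exact h
    obtain ⟨x₀, hx₀⟩ := hint
    obtain ⟨rad, hradpos, hball⟩ := EMetric.isOpen_iff.1 isOpen_interior x₀ hx₀
    replace hball : Metric.eball x₀ rad ⊆ C m := hball.trans interior_subset
    -- symmetry and midpoint convexity of C m
    have hsym : ∀ x : BDisk D, x ∈ C m → -x ∈ C m := by
      intro x hx t ht
      have heq : T t (BDisk.toX (-x)) = -(T t (BDisk.toX x)) := by
        show T t (-(BDisk.toX x)) = _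
        rw [map_neg]
      rw [heq, map_neg_eq_map]
      exact hx t ht
    have hmid : ∀ x y : BDisk D, x ∈ C m → y ∈ C m →
        (1/2 : ℝ) • x + (1/2 : ℝ) • y ∈ C m := by
      intro x y hx hy t ht
      have h1 := hx t ht
      have h2 := hy t ht
      have he := Real.exp_pos (t / ((n : ℝ) + 1))
      have heq : T t (BDisk.toX ((1/2 : ℝ) • x + (1/2 : ℝ) • y)) =
          (1/2 : ℝ) • T t (BDisk.toX x) + (1/2 : ℝ) • T t (BDisk.toX y) := by
        show T t ((1/2 : ℝ) • BDisk.toX x + (1/2 : ℝ) • BDisk.toX y) = _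
        rw [map_add, map_smul, map_smul]
      have hΓc : Γ i (T t (BDisk.toX ((1/2 : ℝ) • x + (1/2 : ℝ) • y))) ≤
          (1/2 : ℝ) * Γ i (T t (BDisk.toX x)) + (1/2 : ℝ) * Γ i (T t (BDisk.toX y)) := by
        rw [heq]
        refine (map_add_le_add _ _ _).trans ?_
        rw [map_smul_eq_mul, map_smul_eq_mul]
        norm_num
      nlinarith [mul_le_mul_of_nonneg_left hΓc he.le]
    -- the gauge-ball around 0 is inside C m
    have hball0 : ∀ y : BDisk D,
        egauge ℝ D (BDisk.toX y) < rad → y ∈ C m := by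
      intro y hy
      have h1 : x₀ + y ∈ C m := by
        refine hball ?_
        rw [EMetric.mem_ball, BDisk.edist_def hconv hbal h0]
        have : BDisk.toX (x₀ + y) - BDisk.toX x₀ = BDisk.toX y := by
          show (BDisk.toX x₀ + BDisk.toX y) - BDisk.toX x₀ = BDisk.toX y
          exact add_sub_cancel_left _ _
        rwa [this]
      have h2 : x₀ - y ∈ C m := by
        refine hball ?_
        rw [EMetric.mem_ball, BDisk.edist_def hconv hbal h0]
        have : BDisk.toX (x₀ - y) - BDisk.toX x₀ = -(BDisk.toX y) := by
          show (BDisk.toX x₀ - BDisk.toX y) - BDisk.toX x₀ = -(BDisk.toX y)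
          abel
        rwa [this, egauge_neg' hbal]
      have h3 := hmid _ _ h1 (hsym _ h2)
      have heq : (1/2 : ℝ) • (x₀ + y) + (1/2 : ℝ) • (-(x₀ - y)) = y := by module
      rwa [heq] at h3
    obtain ⟨ρ, hρ0, hρrad⟩ : ∃ ρ : ℝ, 0 < ρ ∧ ENNReal.ofReal ρ < rad := by
      rcases ENNReal.lt_iff_exists_real_btwn.1 hradpos with ⟨q, hq0, hq1, hq2⟩
      exact ⟨q, ENNReal.ofReal_pos.1 hq1, hq2⟩
    -- uniform bound on B
    have hbound : ∀ x ∈ B, ∀ t : ℝ, 0 ≤ t →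
        Real.exp (t / ((n : ℝ) + 1)) * Γ i (T t x) ≤ (m : ℝ) / ρ := by
      intro x hx t ht
      have hmemD : x ∈ D := hBD hx
      have hed : egauge ℝ D (BDisk.toX (D := D) (BDisk.ofX (ρ • x))) < rad := by
        rw [BDisk.toX_ofX]
        calc egauge ℝ D (ρ • x) ≤ (‖ρ‖₊ : ℝ≥0∞) :=
              egauge_le_of_mem_smul (Set.smul_mem_smul_set hmemD)
          _ = ENNReal.ofReal ρ := Real.enorm_eq_ofReal hρ0.le
          _ < rad := hρrad
      have hC := hball0 _ hed t ht
      rw [BDisk.toX_ofX, map_smul, map_smul_eq_mul, Real.norm_eq_abs,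
        abs_of_pos hρ0] at hC
      rw [le_div_iff₀ hρ0]
      nlinarith [hC]
    set M : ℝ := (m : ℝ) / ρ with hMdef
    have hM0 : 0 ≤ M := div_nonneg (Nat.cast_nonneg m) hρ0.le
    refine ⟨max 0 ((1/ω) * Real.log ((M+1)/ε)), ?_⟩
    intro t ht x hx
    have ht0 : (0:ℝ) ≤ t := le_trans (le_max_left _ _) ht
    have hb := hbound x hx t ht0
    have hΓle : Γ i (T t x) ≤ M * Real.exp (-(t / ((n : ℝ) + 1))) := by
      have he := Real.exp_pos (t / ((n : ℝ) + 1))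
      rw [Real.exp_neg, ← div_eq_mul_inv, le_div_iff₀ he]
      nlinarith [hb]
    rw [map_smul_eq_mul, Real.norm_eq_abs, abs_of_pos (Real.exp_pos _)]
    have hfrac : (0:ℝ) < (M+1)/ε := by positivity
    have hlog : Real.log ((M+1)/ε) ≤ ω * t := by
      have h1 : (1/ω) * Real.log ((M+1)/ε) ≤ t := le_trans (le_max_right _ _) ht
      calc Real.log ((M+1)/ε) = ω * ((1/ω) * Real.log ((M+1)/ε)) := by
            field_simp
        _ ≤ ω * t := mul_le_mul_of_nonneg_left h1 hω0.le
    have h2 : Real.exp (-(ω * t)) ≤ ε/(M+1) := by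
      have h3 : (M+1)/ε ≤ Real.exp (ω * t) :=
        (Real.exp_log hfrac).symm.trans_le (Real.exp_le_exp.2 hlog)
      rw [Real.exp_neg]
      calc (Real.exp (ω * t))⁻¹ ≤ ((M+1)/ε)⁻¹ := inv_anti₀ hfrac h3
        _ = ε/(M+1) := by rw [inv_div]
    have hargeq : ω * t - t / ((n : ℝ) + 1) = -(ω * t) := by
      rw [hωdef]; field_simp; ring
    calc Real.exp (ω * t) * Γ i (T t x)
        ≤ Real.exp (ω * t) * (M * Real.exp (-(t / ((n : ℝ) + 1)))) :=
          mul_le_mul_of_nonneg_left hΓle (Real.exp_pos _).le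
      _ = M * Real.exp (ω * t - t / ((n : ℝ) + 1)) := by
          rw [Real.exp_sub, Real.exp_neg]; ring
      _ = M * Real.exp (-(ω * t)) := by rw [hargeq]
      _ ≤ M * (ε/(M+1)) := mul_le_mul_of_nonneg_left h2 hM0
      _ = ε * (M/(M+1)) := by ring
      _ ≤ ε * 1 := mul_le_mul_of_nonneg_left
          ((div_le_one (by positivity : (0:ℝ) < M+1)).2 (by linarith)) hε.le
      _ = ε := mul_one ε
  · -- (v) → (iv)
    intro hv x
    have hsing : IsVonNBounded ℝ ({x} : Set X) :=
      hΓ.isVonNBounded_iff_seminorm_bounded.2 fun i =>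
        ⟨Γ i x + 1, by have := apply_nonneg (Γ i) x; linarith,
          fun y hy => by rw [Set.mem_singleton_iff] at hy; subst hy; linarith⟩
    obtain ⟨ω, hω, h⟩ := hv {x} hsing
    refine ⟨ω, hω, ?_⟩
    rw [hΓ.tendsto_nhds]
    intro i ε hε
    obtain ⟨t₀, ht₀⟩ := h i (ε / 2) (by positivity)
    rw [Filter.eventually_atTop]
    exact ⟨t₀, fun t ht => by
      have := ht₀ t ht x rfl
      rw [sub_zero]
      linarith⟩
end

section
/- Let X be a barrelled Hausdorff locally convex space whose topology is induced by a family Γ_X of continuous seminorms, and let (T(t))_{t≥0} be an exponentially bounded C₀-semigroup on X. If there exists β ≥ 1 such that ∫₀^∞ q(T(t)x)^β dt < ∞ for every q ∈ Γ_X and every x ∈ X, then (T(t))_{t≥0} is super polynomially stable, i.e., for every α > 1, every bounded set B ⊆ X and every q ∈ Γ_X one has lim_{t→∞} sup_{x∈B} q(t^α T(t)x) = 0. -/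
open Filter Topology Bornology MeasureTheory
open scoped ENNReal NNReal

/-- Let `X` be a barrelled Hausdorff locally convex space and `(T(t))_{t ≥ 0}` an
exponentially bounded `C₀`-semigroup on `X`. If for some `β ≥ 1` all integrals
`∫₀^∞ q(T(t)x)^β dt` are finite, then `(T(t))` is super polynomially stable. -/
theorem statement4 {X : Type*} [AddCommGroup X] [Module ℝ X] [TopologicalSpace X]
    [T2Space X] [BarrelledSpace ℝ X]
    {ι : Type*} [Nonempty ι] (Γ : ι → Seminorm ℝ X) (hΓ : WithSeminorms Γ)
    (T : ℝ → X →L[ℝ] X)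
    (hT0 : T 0 = ContinuousLinearMap.id ℝ X)
    (hTsg : ∀ s t : ℝ, 0 ≤ s → 0 ≤ t → T (s + t) = (T s).comp (T t))
    (hTc : ∀ x : X, ContinuousOn (fun t : ℝ => T t x) (Set.Ici 0))
    (hexp : ∀ i : ι, ∃ j : ι, ∃ M : ℝ, 1 ≤ M ∧ ∃ ω : ℝ,
      ∀ t : ℝ, 0 ≤ t → ∀ x : X, Γ i (T t x) ≤ M * Real.exp (ω * t) * Γ j x)
    (hint : ∃ β : ℝ, 1 ≤ β ∧ ∀ i : ι, ∀ x : X,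
      ∫⁻ t in Set.Ioi (0:ℝ), ENNReal.ofReal ((Γ i (T t x)) ^ β) < ⊤) :
    ∀ α > (1:ℝ), ∀ B : Set X, IsVonNBounded ℝ B → ∀ i : ι, ∀ ε > (0:ℝ),
      ∃ t₀ : ℝ, ∀ t ≥ t₀, ∀ x ∈ B, Γ i ((t ^ α : ℝ) • T t x) ≤ ε := by
  classical
  obtain ⟨β, hβ1, hfin⟩ := hint
  have hβ0 : (0:ℝ) < β := lt_of_lt_of_le one_pos hβ1
  haveI : IsTopologicalAddGroup X := hΓ.topologicalAddGroup
  have hGc : ∀ i, Continuous (Γ i) := fun i => hΓ.continuous_seminorm i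
  have hrpow_cont : Continuous fun y : ℝ => y ^ β := by
    rw [continuous_iff_continuousAt]
    exact fun y => Real.continuousAt_rpow_const y β (Or.inr hβ0.le)
  -- measurability of orbit seminorm functions
  have hmeas0 : ∀ (p : Seminorm ℝ X), Continuous p → ∀ (x : X) (s : Set ℝ),
      s ⊆ Set.Ici 0 → MeasurableSet s →
      AEMeasurable (fun t => ENNReal.ofReal (p (T t x))) (volume.restrict s) := by
    intro p hp x s hs hms
    exact ((ENNReal.continuous_ofReal.comp hp).comp_continuousOn
      ((hTc x).mono hs)).aemeasurable hms
  have hmeas : ∀ (p : Seminorm ℝ X), Continuous p → ∀ (x : X) (s : Set ℝ),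
      s ⊆ Set.Ici 0 → MeasurableSet s →
      AEMeasurable (fun t => ENNReal.ofReal (p (T t x) ^ β)) (volume.restrict s) := by
    intro p hp x s hs hms
    exact ((ENNReal.continuous_ofReal.comp (hrpow_cont.comp hp)).comp_continuousOn
      ((hTc x).mono hs)).aemeasurable hms
  -- monotone convergence over truncations
  have hMC : ∀ f : ℝ → ℝ≥0∞, AEMeasurable f (volume.restrict (Set.Ioi (0:ℝ))) →
      ∫⁻ t in Set.Ioi (0:ℝ), f t = ⨆ n : ℕ, ∫⁻ t in Set.Ioc (0:ℝ) (n:ℝ), f t := by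
    intro f hf
    have h1 : ∀ n : ℕ, ∫⁻ t in Set.Ioc (0:ℝ) (n:ℝ), f t
        = ∫⁻ t in Set.Ioi (0:ℝ), (Set.Ioc (0:ℝ) (n:ℝ)).indicator f t := by
      intro n
      rw [lintegral_indicator measurableSet_Ioc, Measure.restrict_restrict measurableSet_Ioc,
        Set.inter_eq_self_of_subset_left Set.Ioc_subset_Ioi_self]
    simp_rw [h1]
    rw [← lintegral_iSup' (fun n => hf.indicator measurableSet_Ioc)
      (Filter.Eventually.of_forall fun t => fun n m hnm =>
        Set.indicator_le_indicator_of_subset (Set.Ioc_subset_Ioc_right (Nat.cast_le.2 hnm))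
          (fun _ => zero_le) t)]
    refine lintegral_congr_ae ?_
    filter_upwards [ae_restrict_mem measurableSet_Ioi] with t ht
    refine le_antisymm ?_ (iSup_le fun n => Set.indicator_le_self _ _ t)
    have hmem : t ∈ Set.Ioc (0:ℝ) ((⌈t⌉₊ : ℕ) : ℝ) := ⟨ht, Nat.le_ceil t⟩
    refine le_trans ?_ (le_iSup _ ⌈t⌉₊)
    rw [Set.indicator_of_mem hmem]
  -- the key uniform integral bound, via barrelledness
  have key : ∀ i : ι, ∃ (s : Finset ι) (C : ℝ), 0 < C ∧ ∀ x,
      ∫⁻ t in Set.Ioi (0:ℝ), ENNReal.ofReal (Γ i (T t x) ^ β)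
        ≤ ENNReal.ofReal ((C * s.sup Γ x) ^ β) := by
    intro i
    have hβinv : (0:ℝ) ≤ 1/β := by positivity
    obtain ⟨j, M, hM, ω, hexpi⟩ := hexp i
    have haem : ∀ (n : ℕ) (x : X), AEMeasurable (fun t => ENNReal.ofReal (Γ i (T t x) ^ β))
        (volume.restrict (Set.Ioc (0:ℝ) (n:ℝ))) := fun n x =>
      hmeas (Γ i) (hGc i) x _ (fun t ht => ht.1.le) measurableSet_Ioc
    have haem0 : ∀ (n : ℕ) (x : X), AEMeasurable (fun t => ENNReal.ofReal (Γ i (T t x)))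
        (volume.restrict (Set.Ioc (0:ℝ) (n:ℝ))) := fun n x =>
      hmeas0 (Γ i) (hGc i) x _ (fun t ht => ht.1.le) measurableSet_Ioc
    have hfin' : ∀ (n : ℕ) (x : X),
        (∫⁻ t in Set.Ioc (0:ℝ) (n:ℝ), ENNReal.ofReal (Γ i (T t x) ^ β)) ≠ ⊤ := fun n x =>
      ((lintegral_mono_set Set.Ioc_subset_Ioi_self).trans_lt (hfin i x)).ne
    have hconv : ∀ (x : X) (t : ℝ), ENNReal.ofReal (Γ i (T t x) ^ β)
        = ENNReal.ofReal (Γ i (T t x)) ^ β := fun x t =>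
      (ENNReal.ofReal_rpow_of_nonneg (apply_nonneg _ _) hβ0.le).symm
    -- construct the truncated L^β seminorms
    have hdef : ∀ n : ℕ, ∃ S : Seminorm ℝ X, ∀ x, S x
        = ((∫⁻ t in Set.Ioc (0:ℝ) (n:ℝ),
            ENNReal.ofReal (Γ i (T t x) ^ β)) ^ (1/β)).toReal := by
      intro n
      refine ⟨Seminorm.of (fun x => ((∫⁻ t in Set.Ioc (0:ℝ) (n:ℝ),
          ENNReal.ofReal (Γ i (T t x) ^ β)) ^ (1/β)).toReal) ?_ ?_, fun x => rfl⟩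
      · -- triangle inequality via Minkowski
        intro x y
        have hFG : ∫⁻ t in Set.Ioc (0:ℝ) (n:ℝ), ENNReal.ofReal (Γ i (T t (x+y)) ^ β)
            ≤ ∫⁻ t in Set.Ioc (0:ℝ) (n:ℝ),
              (((fun t => ENNReal.ofReal (Γ i (T t x)))
                + fun t => ENNReal.ofReal (Γ i (T t y))) t) ^ β := by
          refine lintegral_mono fun t => ?_
          rw [hconv]
          refine ENNReal.rpow_le_rpow ?_ hβ0.le
          have hadd : Γ i (T t (x+y)) ≤ Γ i (T t x) + Γ i (T t y) := by
            rw [map_add]; exact map_add_le_add _ _ _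
          calc ENNReal.ofReal (Γ i (T t (x+y)))
              ≤ ENNReal.ofReal (Γ i (T t x) + Γ i (T t y)) := ENNReal.ofReal_le_ofReal hadd
            _ = _ := ENNReal.ofReal_add (apply_nonneg _ _) (apply_nonneg _ _)
        have hmink := ENNReal.lintegral_Lp_add_le (haem0 n x) (haem0 n y) hβ1
        have hFe : ∫⁻ t in Set.Ioc (0:ℝ) (n:ℝ), ENNReal.ofReal (Γ i (T t x)) ^ β
            = ∫⁻ t in Set.Ioc (0:ℝ) (n:ℝ), ENNReal.ofReal (Γ i (T t x) ^ β) :=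
          lintegral_congr fun t => (hconv x t).symm
        have hGe : ∫⁻ t in Set.Ioc (0:ℝ) (n:ℝ), ENNReal.ofReal (Γ i (T t y)) ^ β
            = ∫⁻ t in Set.Ioc (0:ℝ) (n:ℝ), ENNReal.ofReal (Γ i (T t y) ^ β) :=
          lintegral_congr fun t => (hconv y t).symm
        have h2 : (∫⁻ t in Set.Ioc (0:ℝ) (n:ℝ),
              ENNReal.ofReal (Γ i (T t (x+y)) ^ β)) ^ (1/β)
            ≤ (∫⁻ t in Set.Ioc (0:ℝ) (n:ℝ), ENNReal.ofReal (Γ i (T t x) ^ β)) ^ (1/β)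
            + (∫⁻ t in Set.Ioc (0:ℝ) (n:ℝ), ENNReal.ofReal (Γ i (T t y) ^ β)) ^ (1/β) := by
          calc (∫⁻ t in Set.Ioc (0:ℝ) (n:ℝ),
                ENNReal.ofReal (Γ i (T t (x+y)) ^ β)) ^ (1/β)
              ≤ _ := ENNReal.rpow_le_rpow hFG hβinv
            _ ≤ _ := hmink
            _ = _ := by rw [hFe, hGe]
        have hxne : (∫⁻ t in Set.Ioc (0:ℝ) (n:ℝ),
            ENNReal.ofReal (Γ i (T t x) ^ β)) ^ (1/β) ≠ ⊤ :=
          (ENNReal.rpow_lt_top_of_nonneg hβinv (hfin' n x)).ne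
        have hyne : (∫⁻ t in Set.Ioc (0:ℝ) (n:ℝ),
            ENNReal.ofReal (Γ i (T t y) ^ β)) ^ (1/β) ≠ ⊤ :=
          (ENNReal.rpow_lt_top_of_nonneg hβinv (hfin' n y)).ne
        calc ((∫⁻ t in Set.Ioc (0:ℝ) (n:ℝ),
              ENNReal.ofReal (Γ i (T t (x+y)) ^ β)) ^ (1/β)).toReal
            ≤ ((∫⁻ t in Set.Ioc (0:ℝ) (n:ℝ),
                ENNReal.ofReal (Γ i (T t x) ^ β)) ^ (1/β)
              + (∫⁻ t in Set.Ioc (0:ℝ) (n:ℝ),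
                ENNReal.ofReal (Γ i (T t y) ^ β)) ^ (1/β)).toReal :=
              ENNReal.toReal_mono (ENNReal.add_ne_top.2 ⟨hxne, hyne⟩) h2
          _ = _ := ENNReal.toReal_add hxne hyne
      · -- smul
        intro a x
        have h1 : ∀ t : ℝ, ENNReal.ofReal (Γ i (T t (a • x)) ^ β)
            = ENNReal.ofReal (|a| ^ β) * ENNReal.ofReal (Γ i (T t x) ^ β) := by
          intro t
          rw [ContinuousLinearMap.map_smul, map_smul_eq_mul, Real.norm_eq_abs,
            Real.mul_rpow (abs_nonneg a) (apply_nonneg _ _),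
            ENNReal.ofReal_mul (Real.rpow_nonneg (abs_nonneg a) _)]
        have h2 : ∫⁻ t in Set.Ioc (0:ℝ) (n:ℝ), ENNReal.ofReal (Γ i (T t (a • x)) ^ β)
            = ENNReal.ofReal (|a| ^ β)
              * ∫⁻ t in Set.Ioc (0:ℝ) (n:ℝ), ENNReal.ofReal (Γ i (T t x) ^ β) := by
          rw [lintegral_congr fun t => h1 t]
          exact lintegral_const_mul' _ _ ENNReal.ofReal_ne_top
        have h3 : (ENNReal.ofReal (|a| ^ β)) ^ (1/β) = ENNReal.ofReal |a| := by
          rw [← ENNReal.ofReal_rpow_of_nonneg (abs_nonneg a) hβ0.le,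
            ← ENNReal.rpow_mul, mul_one_div_cancel hβ0.ne', ENNReal.rpow_one]
        show ((∫⁻ t in Set.Ioc (0:ℝ) (n:ℝ),
            ENNReal.ofReal (Γ i (T t (a • x)) ^ β)) ^ (1/β)).toReal
          = ‖a‖ * ((∫⁻ t in Set.Ioc (0:ℝ) (n:ℝ),
            ENNReal.ofReal (Γ i (T t x) ^ β)) ^ (1/β)).toReal
        rw [h2, ENNReal.mul_rpow_of_nonneg _ _ hβinv, h3, ENNReal.toReal_mul,
          ENNReal.toReal_ofReal (abs_nonneg a), Real.norm_eq_abs]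
    choose Sn hSn using hdef
    -- each truncated seminorm is continuous
    have hSnle : ∀ (n : ℕ) (x : X),
        Sn n x ≤ (M * Real.exp (|ω| * n) * (n:ℝ) ^ (1/β)) * Γ j x := by
      intro n x
      set K : ℝ := M * Real.exp (|ω| * n) with hKdef
      have hK0 : 0 < K := mul_pos (lt_of_lt_of_le one_pos hM) (Real.exp_pos _)
      have hKx : 0 ≤ K * Γ j x := mul_nonneg hK0.le (apply_nonneg _ _)
      have hb : ∀ t ∈ Set.Ioc (0:ℝ) (n:ℝ), ENNReal.ofReal (Γ i (T t x) ^ β)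
          ≤ ENNReal.ofReal ((K * Γ j x) ^ β) := by
        intro t ht
        refine ENNReal.ofReal_le_ofReal (Real.rpow_le_rpow (apply_nonneg _ _) ?_ hβ0.le)
        have hωt : ω * t ≤ |ω| * n :=
          le_trans (mul_le_mul_of_nonneg_right (le_abs_self ω) ht.1.le)
            (mul_le_mul_of_nonneg_left ht.2 (abs_nonneg ω))
        calc Γ i (T t x) ≤ M * Real.exp (ω * t) * Γ j x := hexpi t ht.1.le x
          _ ≤ K * Γ j x := mul_le_mul_of_nonneg_right
              (mul_le_mul_of_nonneg_left (Real.exp_le_exp.2 hωt) (by linarith))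
              (apply_nonneg _ _)
      have hint2 : ∫⁻ t in Set.Ioc (0:ℝ) (n:ℝ), ENNReal.ofReal (Γ i (T t x) ^ β)
          ≤ ENNReal.ofReal ((K * Γ j x) ^ β) * ENNReal.ofReal (n:ℝ) := by
        calc ∫⁻ t in Set.Ioc (0:ℝ) (n:ℝ), ENNReal.ofReal (Γ i (T t x) ^ β)
            ≤ ∫⁻ _ in Set.Ioc (0:ℝ) (n:ℝ), ENNReal.ofReal ((K * Γ j x) ^ β) :=
              lintegral_mono_ae ((ae_restrict_iff' measurableSet_Ioc).2
                (Filter.Eventually.of_forall hb))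
          _ = ENNReal.ofReal ((K * Γ j x) ^ β) * volume (Set.Ioc (0:ℝ) (n:ℝ)) :=
              setLIntegral_const _ _
          _ = ENNReal.ofReal ((K * Γ j x) ^ β) * ENNReal.ofReal (n:ℝ) := by
              rw [Real.volume_Ioc, sub_zero]
      have h5 : (∫⁻ t in Set.Ioc (0:ℝ) (n:ℝ), ENNReal.ofReal (Γ i (T t x) ^ β)) ^ (1/β)
          ≤ ENNReal.ofReal (K * Γ j x) * ENNReal.ofReal ((n:ℝ) ^ (1/β)) := by
        calc (∫⁻ t in Set.Ioc (0:ℝ) (n:ℝ), ENNReal.ofReal (Γ i (T t x) ^ β)) ^ (1/β)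
            ≤ (ENNReal.ofReal ((K * Γ j x) ^ β) * ENNReal.ofReal (n:ℝ)) ^ (1/β) :=
              ENNReal.rpow_le_rpow hint2 hβinv
          _ = (ENNReal.ofReal ((K * Γ j x) ^ β)) ^ (1/β)
              * (ENNReal.ofReal (n:ℝ)) ^ (1/β) := ENNReal.mul_rpow_of_nonneg _ _ hβinv
          _ = ENNReal.ofReal (K * Γ j x) * ENNReal.ofReal ((n:ℝ) ^ (1/β)) := by
              rw [← ENNReal.ofReal_rpow_of_nonneg hKx hβ0.le, ← ENNReal.rpow_mul,
                mul_one_div_cancel hβ0.ne', ENNReal.rpow_one,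
                ENNReal.ofReal_rpow_of_nonneg (Nat.cast_nonneg n) hβinv]
      rw [hSn]
      calc ((∫⁻ t in Set.Ioc (0:ℝ) (n:ℝ), ENNReal.ofReal (Γ i (T t x) ^ β)) ^ (1/β)).toReal
          ≤ (ENNReal.ofReal (K * Γ j x) * ENNReal.ofReal ((n:ℝ) ^ (1/β))).toReal :=
            ENNReal.toReal_mono (by finiteness) h5
        _ = (K * Γ j x) * (n:ℝ) ^ (1/β) := by
            rw [ENNReal.toReal_mul, ENNReal.toReal_ofReal hKx,
              ENNReal.toReal_ofReal (Real.rpow_nonneg (Nat.cast_nonneg n) _)]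
        _ = (K * (n:ℝ) ^ (1/β)) * Γ j x := by ring
    have hSncont : ∀ n : ℕ, Continuous (Sn n) := by
      intro n
      have hnn : 0 ≤ M * Real.exp (|ω| * n) * (n:ℝ) ^ (1/β) := by
        have : (0:ℝ) < M := lt_of_lt_of_le one_pos hM
        positivity
      set c : ℝ≥0 := ⟨M * Real.exp (|ω| * n) * (n:ℝ) ^ (1/β), hnn⟩ with hcdef
      have hq : Continuous (c • Γ j : Seminorm ℝ X) := by
        have hc : Continuous fun x => (c : ℝ) * Γ j x := continuous_const.mul (hGc j)
        have heq : ⇑(c • Γ j : Seminorm ℝ X) = fun x => (c : ℝ) * Γ j x := by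
          funext x; rw [Seminorm.smul_apply, NNReal.smul_def, smul_eq_mul]
        rw [heq]; exact hc
      refine Seminorm.continuous_of_le hq (Seminorm.le_def.2 fun x => ?_)
      have hcoe : (c • Γ j) x = (M * Real.exp (|ω| * n) * (n:ℝ) ^ (1/β)) * Γ j x := by
        rw [Seminorm.smul_apply, NNReal.smul_def, smul_eq_mul]; rfl
      rw [hcoe]
      exact hSnle n x
    have hbdd : BddAbove (Set.range Sn) := by
      rw [Seminorm.bddAbove_range_iff]
      intro x
      refine ⟨((∫⁻ t in Set.Ioi (0:ℝ), ENNReal.ofReal (Γ i (T t x) ^ β)) ^ (1/β)).toReal, ?_⟩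
      rintro y ⟨n, rfl⟩
      beta_reduce
      rw [hSn]
      refine ENNReal.toReal_mono
        (ENNReal.rpow_lt_top_of_nonneg hβinv (hfin i x).ne).ne ?_
      exact ENNReal.rpow_le_rpow (lintegral_mono_set Set.Ioc_subset_Ioi_self) hβinv
    have hScont := Seminorm.continuous_iSup Sn hSncont hbdd
    have hScont' : Continuous (⇑(⨆ n, Sn n)) := by
      rw [Seminorm.coe_iSup_eq hbdd]; exact hScont
    obtain ⟨s, C, hC0, hle⟩ := Seminorm.bound_of_continuous hΓ (⨆ n, Sn n) hScont'
    refine ⟨s, (C:ℝ), by exact_mod_cast pos_iff_ne_zero.mpr hC0, ?_⟩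
    intro x
    rw [hMC _ (hmeas (Γ i) (hGc i) x _ Set.Ioi_subset_Ici_self measurableSet_Ioi)]
    refine iSup_le fun n => ?_
    have h1 : Sn n x ≤ (C:ℝ) * s.sup Γ x := by
      have h2 : Sn n ≤ ⨆ m, Sn m := le_ciSup hbdd n
      have h3 := Seminorm.le_def.1 (h2.trans hle) x
      rwa [Seminorm.smul_apply, NNReal.smul_def, smul_eq_mul] at h3
    have hfin2 : (∫⁻ t in Set.Ioc (0:ℝ) (n:ℝ),
        ENNReal.ofReal (Γ i (T t x) ^ β)) ^ (1/β) ≠ ⊤ :=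
      (ENNReal.rpow_lt_top_of_nonneg hβinv (hfin' n x)).ne
    have h4 : (∫⁻ t in Set.Ioc (0:ℝ) (n:ℝ), ENNReal.ofReal (Γ i (T t x) ^ β)) ^ (1/β)
        ≤ ENNReal.ofReal ((C:ℝ) * s.sup Γ x) := by
      rw [hSn] at h1
      rw [← ENNReal.ofReal_toReal hfin2]
      exact ENNReal.ofReal_le_ofReal h1
    calc ∫⁻ t in Set.Ioc (0:ℝ) (n:ℝ), ENNReal.ofReal (Γ i (T t x) ^ β)
        = ((∫⁻ t in Set.Ioc (0:ℝ) (n:ℝ),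
            ENNReal.ofReal (Γ i (T t x) ^ β)) ^ (1/β)) ^ β := by
          rw [← ENNReal.rpow_mul, one_div_mul_cancel hβ0.ne', ENNReal.rpow_one]
      _ ≤ (ENNReal.ofReal ((C:ℝ) * s.sup Γ x)) ^ β := ENNReal.rpow_le_rpow h4 hβ0.le
      _ = ENNReal.ofReal (((C:ℝ) * s.sup Γ x) ^ β) :=
          ENNReal.ofReal_rpow_of_nonneg (mul_nonneg C.2 (apply_nonneg _ _)) hβ0.le
  -- superadditivity of rpow for sums
  have hsum_rpow : ∀ (s : Finset ι) (a : ι → ℝ), (∀ k ∈ s, 0 ≤ a k) →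
      ∑ k ∈ s, a k ^ β ≤ (∑ k ∈ s, a k) ^ β := by
    intro s a ha
    have hS0 : 0 ≤ ∑ k ∈ s, a k := Finset.sum_nonneg ha
    have hne : (1:ℝ) + (β - 1) ≠ 0 := by
      rw [show (1:ℝ) + (β - 1) = β from by ring]; exact hβ0.ne'
    calc ∑ k ∈ s, a k ^ β ≤ ∑ k ∈ s, a k * (∑ j ∈ s, a j) ^ (β - 1) := by
          refine Finset.sum_le_sum fun k hk => ?_
          have h1 : a k ^ β = a k ^ (1:ℝ) * a k ^ (β - 1) := by
            rw [← Real.rpow_add' (ha k hk) hne]; norm_num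
          rw [h1, Real.rpow_one]
          refine mul_le_mul_of_nonneg_left
            (Real.rpow_le_rpow (ha k hk) (Finset.single_le_sum ha hk) (by linarith)) (ha k hk)
      _ = (∑ k ∈ s, a k) * (∑ j ∈ s, a j) ^ (β - 1) := by rw [← Finset.sum_mul]
      _ = (∑ k ∈ s, a k) ^ β := by
          have h2 : (∑ k ∈ s, a k) ^ β
              = (∑ k ∈ s, a k) ^ (1:ℝ) * (∑ j ∈ s, a j) ^ (β - 1) := by
            rw [← Real.rpow_add' hS0 hne]; norm_num
          rw [h2, Real.rpow_one]
  -- key integral bound for finset sups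
  have key' : ∀ s : Finset ι, ∃ (s' : Finset ι) (C : ℝ), 0 < C ∧ ∀ x,
      ∫⁻ t in Set.Ioi (0:ℝ), ENNReal.ofReal ((s.sup Γ) (T t x) ^ β)
        ≤ ENNReal.ofReal ((C * s'.sup Γ x) ^ β) := by
    intro s
    choose sk Ck hCk hbound using key
    refine ⟨s.biUnion sk, 1 + ∑ k ∈ s, Ck k,
      add_pos_of_pos_of_nonneg one_pos (Finset.sum_nonneg fun k _ => (hCk k).le), ?_⟩
    intro x
    have hsub : ∀ k ∈ s, (sk k).sup Γ x ≤ (s.biUnion sk).sup Γ x := fun k hk =>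
      Seminorm.le_def.1 (Finset.sup_mono (Finset.subset_biUnion_of_mem sk hk)) x
    have hpt : ∀ t : ℝ, ENNReal.ofReal ((s.sup Γ) (T t x) ^ β)
        ≤ ∑ k ∈ s, ENNReal.ofReal (Γ k (T t x) ^ β) := by
      intro t
      rw [← ENNReal.ofReal_sum_of_nonneg (fun k _ => Real.rpow_nonneg (apply_nonneg _ _) _)]
      refine ENNReal.ofReal_le_ofReal ?_
      rcases Seminorm.zero_or_exists_apply_eq_finset_sup Γ s (T t x) with h | ⟨k, hk, h⟩
      · rw [h, Real.zero_rpow hβ0.ne']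
        exact Finset.sum_nonneg fun k _ => Real.rpow_nonneg (apply_nonneg _ _) _
      · rw [h]
        exact Finset.single_le_sum (fun k _ => Real.rpow_nonneg (apply_nonneg _ _) _) hk
    calc ∫⁻ t in Set.Ioi (0:ℝ), ENNReal.ofReal ((s.sup Γ) (T t x) ^ β)
        ≤ ∫⁻ t in Set.Ioi (0:ℝ), ∑ k ∈ s, ENNReal.ofReal (Γ k (T t x) ^ β) :=
          lintegral_mono fun t => hpt t
      _ = ∑ k ∈ s, ∫⁻ t in Set.Ioi (0:ℝ), ENNReal.ofReal (Γ k (T t x) ^ β) :=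
          lintegral_finset_sum' s (fun k _ =>
            hmeas (Γ k) (hGc k) x _ Set.Ioi_subset_Ici_self measurableSet_Ioi)
      _ ≤ ∑ k ∈ s, ENNReal.ofReal ((Ck k * (sk k).sup Γ x) ^ β) :=
          Finset.sum_le_sum fun k _ => hbound k x
      _ = ENNReal.ofReal (∑ k ∈ s, (Ck k * (sk k).sup Γ x) ^ β) :=
          (ENNReal.ofReal_sum_of_nonneg (fun k _ => Real.rpow_nonneg
            (mul_nonneg (hCk k).le (apply_nonneg _ _)) _)).symm
      _ ≤ ENNReal.ofReal ((∑ k ∈ s, Ck k * (sk k).sup Γ x) ^ β) :=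
          ENNReal.ofReal_le_ofReal (hsum_rpow s _
            (fun k _ => mul_nonneg (hCk k).le (apply_nonneg _ _)))
      _ ≤ ENNReal.ofReal (((1 + ∑ k ∈ s, Ck k) * (s.biUnion sk).sup Γ x) ^ β) := by
          refine ENNReal.ofReal_le_ofReal (Real.rpow_le_rpow
            (Finset.sum_nonneg fun k _ => mul_nonneg (hCk k).le (apply_nonneg _ _)) ?_ hβ0.le)
          calc ∑ k ∈ s, Ck k * (sk k).sup Γ x
              ≤ ∑ k ∈ s, Ck k * (s.biUnion sk).sup Γ x :=
                Finset.sum_le_sum fun k hk => mul_le_mul_of_nonneg_left (hsub k hk) (hCk k).le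
            _ = (∑ k ∈ s, Ck k) * (s.biUnion sk).sup Γ x := by rw [Finset.sum_mul]
            _ ≤ (1 + ∑ k ∈ s, Ck k) * (s.biUnion sk).sup Γ x :=
                mul_le_mul_of_nonneg_right (by linarith) (apply_nonneg _ _)
  -- uniform boundedness of the semigroup
  have hUB : ∀ i : ι, ∃ (s : Finset ι) (C : ℝ), 0 < C ∧ ∀ t : ℝ, 0 ≤ t → ∀ x,
      Γ i (T t x) ≤ C * (s.sup Γ) x := by
    intro i
    obtain ⟨j, M, hM, ω, hexpi⟩ := hexp i
    obtain ⟨s, C, hC, hkey⟩ := key j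
    set K : ℝ := M * Real.exp |ω| with hKdef
    have hK0 : 0 < K := mul_pos (lt_of_lt_of_le one_pos hM) (Real.exp_pos _)
    have hexp_small : ∀ u : ℝ, 0 ≤ u → u ≤ 1 → M * Real.exp (ω * u) ≤ K := by
      intro u hu0 hu1
      refine mul_le_mul_of_nonneg_left (Real.exp_le_exp.2 ?_) (by linarith)
      calc ω * u ≤ |ω| * u := mul_le_mul_of_nonneg_right (le_abs_self ω) hu0
        _ ≤ |ω| * 1 := mul_le_mul_of_nonneg_left hu1 (abs_nonneg ω)
        _ = |ω| := mul_one _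
    refine ⟨s ∪ {j}, K * C + K, by positivity, ?_⟩
    intro t ht x
    have hsupj : Γ j x ≤ (s ∪ {j}).sup Γ x :=
      Seminorm.le_def.1 (Finset.le_sup (Finset.mem_union_right s (Finset.mem_singleton_self j))) x
    have hsups : s.sup Γ x ≤ (s ∪ {j}).sup Γ x :=
      Seminorm.le_def.1 (Finset.sup_mono Finset.subset_union_left) x
    have hsup0 : 0 ≤ (s ∪ {j}).sup Γ x := apply_nonneg _ _
    rcases le_or_gt t 1 with ht1 | ht1
    · calc Γ i (T t x) ≤ M * Real.exp (ω * t) * Γ j x := hexpi t ht x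
        _ ≤ K * Γ j x := mul_le_mul_of_nonneg_right (hexp_small t ht ht1) (apply_nonneg _ _)
        _ ≤ K * (s ∪ {j}).sup Γ x := mul_le_mul_of_nonneg_left hsupj hK0.le
        _ ≤ (K * C + K) * (s ∪ {j}).sup Γ x := by
            refine mul_le_mul_of_nonneg_right ?_ hsup0
            nlinarith
    · -- t > 1 : use the integral bound on [t-1, t]
      have hmain : ENNReal.ofReal (Γ i (T t x) ^ β)
          ≤ ENNReal.ofReal ((K * C * ((s ∪ {j}).sup Γ x)) ^ β) := by
        have h1 : ENNReal.ofReal (Γ i (T t x) ^ β)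
            = ∫⁻ _ in Set.Ioc (t-1) t, ENNReal.ofReal (Γ i (T t x) ^ β) := by
          rw [setLIntegral_const, Real.volume_Ioc, show t - (t-1) = 1 from by ring,
            ENNReal.ofReal_one, mul_one]
        rw [h1]
        have h2 : ∫⁻ u in Set.Ioc (t-1) t, ENNReal.ofReal (Γ i (T t x) ^ β)
            ≤ ∫⁻ u in Set.Ioc (t-1) t,
                ENNReal.ofReal (K ^ β) * ENNReal.ofReal (Γ j (T u x) ^ β) := by
          refine lintegral_mono_ae ((ae_restrict_iff' measurableSet_Ioc).2
            (Filter.Eventually.of_forall fun u hu => ?_))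
          have hu0 : 0 ≤ u := by have := hu.1; linarith
          have htu0 : 0 ≤ t - u := by have := hu.2; linarith
          have htu1 : t - u ≤ 1 := by have := hu.1; linarith
          have hsplit : T t = (T (t-u)).comp (T u) := by
            have h := hTsg (t-u) u htu0 hu0; rwa [sub_add_cancel] at h
          have hb : Γ i (T t x) ≤ K * Γ j (T u x) := by
            calc Γ i (T t x) = Γ i (T (t-u) (T u x)) := by rw [hsplit]; rfl
              _ ≤ M * Real.exp (ω * (t-u)) * Γ j (T u x) := hexpi _ htu0 _
              _ ≤ K * Γ j (T u x) :=
                  mul_le_mul_of_nonneg_right (hexp_small _ htu0 htu1) (apply_nonneg _ _)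
          calc ENNReal.ofReal (Γ i (T t x) ^ β)
              ≤ ENNReal.ofReal ((K * Γ j (T u x)) ^ β) :=
                ENNReal.ofReal_le_ofReal (Real.rpow_le_rpow (apply_nonneg _ _) hb hβ0.le)
            _ = ENNReal.ofReal (K ^ β) * ENNReal.ofReal (Γ j (T u x) ^ β) := by
                rw [Real.mul_rpow hK0.le (apply_nonneg _ _),
                  ENNReal.ofReal_mul (Real.rpow_nonneg hK0.le _)]
        have h3 : Set.Ioc (t-1) t ⊆ Set.Ioi (0:ℝ) := fun u hu => by
          have := hu.1; exact Set.mem_Ioi.2 (by linarith)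
        calc ∫⁻ _ in Set.Ioc (t-1) t, ENNReal.ofReal (Γ i (T t x) ^ β)
            ≤ ∫⁻ u in Set.Ioc (t-1) t,
                ENNReal.ofReal (K ^ β) * ENNReal.ofReal (Γ j (T u x) ^ β) := h2
          _ = ENNReal.ofReal (K ^ β)
              * ∫⁻ u in Set.Ioc (t-1) t, ENNReal.ofReal (Γ j (T u x) ^ β) :=
              lintegral_const_mul' _ _ ENNReal.ofReal_ne_top
          _ ≤ ENNReal.ofReal (K ^ β)
              * ∫⁻ u in Set.Ioi (0:ℝ), ENNReal.ofReal (Γ j (T u x) ^ β) :=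
              mul_le_mul_right (lintegral_mono_set h3) _
          _ ≤ ENNReal.ofReal (K ^ β) * ENNReal.ofReal ((C * s.sup Γ x) ^ β) :=
              mul_le_mul_right (hkey x) _
          _ = ENNReal.ofReal ((K * (C * s.sup Γ x)) ^ β) := by
              rw [Real.mul_rpow hK0.le (mul_nonneg hC.le (apply_nonneg _ _)),
                ENNReal.ofReal_mul (Real.rpow_nonneg hK0.le _)]
          _ ≤ ENNReal.ofReal ((K * C * ((s ∪ {j}).sup Γ x)) ^ β) := by
              refine ENNReal.ofReal_le_ofReal (Real.rpow_le_rpow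
                (mul_nonneg hK0.le (mul_nonneg hC.le (apply_nonneg _ _))) ?_ hβ0.le)
              calc K * (C * s.sup Γ x) = K * C * s.sup Γ x := by ring
                _ ≤ K * C * ((s ∪ {j}).sup Γ x) :=
                    mul_le_mul_of_nonneg_left hsups (mul_nonneg hK0.le hC.le)
      have hreal : Γ i (T t x) ^ β ≤ (K * C * ((s ∪ {j}).sup Γ x)) ^ β :=
        (ENNReal.ofReal_le_ofReal_iff (Real.rpow_nonneg
          (mul_nonneg (mul_nonneg hK0.le hC.le) hsup0) _)).1 hmain
      have h4 : Γ i (T t x) ≤ K * C * ((s ∪ {j}).sup Γ x) :=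
        (Real.rpow_le_rpow_iff (apply_nonneg _ _)
          (mul_nonneg (mul_nonneg hK0.le hC.le) hsup0) hβ0).1 hreal
      calc Γ i (T t x) ≤ K * C * ((s ∪ {j}).sup Γ x) := h4
        _ ≤ (K * C + K) * (s ∪ {j}).sup Γ x :=
            mul_le_mul_of_nonneg_right (by linarith) hsup0
  -- decay of order 1/β
  have hbase : ∀ i : ι, ∃ (s : Finset ι) (C : ℝ), 0 < C ∧ ∀ t : ℝ, 1 ≤ t → ∀ x,
      Γ i (T t x) ≤ C * t ^ (-(1/β)) * (s.sup Γ) x := by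
    intro i
    obtain ⟨s₀, C₀, hC₀, hub⟩ := hUB i
    obtain ⟨s₁, C₁, hC₁, hkey⟩ := key' s₀
    refine ⟨s₁, C₀ * C₁, mul_pos hC₀ hC₁, ?_⟩
    intro t ht x
    have ht0 : (0:ℝ) < t := lt_of_lt_of_le one_pos ht
    set R : ℝ := C₀ * (C₁ * s₁.sup Γ x) with hRdef
    have hR0 : 0 ≤ R := mul_nonneg hC₀.le (mul_nonneg hC₁.le (apply_nonneg _ _))
    have hmain : ENNReal.ofReal (Γ i (T t x) ^ β) * ENNReal.ofReal t
        ≤ ENNReal.ofReal (R ^ β) := by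
      have h1 : ENNReal.ofReal (Γ i (T t x) ^ β) * ENNReal.ofReal t
          = ∫⁻ _ in Set.Ioc (0:ℝ) t, ENNReal.ofReal (Γ i (T t x) ^ β) := by
        rw [setLIntegral_const, Real.volume_Ioc, sub_zero]
      rw [h1]
      have h2 : ∫⁻ u in Set.Ioc (0:ℝ) t, ENNReal.ofReal (Γ i (T t x) ^ β)
          ≤ ∫⁻ u in Set.Ioc (0:ℝ) t,
              ENNReal.ofReal (C₀ ^ β) * ENNReal.ofReal ((s₀.sup Γ) (T u x) ^ β) := by
        refine lintegral_mono_ae ((ae_restrict_iff' measurableSet_Ioc).2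
          (Filter.Eventually.of_forall fun u hu => ?_))
        have hu0 : 0 ≤ u := hu.1.le
        have htu0 : 0 ≤ t - u := by have := hu.2; linarith
        have hsplit : T t = (T (t-u)).comp (T u) := by
          have h := hTsg (t-u) u htu0 hu0; rwa [sub_add_cancel] at h
        have hb : Γ i (T t x) ≤ C₀ * (s₀.sup Γ) (T u x) := by
          calc Γ i (T t x) = Γ i (T (t-u) (T u x)) := by rw [hsplit]; rfl
            _ ≤ C₀ * (s₀.sup Γ) (T u x) := hub (t-u) htu0 (T u x)
        calc ENNReal.ofReal (Γ i (T t x) ^ β)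
            ≤ ENNReal.ofReal ((C₀ * (s₀.sup Γ) (T u x)) ^ β) :=
              ENNReal.ofReal_le_ofReal (Real.rpow_le_rpow (apply_nonneg _ _) hb hβ0.le)
          _ = ENNReal.ofReal (C₀ ^ β) * ENNReal.ofReal ((s₀.sup Γ) (T u x) ^ β) := by
              rw [Real.mul_rpow hC₀.le (apply_nonneg _ _),
                ENNReal.ofReal_mul (Real.rpow_nonneg hC₀.le _)]
      calc ∫⁻ _ in Set.Ioc (0:ℝ) t, ENNReal.ofReal (Γ i (T t x) ^ β)
          ≤ ∫⁻ u in Set.Ioc (0:ℝ) t,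
              ENNReal.ofReal (C₀ ^ β) * ENNReal.ofReal ((s₀.sup Γ) (T u x) ^ β) := h2
        _ = ENNReal.ofReal (C₀ ^ β)
            * ∫⁻ u in Set.Ioc (0:ℝ) t, ENNReal.ofReal ((s₀.sup Γ) (T u x) ^ β) :=
            lintegral_const_mul' _ _ ENNReal.ofReal_ne_top
        _ ≤ ENNReal.ofReal (C₀ ^ β)
            * ∫⁻ u in Set.Ioi (0:ℝ), ENNReal.ofReal ((s₀.sup Γ) (T u x) ^ β) :=
            mul_le_mul_right (lintegral_mono_set Set.Ioc_subset_Ioi_self) _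
        _ ≤ ENNReal.ofReal (C₀ ^ β) * ENNReal.ofReal ((C₁ * s₁.sup Γ x) ^ β) :=
            mul_le_mul_right (hkey x) _
        _ = ENNReal.ofReal (R ^ β) := by
            rw [hRdef, Real.mul_rpow hC₀.le (mul_nonneg hC₁.le (apply_nonneg _ _)),
              ENNReal.ofReal_mul (Real.rpow_nonneg hC₀.le _)]
    have hreal : Γ i (T t x) ^ β * t ≤ R ^ β := by
      rw [← ENNReal.ofReal_mul (Real.rpow_nonneg (apply_nonneg _ _) _)] at hmain
      exact (ENNReal.ofReal_le_ofReal_iff (Real.rpow_nonneg hR0 _)).1 hmain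
    have hfinal : Γ i (T t x) ≤ R * t ^ (-(1/β)) := by
      refine (Real.rpow_le_rpow_iff (apply_nonneg _ _)
        (mul_nonneg hR0 (Real.rpow_nonneg ht0.le _)) hβ0).1 ?_
      have hsp : (t ^ (-(1/β)) : ℝ) ^ β = t⁻¹ := by
        rw [← Real.rpow_mul ht0.le, show -(1/β) * β = -1 from by field_simp,
          Real.rpow_neg_one]
      rw [Real.mul_rpow hR0 (Real.rpow_nonneg ht0.le _), hsp, ← div_eq_mul_inv]
      exact (le_div_iff₀ ht0).2 hreal
    calc Γ i (T t x) ≤ R * t ^ (-(1/β)) := hfinal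
      _ = C₀ * C₁ * t ^ (-(1/β)) * s₁.sup Γ x := by rw [hRdef]; ring
  -- decay for finset sups
  have hPsup : ∀ γ : ℝ,
      (∀ i, ∃ (s : Finset ι) (C : ℝ), 0 < C ∧ ∀ t : ℝ, 1 ≤ t → ∀ x,
        Γ i (T t x) ≤ C * t ^ (-γ) * (s.sup Γ) x) →
      ∀ s₀ : Finset ι, ∃ (s : Finset ι) (C : ℝ), 0 < C ∧ ∀ t : ℝ, 1 ≤ t → ∀ x,
        (s₀.sup Γ) (T t x) ≤ C * t ^ (-γ) * (s.sup Γ) x := by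
    intro γ hP s₀
    choose sk Ck hCk hb using hP
    refine ⟨s₀.biUnion sk, 1 + ∑ k ∈ s₀, Ck k,
      add_pos_of_pos_of_nonneg one_pos (Finset.sum_nonneg fun k _ => (hCk k).le), ?_⟩
    intro t ht x
    have ht0 : (0:ℝ) < t := lt_of_lt_of_le one_pos ht
    have htp : 0 ≤ t ^ (-γ) := Real.rpow_nonneg ht0.le _
    have hsupn : 0 ≤ (s₀.biUnion sk).sup Γ x := apply_nonneg _ _
    rcases Seminorm.zero_or_exists_apply_eq_finset_sup Γ s₀ (T t x) with h | ⟨k, hk, h⟩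
    · rw [h]
      exact mul_nonneg (mul_nonneg (add_pos_of_pos_of_nonneg one_pos
        (Finset.sum_nonneg fun j _ => (hCk j).le)).le htp) hsupn
    · rw [h]
      have h1 : Ck k ≤ 1 + ∑ j ∈ s₀, Ck j := by
        have := Finset.single_le_sum (f := Ck) (fun j _ => (hCk j).le) hk; linarith
      have h2 : (sk k).sup Γ x ≤ (s₀.biUnion sk).sup Γ x :=
        Seminorm.le_def.1 (Finset.sup_mono (Finset.subset_biUnion_of_mem sk hk)) x
      calc Γ k (T t x) ≤ Ck k * t ^ (-γ) * (sk k).sup Γ x := hb k t ht x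
        _ ≤ Ck k * t ^ (-γ) * (s₀.biUnion sk).sup Γ x :=
            mul_le_mul_of_nonneg_left h2 (mul_nonneg (hCk k).le htp)
        _ ≤ (1 + ∑ j ∈ s₀, Ck j) * t ^ (-γ) * (s₀.biUnion sk).sup Γ x :=
            mul_le_mul_of_nonneg_right
              (mul_le_mul_of_nonneg_right h1 htp) hsupn
  -- doubling the decay rate
  have hdouble : ∀ γ : ℝ, 0 < γ →
      (∀ i, ∃ (s : Finset ι) (C : ℝ), 0 < C ∧ ∀ t : ℝ, 1 ≤ t → ∀ x,
        Γ i (T t x) ≤ C * t ^ (-γ) * (s.sup Γ) x) →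
      (∀ i, ∃ (s : Finset ι) (C : ℝ), 0 < C ∧ ∀ t : ℝ, 1 ≤ t → ∀ x,
        Γ i (T t x) ≤ C * t ^ (-(2*γ)) * (s.sup Γ) x) := by
    intro γ hγ hP i
    obtain ⟨s, C, hC, hdec⟩ := hP i
    obtain ⟨s', C', hC', hdec'⟩ := hPsup γ hP s
    obtain ⟨s₀, C₀, hC₀, hub⟩ := hUB i
    have h2p : (0:ℝ) ≤ (2:ℝ) ^ (2*γ) := Real.rpow_nonneg (by norm_num) _
    refine ⟨s' ∪ s₀, (C*C' + C₀) * (2:ℝ) ^ (2*γ), by positivity, ?_⟩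
    intro t ht x
    have ht0 : (0:ℝ) < t := lt_of_lt_of_le one_pos ht
    have htp : (0:ℝ) ≤ t ^ (-(2*γ)) := Real.rpow_nonneg ht0.le _
    have hsup' : (s'.sup Γ) x ≤ ((s' ∪ s₀).sup Γ) x :=
      Seminorm.le_def.1 (Finset.sup_mono Finset.subset_union_left) x
    have hsup₀ : (s₀.sup Γ) x ≤ ((s' ∪ s₀).sup Γ) x :=
      Seminorm.le_def.1 (Finset.sup_mono Finset.subset_union_right) x
    have hsupn : 0 ≤ ((s' ∪ s₀).sup Γ) x := apply_nonneg _ _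
    have hCC' : (0:ℝ) ≤ C * C' := mul_nonneg hC.le hC'.le
    rcases le_or_gt 2 t with ht2 | ht2
    · -- t ≥ 2 : split the semigroup
      have ht2' : (1:ℝ) ≤ t/2 := by linarith
      have h2pos : (0:ℝ) < t/2 := by linarith
      have hsplit : T t = (T (t/2)).comp (T (t/2)) := by
        have h := hTsg (t/2) (t/2) h2pos.le h2pos.le
        rwa [add_halves] at h
      have h1 : Γ i (T t x) ≤ C * (t/2) ^ (-γ) * (s.sup Γ) (T (t/2) x) := by
        calc Γ i (T t x) = Γ i (T (t/2) (T (t/2) x)) := by rw [hsplit]; rfl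
          _ ≤ C * (t/2) ^ (-γ) * (s.sup Γ) (T (t/2) x) := hdec (t/2) ht2' _
      have h2 : (s.sup Γ) (T (t/2) x) ≤ C' * (t/2) ^ (-γ) * (s'.sup Γ) x :=
        hdec' (t/2) ht2' x
      have h3 : ((t/2:ℝ)) ^ (-γ) * ((t/2:ℝ)) ^ (-γ) = ((t/2:ℝ)) ^ (-(2*γ)) := by
        rw [← Real.rpow_add h2pos]; ring_nf
      have h4 : ((t/2:ℝ)) ^ (-(2*γ)) = (2:ℝ) ^ (2*γ) * t ^ (-(2*γ)) := by
        rw [Real.div_rpow ht0.le (by norm_num : (0:ℝ) ≤ 2), div_eq_mul_inv,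
          ← Real.rpow_neg (by norm_num : (0:ℝ) ≤ 2), neg_neg, mul_comm]
      have htpq : (0:ℝ) ≤ (t/2) ^ (-γ) := Real.rpow_nonneg h2pos.le _
      calc Γ i (T t x)
          ≤ C * (t/2) ^ (-γ) * (C' * (t/2) ^ (-γ) * (s'.sup Γ) x) :=
            h1.trans (mul_le_mul_of_nonneg_left h2 (mul_nonneg hC.le htpq))
        _ = (C*C') * ((t/2) ^ (-γ) * (t/2) ^ (-γ)) * (s'.sup Γ) x := by ring
        _ = (C*C') * ((2:ℝ) ^ (2*γ) * t ^ (-(2*γ))) * (s'.sup Γ) x := by rw [h3, h4]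
        _ ≤ ((C*C' + C₀) * (2:ℝ) ^ (2*γ)) * t ^ (-(2*γ)) * ((s' ∪ s₀).sup Γ) x := by
            have k1 : (C*C') * ((2:ℝ) ^ (2*γ) * t ^ (-(2*γ)))
                ≤ ((C*C' + C₀) * (2:ℝ) ^ (2*γ)) * t ^ (-(2*γ)) := by
              rw [← mul_assoc]
              refine mul_le_mul_of_nonneg_right
                (mul_le_mul_of_nonneg_right (by linarith) h2p) htp
            exact mul_le_mul k1 hsup' (apply_nonneg _ _)
              (mul_nonneg (mul_nonneg (by positivity) h2p) htp)
    · -- 1 ≤ t < 2 : uniform boundedness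
      have hb : Γ i (T t x) ≤ C₀ * (s₀.sup Γ) x := hub t (by linarith) x
      have hge : (2:ℝ) ^ (-(2*γ)) ≤ t ^ (-(2*γ)) :=
        Real.rpow_le_rpow_of_nonpos ht0 ht2.le (by nlinarith)
      have h21 : (2:ℝ) ^ (2*γ) * (2:ℝ) ^ (-(2*γ)) = 1 := by
        rw [← Real.rpow_add (by norm_num : (0:ℝ) < 2)]; simp
      calc Γ i (T t x) ≤ C₀ * (s₀.sup Γ) x := hb
        _ = C₀ * ((2:ℝ) ^ (2*γ) * (2:ℝ) ^ (-(2*γ))) * (s₀.sup Γ) x := by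
            rw [h21, mul_one]
        _ ≤ ((C*C' + C₀) * (2:ℝ) ^ (2*γ)) * t ^ (-(2*γ)) * ((s' ∪ s₀).sup Γ) x := by
            have k1 : C₀ * ((2:ℝ) ^ (2*γ) * (2:ℝ) ^ (-(2*γ)))
                ≤ ((C*C' + C₀) * (2:ℝ) ^ (2*γ)) * t ^ (-(2*γ)) := by
              rw [← mul_assoc]
              refine mul_le_mul (mul_le_mul_of_nonneg_right (by linarith) h2p) hge
                (Real.rpow_nonneg (by norm_num) _)
                (mul_nonneg (by positivity) h2p)
            exact mul_le_mul k1 hsup₀ (apply_nonneg _ _)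
              (mul_nonneg (mul_nonneg (by positivity) h2p) htp)
  -- iterate
  have hiter : ∀ n : ℕ, ∀ i, ∃ (s : Finset ι) (C : ℝ), 0 < C ∧ ∀ t : ℝ, 1 ≤ t → ∀ x,
      Γ i (T t x) ≤ C * t ^ (-((2:ℝ)^n * (1/β))) * (s.sup Γ) x := by
    intro n
    induction n with
    | zero => simpa using hbase
    | succ n ih =>
      have h2 : (2:ℝ)^(n+1) * (1/β) = 2 * ((2:ℝ)^n * (1/β)) := by ring
      simp only [h2]
      exact hdouble _ (by positivity) ih
  -- conclusion
  intro α hα B hB i ε hε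
  obtain ⟨n, hn⟩ := pow_unbounded_of_one_lt (R := ℝ) (α * β) one_lt_two
  set γ : ℝ := (2:ℝ)^n * (1/β) with hγdef
  have hγα : α < γ := by
    have h1 : α = α * β * (1/β) := by field_simp
    rw [h1, hγdef]
    exact mul_lt_mul_of_pos_right hn (by positivity)
  obtain ⟨s, C, hC, hdec⟩ := hiter n i
  obtain ⟨r, hr, hrB⟩ := (hΓ.isVonNBounded_iff_finset_seminorm_bounded).1 hB s
  have hlim : Tendsto (fun t : ℝ => C * r * t ^ (-(γ - α))) atTop (𝓝 0) := by
    have h0 := (tendsto_rpow_neg_atTop (by linarith : 0 < γ - α)).const_mul (C * r)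
    simpa using h0
  have hev : ∀ᶠ t in atTop, C * r * t ^ (-(γ - α)) < ε := hlim.eventually (gt_mem_nhds hε)
  obtain ⟨t₁, ht₁⟩ := eventually_atTop.1 hev
  refine ⟨max t₁ 1, fun t ht x hx => ?_⟩
  have ht1 : (1:ℝ) ≤ t := le_trans (le_max_right _ _) ht
  have ht0 : (0:ℝ) < t := by linarith
  have htp : ∀ e : ℝ, 0 ≤ t ^ e := fun e => Real.rpow_nonneg ht0.le e
  have hdecx := hdec t ht1 x
  have hsup : (s.sup Γ) x ≤ r := (hrB x hx).le
  calc Γ i ((t ^ α : ℝ) • T t x) = t ^ α * Γ i (T t x) := by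
        rw [map_smul_eq_mul, Real.norm_eq_abs, abs_of_nonneg (htp α)]
    _ ≤ t ^ α * (C * t ^ (-γ) * (s.sup Γ) x) := mul_le_mul_of_nonneg_left hdecx (htp α)
    _ ≤ t ^ α * (C * t ^ (-γ) * r) := by
        refine mul_le_mul_of_nonneg_left (mul_le_mul_of_nonneg_left hsup ?_) (htp α)
        exact mul_nonneg hC.le (htp _)
    _ = C * r * (t ^ α * t ^ (-γ)) := by ring
    _ = C * r * t ^ (-(γ - α)) := by rw [← Real.rpow_add ht0]; ring_nf
    _ ≤ ε := (ht₁ t (le_trans (le_max_left _ _) ht)).le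
end

section
/- Let X be a Mackey complete Hausdorff locally convex space whose topology is induced by a family Γ_X of continuous seminorms, and let (T(t))_{t≥0} be an exponentially bounded C₀-semigroup on X. Then the following are equivalent: (vi) for every x ∈ X there exists α > 1 such that t^α T(t)x → 0 in X as t → ∞; (vii) for every bounded set B ⊆ X there exists α > 1 such that for every q ∈ Γ_X one has lim_{t→∞} sup_{x∈B} q(t^α T(t)x) = 0. -/
open Filter Topology Bornology Pointwise

theorem mc_span_absorb {X : Type*} [AddCommGroup X] [Module ℝ X] {D : Set X}
    (h0 : (0:X) ∈ D) (hconv : Convex ℝ D) (hbal : Balanced ℝ D) {x : X}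
    (hx : x ∈ Submodule.span ℝ D) : ∃ r : ℝ, 0 < r ∧ x ∈ r • D := by
  induction hx using Submodule.span_induction with
  | mem y hy => exact ⟨1, one_pos, by rw [one_smul]; exact hy⟩
  | zero => exact ⟨1, one_pos, by rw [one_smul]; exact h0⟩
  | add y z _ _ ihy ihz =>
      obtain ⟨r, hr, hyr⟩ := ihy
      obtain ⟨s, hs, hzs⟩ := ihz
      refine ⟨r + s, by linarith, ?_⟩
      rw [hconv.add_smul hr.le hs.le]
      exact Set.add_mem_add hyr hzs
  | smul c y _ ihy =>
      obtain ⟨r, hr, hyr⟩ := ihy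
      rcases eq_or_ne c 0 with rfl | hc
      · exact ⟨1, one_pos, by rw [zero_smul, one_smul]; exact h0⟩
      · refine ⟨|c| * r, by positivity, ?_⟩
        obtain ⟨d, hd, rfl⟩ := hyr
        refine ⟨(c / |c|) • d, hbal.smul_mem ?_ hd, ?_⟩
        · rw [Real.norm_eq_abs, abs_div, abs_abs, div_self (abs_ne_zero.2 hc)]
        · show (|c| * r) • (c / |c|) • d = c • r • d
          rw [smul_smul, smul_smul]
          congr 1
          field_simp

theorem mc_mem_of_gauge_lt {X : Type*} [AddCommGroup X] [Module ℝ X] {D : Set X}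
    (hbal : Balanced ℝ D) {x : X} (hS : ∃ s : ℝ, 0 < s ∧ x ∈ s • D) {r : ℝ}
    (hr : gauge D x < r) : x ∈ r • D := by
  have hbdd : BddBelow {s : ℝ | 0 < s ∧ x ∈ s • D} := ⟨0, fun _ h => h.1.le⟩
  have hne : {s : ℝ | 0 < s ∧ x ∈ s • D}.Nonempty := ⟨hS.choose, hS.choose_spec⟩
  obtain ⟨s, ⟨hs0, hsD⟩, hsr⟩ := (csInf_lt_iff hbdd hne).1 hr
  obtain ⟨d, hd, rfl⟩ := hsD
  have hr0 : 0 < r := hs0.trans hsr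
  refine ⟨(s / r) • d, hbal.smul_mem ?_ hd, ?_⟩
  · rw [Real.norm_eq_abs, abs_div, abs_of_pos hs0, abs_of_pos hr0]
    rw [div_le_one hr0]
    exact hsr.le
  · show r • (s / r) • d = s • d
    rw [smul_smul, mul_div_cancel₀ _ hr0.ne']

theorem mc_gauge_add_le {X : Type*} [AddCommGroup X] [Module ℝ X] {D : Set X}
    (h0 : (0:X) ∈ D) (hconv : Convex ℝ D) (hbal : Balanced ℝ D) {x y : X}
    (hx : x ∈ Submodule.span ℝ D) (hy : y ∈ Submodule.span ℝ D) :
    gauge D (x + y) ≤ gauge D x + gauge D y := by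
  refine le_of_forall_pos_le_add fun ε hε => ?_
  have hgx := gauge_nonneg (s := D) x
  have hgy := gauge_nonneg (s := D) y
  have hx' : x ∈ (gauge D x + ε/2) • D :=
    mc_mem_of_gauge_lt hbal (mc_span_absorb h0 hconv hbal hx) (by linarith)
  have hy' : y ∈ (gauge D y + ε/2) • D :=
    mc_mem_of_gauge_lt hbal (mc_span_absorb h0 hconv hbal hy) (by linarith)
  have hmem : x + y ∈ ((gauge D x + ε/2) + (gauge D y + ε/2)) • D := by
    rw [hconv.add_smul (by linarith) (by linarith)]
    exact Set.add_mem_add hx' hy'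
  have := gauge_le_of_mem (by linarith : (0:ℝ) ≤ (gauge D x + ε/2) + (gauge D y + ε/2)) hmem
  linarith

structure MCBD {X : Type*} [AddCommGroup X] [Module ℝ X] (D : Set X) : Type _ where
  val : X
  mem : val ∈ Submodule.span ℝ D

theorem mc_ubp {X : Type*} [AddCommGroup X] [Module ℝ X] [TopologicalSpace X]
    (hX : MackeyComplete X) {ι : Type*} [Nonempty ι] (Γ : ι → Seminorm ℝ X)
    (hΓ : WithSeminorms Γ) {κ : Type*} (f : κ → X →L[ℝ] X)
    (hpt : ∀ x : X, ∀ i : ι, ∃ C : ℝ, ∀ k : κ, Γ i (f k x) ≤ C)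
    {B : Set X} (hB : IsVonNBounded ℝ B) (i : ι) :
    ∃ C : ℝ, 0 ≤ C ∧ ∀ k : κ, ∀ x ∈ B, Γ i (f k x) ≤ C := by
  haveI : IsTopologicalAddGroup X := hΓ.topologicalAddGroup
  haveI : ContinuousSMul ℝ X := hΓ.continuousSMul
  set D : Set X := closure (convexHull ℝ (balancedHull ℝ (insert 0 B))) with hD
  have hBD : insert 0 B ⊆ D :=
    (subset_balancedHull ℝ).trans ((subset_convexHull ℝ _).trans subset_closure)
  have h0D : (0:X) ∈ D := hBD (Set.mem_insert _ _)
  have hDbal : Balanced ℝ D := ((balancedHull.balanced _).convexHull).closure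
  have hDconv : Convex ℝ D := (convex_convexHull ℝ _).closure
  have hDcl : IsClosed D := isClosed_closure
  have hDbdd : IsVonNBounded ℝ D := by
    rw [hΓ.isVonNBounded_iff_seminorm_bounded] at hB ⊢
    intro j
    obtain ⟨r, hr, hrB⟩ := hB j
    refine ⟨r + 1, by linarith, fun x hx => ?_⟩
    have h1 : insert 0 B ⊆ Seminorm.closedBall (Γ j) 0 r := by
      intro y hy
      rw [Seminorm.mem_closedBall_zero _]
      rcases hy with rfl | hy
      · simpa using hr.le
      · exact (hrB y hy).le
    have h2 : balancedHull ℝ (insert 0 B) ⊆ Seminorm.closedBall (Γ j) 0 r := by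
      intro y hy
      obtain ⟨a, ha, z, hz, rfl⟩ := mem_balancedHull_iff.1 hy
      show a • z ∈ _
      rw [Seminorm.mem_closedBall_zero _]
      calc Γ j (a • z) = ‖a‖ * Γ j z := map_smul_eq_mul _ _ _
        _ ≤ 1 * Γ j z := mul_le_mul_of_nonneg_right ha (apply_nonneg _ _)
        _ ≤ r := by
            rw [one_mul]
            exact (Seminorm.mem_closedBall_zero _).1 (h1 hz)
    have h3 : convexHull ℝ (balancedHull ℝ (insert 0 B)) ⊆ Seminorm.closedBall (Γ j) 0 r :=
      convexHull_min h2 (Seminorm.convex_closedBall _ _ _)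
    have h4 : D ⊆ Seminorm.closedBall (Γ j) 0 r := by
      refine closure_minimal h3 ?_
      have : Seminorm.closedBall (Γ j) 0 r = (fun y => Γ j y) ⁻¹' Set.Iic r := by
        ext y
        simp [Seminorm.mem_closedBall_zero _]
      rw [this]
      exact IsClosed.preimage (hΓ.continuous_seminorm j) isClosed_Iic
    have := (Seminorm.mem_closedBall_zero _).1 (h4 hx)
    linarith
  letI : PseudoMetricSpace (MCBD D) :=
    { dist := fun a b => gauge D (a.val - b.val)
      dist_self := fun a => by
        show gauge D (a.val - a.val) = 0
        rw [sub_self, gauge_zero]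
      dist_comm := fun a b => by
        show gauge D (a.val - b.val) = gauge D (b.val - a.val)
        have hsym : ∀ y ∈ D, -y ∈ D := fun y hy => by
          simpa using hDbal.smul_mem (a := (-1:ℝ)) (by simp) hy
        have h := gauge_neg hsym (a.val - b.val)
        rw [neg_sub] at h
        exact h.symm
      dist_triangle := fun a b c => by
        show gauge D (a.val - c.val) ≤ gauge D (a.val - b.val) + gauge D (b.val - c.val)
        have h1 : a.val - c.val = (a.val - b.val) + (b.val - c.val) := by abel
        rw [h1]
        exact mc_gauge_add_le h0D hDconv hDbal (Submodule.sub_mem _ a.mem b.mem)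
          (Submodule.sub_mem _ b.mem c.mem) }
  have hdist : ∀ a b : MCBD D, dist a b = gauge D (a.val - b.val) := fun a b => rfl
  haveI : CompleteSpace (MCBD D) := by
    refine Metric.complete_of_cauchySeq_tendsto fun u hu => ?_
    have hkey0 : Tendsto (fun p : ℕ × ℕ => dist (u p.1) (u p.2)) atTop (𝓝 0) :=
      cauchySeq_iff_tendsto_dist_atTop_0.1 hu
    set b : ℕ → ℕ → ℝ := fun n k => dist (u n) (u k) + 1/((n:ℝ)+1) + 1/((k:ℝ)+1) with hb
    have hbpos : ∀ n k : ℕ, gauge D ((u n).val - (u k).val) < b n k := by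
      intro n k
      have h1 : (0:ℝ) < 1/((n:ℝ)+1) := by positivity
      have h2 : (0:ℝ) < 1/((k:ℝ)+1) := by positivity
      have h3 : dist (u n) (u k) = gauge D ((u n).val - (u k).val) := rfl
      show gauge D ((u n).val - (u k).val) < dist (u n) (u k) + 1/((n:ℝ)+1) + 1/((k:ℝ)+1)
      rw [h3]
      linarith
    have hmem : ∀ n k : ℕ, (u n).val - (u k).val ∈ b n k • D := fun n k =>
      mc_mem_of_gauge_lt hDbal
        (mc_span_absorb h0D hDconv hDbal (Submodule.sub_mem _ (u n).mem (u k).mem)) (hbpos n k)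
    have htb : Tendsto (fun p : ℕ × ℕ => b p.1 p.2) atTop (𝓝 0) := by
      have hfst : Tendsto (Prod.fst : ℕ × ℕ → ℕ) atTop atTop := by
        rw [← Filter.prod_atTop_atTop_eq]
        exact tendsto_fst
      have hsnd : Tendsto (Prod.snd : ℕ × ℕ → ℕ) atTop atTop := by
        rw [← Filter.prod_atTop_atTop_eq]
        exact tendsto_snd
      have h1 : Tendsto (fun p : ℕ × ℕ => 1/((p.1:ℝ)+1)) atTop (𝓝 0) :=
        tendsto_one_div_add_atTop_nhds_zero_nat.comp hfst
      have h2 : Tendsto (fun p : ℕ × ℕ => 1/((p.2:ℝ)+1)) atTop (𝓝 0) :=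
        tendsto_one_div_add_atTop_nhds_zero_nat.comp hsnd
      have h3 := (hkey0.add h1).add h2
      simp only [hb]
      simpa [one_div] using h3
    obtain ⟨l, hl⟩ := hX (fun n => (u n).val) ⟨D, b, hDbdd, htb, hmem⟩
    have hkey : ∀ ε : ℝ, 0 < ε → ∃ N : ℕ, ∀ n ≥ N, (u n).val - l ∈ ε • D := by
      intro ε hε
      obtain ⟨N, hN⟩ := Metric.cauchySeq_iff.1 hu (ε/2) (half_pos hε)
      refine ⟨N, fun n hn => ?_⟩
      have htend2 : Tendsto (fun k : ℕ => ε⁻¹ • ((u n).val - (u k).val)) atTop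
          (𝓝 (ε⁻¹ • ((u n).val - l))) :=
        ((tendsto_const_nhds.sub hl).const_smul _)
      have hev : ∀ᶠ k in (atTop : Filter ℕ), ε⁻¹ • ((u n).val - (u k).val) ∈ D := by
        filter_upwards [eventually_ge_atTop N] with k hk
        have hlt : gauge D ((u n).val - (u k).val) < ε := by
          have := hN n hn k hk
          rw [hdist] at this
          linarith
        have hmem2 : (u n).val - (u k).val ∈ ε • D :=
          mc_mem_of_gauge_lt hDbal
            (mc_span_absorb h0D hDconv hDbal (Submodule.sub_mem _ (u n).mem (u k).mem)) hlt
        exact (Set.mem_smul_set_iff_inv_smul_mem₀ hε.ne' _ _).1 hmem2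
      have := hDcl.mem_of_tendsto htend2 hev
      exact (Set.mem_smul_set_iff_inv_smul_mem₀ hε.ne' _ _).2 this
    have hlspan : l ∈ Submodule.span ℝ D := by
      obtain ⟨N, hN⟩ := hkey 1 one_pos
      have h1 : (u N).val - l ∈ (1:ℝ) • D := hN N le_rfl
      rw [one_smul] at h1
      have h2 : l = (u N).val - ((u N).val - l) := by abel
      rw [h2]
      exact Submodule.sub_mem _ (u N).mem (Submodule.subset_span h1)
    refine ⟨⟨l, hlspan⟩, ?_⟩
    rw [Metric.tendsto_atTop]
    intro ε hε
    obtain ⟨N, hN⟩ := hkey (ε/2) (half_pos hε)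
    refine ⟨N, fun n hn => ?_⟩
    rw [hdist]
    have := gauge_le_of_mem (by linarith : (0:ℝ) ≤ ε/2) (hN n hn)
    show gauge D ((u n).val - l) < ε
    linarith
  haveI : Nonempty (MCBD D) := ⟨⟨0, Submodule.zero_mem _⟩⟩
  have himg : ∀ k : κ, ∃ Ck > (0:ℝ), ∀ y ∈ D, Γ i (f k y) < Ck := by
    intro k
    have hb : IsVonNBounded ℝ (f k '' D) := hDbdd.image (f k)
    obtain ⟨Ck, hCk, h⟩ := (hΓ.isVonNBounded_iff_seminorm_bounded.1 hb) i
    exact ⟨Ck, hCk, fun y hy => h _ (Set.mem_image_of_mem _ hy)⟩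
  have hlip : ∀ k : κ, ∀ w ∈ Submodule.span ℝ D, ∀ Ck > (0:ℝ),
      (∀ y ∈ D, Γ i (f k y) < Ck) → Γ i (f k w) ≤ Ck * gauge D w := by
    intro k w hw Ck hCk hbound
    refine le_of_forall_pos_le_add fun ε hε => ?_
    set a : ℝ := gauge D w + ε / Ck with ha
    have ha0 : 0 < a := by
      have := gauge_nonneg (s := D) w
      have : 0 < ε / Ck := div_pos hε hCk
      positivity
    have hlt : gauge D w < a := by
      have : 0 < ε / Ck := div_pos hε hCk
      simp only [ha]
      linarith
    obtain ⟨d, hd, hdw⟩ := mc_mem_of_gauge_lt hDbal (mc_span_absorb h0D hDconv hDbal hw) hlt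
    have h1 : Γ i (f k w) = |a| * Γ i (f k d) := by
      rw [← hdw]
      show Γ i (f k (a • d)) = _
      rw [map_smul, map_smul_eq_mul, Real.norm_eq_abs]
    rw [h1, abs_of_pos ha0]
    calc a * Γ i (f k d) ≤ a * Ck := by
          exact mul_le_mul_of_nonneg_left (hbound d hd).le ha0.le
      _ = Ck * gauge D w + ε := by
          rw [ha]
          field_simp
  set A : ℕ → Set (MCBD D) := fun n => {e | ∀ k, Γ i (f k e.val) ≤ (n:ℝ)} with hA
  have hAcl : ∀ n, IsClosed (A n) := by
    intro n
    have hrw : A n = ⋂ k, (fun e : MCBD D => Γ i (f k e.val)) ⁻¹' Set.Iic (n:ℝ) := by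
      ext e
      simp [hA, Set.mem_iInter]
    rw [hrw]
    refine isClosed_iInter fun k => IsClosed.preimage ?_ isClosed_Iic
    obtain ⟨Ck, hCk, hbnd⟩ := himg k
    refine (LipschitzWith.of_dist_le_mul (K := Real.toNNReal Ck)
      (f := fun e : MCBD D => Γ i (f k e.val)) fun e e' => ?_).continuous
    rw [Real.dist_eq, Real.coe_toNNReal _ hCk.le, hdist]
    calc |Γ i (f k e.val) - Γ i (f k e'.val)| ≤ Γ i (f k e.val - f k e'.val) :=
          abs_sub_map_le_sub _ _ _
      _ = Γ i (f k (e.val - e'.val)) := by rw [map_sub (f k) e.val e'.val]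
      _ ≤ Ck * gauge D (e.val - e'.val) :=
          hlip k _ (Submodule.sub_mem _ e.mem e'.mem) Ck hCk hbnd
  have hAcover : ⋃ n, A n = Set.univ := by
    ext e
    simp only [Set.mem_iUnion, Set.mem_univ, iff_true]
    obtain ⟨C, hC⟩ := hpt e.val i
    refine ⟨⌈max C 0⌉₊, fun k => ?_⟩
    calc Γ i (f k e.val) ≤ C := hC k
      _ ≤ max C 0 := le_max_left _ _
      _ ≤ (⌈max C 0⌉₊ : ℝ) := Nat.le_ceil _
  obtain ⟨n, hn⟩ := nonempty_interior_of_iUnion_of_closed hAcl hAcover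
  obtain ⟨e₀, he₀⟩ := hn
  obtain ⟨r, hr, hball⟩ := Metric.isOpen_iff.1 isOpen_interior e₀ he₀
  have hball' : Metric.ball e₀ r ⊆ A n := hball.trans interior_subset
  have he₀A : e₀ ∈ A n := hball' (Metric.mem_ball_self hr)
  refine ⟨4 * n / r, by positivity, fun k x hx => ?_⟩
  have hxD : x ∈ D := hBD (Set.mem_insert_of_mem _ hx)
  have hxspan : x ∈ Submodule.span ℝ D := Submodule.subset_span hxD
  set v : X := (r/2) • x with hv
  have hvspan : v ∈ Submodule.span ℝ D := Submodule.smul_mem _ _ hxspan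
  have hgv : gauge D v < r := by
    have hgs : gauge D v = (r/2) * gauge D x := by
      rw [hv]
      have := gauge_smul_of_nonneg (a := r/2) (s := D) (by positivity : (0:ℝ) ≤ r/2) x
      simpa [smul_eq_mul] using this
    have hg1 : gauge D x ≤ 1 := gauge_le_one_of_mem hxD
    have hg0 := gauge_nonneg (s := D) x
    rw [hgs]
    nlinarith
  set e₁ : MCBD D := ⟨e₀.val + v, Submodule.add_mem _ e₀.mem hvspan⟩ with he₁d
  have he₁ : e₁ ∈ A n := by
    apply hball'
    show dist e₁ e₀ < r
    rw [hdist]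
    show gauge D (e₀.val + v - e₀.val) < r
    simpa using hgv
  have hfv : Γ i (f k v) ≤ 2 * n := by
    have h1 : f k v = f k e₁.val - f k e₀.val := by
      show f k v = f k (e₀.val + v) - f k e₀.val
      rw [map_add]
      abel
    rw [h1]
    calc Γ i (f k e₁.val - f k e₀.val) ≤ Γ i (f k e₁.val) + Γ i (f k e₀.val) :=
          map_sub_le_add _ _ _
      _ ≤ (n:ℝ) + (n:ℝ) := add_le_add (he₁ k) (he₀A k)
      _ = 2 * n := by ring
  have hfx : Γ i (f k v) = (r/2) * Γ i (f k x) := by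
    rw [hv, map_smul, map_smul_eq_mul, Real.norm_eq_abs, abs_of_pos (by positivity : (0:ℝ) < r/2)]
  rw [hfx] at hfv
  rw [le_div_iff₀ hr]
  nlinarith

/-- For a Mackey complete Hausdorff locally convex space `X` and an exponentially
bounded `C₀`-semigroup on `X`, the pointwise polynomial decay (vi) is equivalent to polynomial
decay uniformly on each bounded set (vii). -/
theorem statement5 {X : Type*} [AddCommGroup X] [Module ℝ X] [TopologicalSpace X]
    [T2Space X] (hX : MackeyComplete X)
    {ι : Type*} [Nonempty ι] (Γ : ι → Seminorm ℝ X) (hΓ : WithSeminorms Γ)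
    (T : ℝ → X →L[ℝ] X)
    (hT0 : T 0 = ContinuousLinearMap.id ℝ X)
    (hTsg : ∀ s t : ℝ, 0 ≤ s → 0 ≤ t → T (s + t) = (T s).comp (T t))
    (hTc : ∀ x : X, ContinuousOn (fun t : ℝ => T t x) (Set.Ici 0))
    (hexp : ∀ i : ι, ∃ j : ι, ∃ M : ℝ, 1 ≤ M ∧ ∃ ω : ℝ,
      ∀ t : ℝ, 0 ≤ t → ∀ x : X, Γ i (T t x) ≤ M * Real.exp (ω * t) * Γ j x) :
    (∀ x : X, ∃ α > (1:ℝ),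
        Tendsto (fun t : ℝ => (t ^ α : ℝ) • T t x) atTop (nhds 0)) ↔
    (∀ B : Set X, IsVonNBounded ℝ B → ∃ α > (1:ℝ), ∀ i : ι, ∀ ε > (0:ℝ),
        ∃ t₀ : ℝ, ∀ t ≥ t₀, ∀ x ∈ B, Γ i ((t ^ α : ℝ) • T t x) ≤ ε) := by
  haveI : IsTopologicalAddGroup X := hΓ.topologicalAddGroup
  haveI : ContinuousSMul ℝ X := hΓ.continuousSMul
  constructor
  · intro hvi B hB
    set F : {t : ℝ // 0 ≤ t} → X →L[ℝ] X := fun k => k.1 • T k.1 with hF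
    have hFapp : ∀ (k : {t : ℝ // 0 ≤ t}) (x : X), F k x = k.1 • T k.1 x := fun k x => rfl
    have hpt : ∀ x : X, ∀ i : ι, ∃ C : ℝ, ∀ k, Γ i (F k x) ≤ C := by
      intro x i
      obtain ⟨α, hα, htend⟩ := hvi x
      rw [hΓ.tendsto_nhds] at htend
      obtain ⟨t₁, ht₁⟩ := Filter.eventually_atTop.1 (htend i 1 one_pos)
      set t₂ : ℝ := max t₁ 1 with ht₂
      have hcont : ContinuousOn (fun t : ℝ => Γ i (t • T t x)) (Set.Icc 0 t₂) := by
        apply (hΓ.continuous_seminorm i).comp_continuousOn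
        exact (continuousOn_id).smul ((hTc x).mono Set.Icc_subset_Ici_self)
      obtain ⟨C₀, hC₀⟩ := (isCompact_Icc).exists_bound_of_continuousOn hcont
      refine ⟨max C₀ 1, fun k => ?_⟩
      rcases le_or_gt k.1 t₂ with hk | hk
      · have h1 := hC₀ k.1 ⟨k.2, hk⟩
        rw [Real.norm_eq_abs] at h1
        have h2 : Γ i (k.1 • T k.1 x) ≤ C₀ := le_trans (le_abs_self _) h1
        rw [hFapp]
        exact le_trans h2 (le_max_left _ _)
      · have hk1 : (1:ℝ) ≤ k.1 := le_trans (le_max_right _ _) hk.le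
        have hk0 : (0:ℝ) < k.1 := lt_of_lt_of_le one_pos hk1
        have hsplit : k.1 • T k.1 x = (k.1 ^ ((1:ℝ) - α)) • ((k.1 ^ α : ℝ) • T k.1 x) := by
          rw [smul_smul, ← Real.rpow_add hk0, sub_add_cancel, Real.rpow_one]
        have h3 : Γ i ((k.1 ^ α : ℝ) • T k.1 x) < 1 := by
          have := ht₁ k.1 (le_trans (le_max_left _ _) hk.le)
          rwa [sub_zero] at this
        have h5 : (0:ℝ) ≤ k.1 ^ ((1:ℝ) - α) := (Real.rpow_pos_of_pos hk0 _).le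
        have h4 : k.1 ^ ((1:ℝ) - α) ≤ 1 :=
          Real.rpow_le_one_of_one_le_of_nonpos hk1 (by linarith)
        calc Γ i (F k x) = |k.1 ^ ((1:ℝ) - α)| * Γ i ((k.1 ^ α : ℝ) • T k.1 x) := by
              rw [hFapp, hsplit, map_smul_eq_mul, Real.norm_eq_abs]
          _ ≤ 1 * 1 := mul_le_mul (by rwa [abs_of_nonneg h5]) h3.le (apply_nonneg _ _) zero_le_one
          _ ≤ max C₀ 1 := by rw [one_mul]; exact le_max_right _ _
    have hB' : IsVonNBounded ℝ (⋃ k, F k '' B) := by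
      rw [hΓ.isVonNBounded_iff_seminorm_bounded]
      intro i
      obtain ⟨C, hC0, hC⟩ := mc_ubp hX Γ hΓ F hpt hB i
      refine ⟨C + 1, by linarith, fun y hy => ?_⟩
      obtain ⟨k, x, hx, rfl⟩ := by
        simpa only [Set.mem_iUnion, Set.mem_image] using hy
      have := hC k x hx
      linarith
    refine ⟨3/2, by norm_num, fun i ε hε => ?_⟩
    obtain ⟨C, hC0, hC⟩ := mc_ubp hX Γ hΓ F hpt hB' i
    refine ⟨max 1 (((4*C+1)/ε)^2), fun t ht x hx => ?_⟩
    have ht1 : (1:ℝ) ≤ t := le_trans (le_max_left _ _) ht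
    have ht0 : (0:ℝ) < t := by linarith
    have hhalf : (0:ℝ) ≤ t/2 := by linarith
    have hsg : T t x = T (t/2) (T (t/2) x) := by
      have h := hTsg (t/2) (t/2) hhalf hhalf
      rw [add_halves] at h
      rw [h]
      rfl
    set k : {s : ℝ // 0 ≤ s} := ⟨t/2, hhalf⟩ with hk
    have hy : F k x ∈ ⋃ k, F k '' B := Set.mem_iUnion.2 ⟨k, Set.mem_image_of_mem _ hx⟩
    have hbound : Γ i (F k (F k x)) ≤ C := hC k _ hy
    have hid : (t ^ ((3:ℝ)/2) : ℝ) • T t x = (4 * t ^ (-(1/2) : ℝ)) • F k (F k x) := by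
      have h1 : F k (F k x) = ((t/2)*(t/2)) • T t x := by
        rw [hFapp, hFapp, map_smul, smul_smul, hk, hsg]
      rw [h1, smul_smul]
      congr 1
      have h2 : t * t = t ^ (2:ℝ) := by
        rw [show (2:ℝ) = ((2:ℕ):ℝ) by norm_num, Real.rpow_natCast]
        ring
      have h3 : t ^ ((3:ℝ)/2) = t ^ (-(1/2) : ℝ) * (t * t) := by
        rw [h2, ← Real.rpow_add ht0]
        norm_num
      rw [h3]
      ring
    rw [hid, map_smul_eq_mul, Real.norm_eq_abs]
    have hs0 : (0:ℝ) < Real.sqrt t := Real.sqrt_pos.2 ht0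
    have hrs : t ^ (-(1/2) : ℝ) = (Real.sqrt t)⁻¹ := by
      rw [Real.rpow_neg ht0.le, Real.sqrt_eq_rpow]
    have hq0 : (0:ℝ) < (4*C+1)/ε := by positivity
    have hsge : (4*C+1)/ε ≤ Real.sqrt t := by
      have := Real.sqrt_le_sqrt (le_trans (le_max_right _ _) ht)
      rwa [Real.sqrt_sq hq0.le] at this
    have hes : 4*C+1 ≤ ε * Real.sqrt t := by
      rw [div_le_iff₀ hε] at hsge
      linarith [mul_comm ε (Real.sqrt t)]
    have habs : |4 * t ^ (-(1/2) : ℝ)| = 4 / Real.sqrt t := by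
      rw [hrs, abs_of_nonneg (by positivity), div_eq_mul_inv]
    rw [habs]
    rw [div_mul_eq_mul_div, div_le_iff₀ hs0]
    have hγ0 := apply_nonneg (Γ i) (F k (F k x))
    nlinarith
  · intro h x
    obtain ⟨α, hα, hcond⟩ := h {x} (isVonNBounded_singleton x)
    refine ⟨α, hα, ?_⟩
    rw [hΓ.tendsto_nhds]
    intro i ε hε
    obtain ⟨t₀, ht₀⟩ := hcond i (ε/2) (half_pos hε)
    filter_upwards [eventually_ge_atTop t₀] with t ht
    rw [sub_zero]
    exact lt_of_le_of_lt (ht₀ t ht x rfl) (half_lt_self hε)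
end

section
/- Let X be a Hausdorff locally convex space whose topology is induced by a family Γ_X of continuous seminorms, assume X is a Baire space, and let (T(t))_{t≥0} be an exponentially bounded C₀-semigroup on X. If for every x ∈ X there exists α > 1 such that t^α T(t)x → 0 in X as t → ∞, then there exists a single α > 1 such that t^α T(t)x → 0 as t → ∞ for every x ∈ X. -/
open Filter Topology Bornology

/-- For a Hausdorff locally convex Baire space `X` and an exponentially bounded
`C₀`-semigroup on `X`: if every orbit decays faster than some polynomial rate `t^α` (`α > 1`
depending on the point), then one single `α > 1` works for all points. -/
theorem statement6 {X : Type*} [AddCommGroup X] [Module ℝ X] [TopologicalSpace X]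
    [T2Space X] [BaireSpace X]
    {ι : Type*} [Nonempty ι] (Γ : ι → Seminorm ℝ X) (hΓ : WithSeminorms Γ)
    (T : ℝ → X →L[ℝ] X)
    (hT0 : T 0 = ContinuousLinearMap.id ℝ X)
    (hTsg : ∀ s t : ℝ, 0 ≤ s → 0 ≤ t → T (s + t) = (T s).comp (T t))
    (hTc : ∀ x : X, ContinuousOn (fun t : ℝ => T t x) (Set.Ici 0))
    (hexp : ∀ i : ι, ∃ j : ι, ∃ M : ℝ, 1 ≤ M ∧ ∃ ω : ℝ,
      ∀ t : ℝ, 0 ≤ t → ∀ x : X, Γ i (T t x) ≤ M * Real.exp (ω * t) * Γ j x)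
    (h : ∀ x : X, ∃ α > (1:ℝ),
      Tendsto (fun t : ℝ => (t ^ α : ℝ) • T t x) atTop (nhds 0)) :
    ∃ α > (1:ℝ), ∀ x : X,
      Tendsto (fun t : ℝ => (t ^ α : ℝ) • T t x) atTop (nhds 0) := by
  classical
  haveI : Nonempty X := ⟨0⟩
  haveI : IsTopologicalAddGroup X := hΓ.topologicalAddGroup
  have hcont : ∀ i, Continuous (Γ i) := fun i => hΓ.continuous_seminorm i
  -- Step 1: each orbit satisfies a pointwise bound `(1+t) * Γ i (T t x) ≤ S`.
  have hbdd : ∀ (i : ι) (x : X), ∃ S : ℝ, ∀ t : ℝ, 0 ≤ t → (1 + t) * Γ i (T t x) ≤ S := by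
    intro i x
    obtain ⟨α, hα, hten⟩ := h x
    have htenΓ : Tendsto (fun t : ℝ => Γ i ((t ^ α : ℝ) • T t x)) atTop (𝓝 0) := by
      have := ((hcont i).tendsto 0).comp hten
      simpa [Function.comp_def, map_zero] using this
    have hev : ∀ᶠ t : ℝ in atTop, Γ i ((t ^ α : ℝ) • T t x) < 1 :=
      htenΓ.eventually_lt_const one_pos
    obtain ⟨a, ha⟩ := eventually_atTop.1 hev
    set T₁ : ℝ := max a 1 with hT₁
    have hc1 : ContinuousOn (fun t : ℝ => (1 + t) * Γ i (T t x)) (Set.Icc 0 T₁) := by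
      refine ContinuousOn.mul (continuous_const.add continuous_id).continuousOn ?_
      exact (hcont i).comp_continuousOn ((hTc x).mono Set.Icc_subset_Ici_self)
    have hcc : IsCompact ((fun t : ℝ => (1 + t) * Γ i (T t x)) '' Set.Icc 0 T₁) :=
      isCompact_Icc.image_of_continuousOn hc1
    obtain ⟨B, hB⟩ := hcc.bddAbove
    refine ⟨max B 2, fun t ht => ?_⟩
    by_cases htT : t ≤ T₁
    · exact le_trans (hB ⟨t, ⟨ht, htT⟩, rfl⟩) (le_max_left _ _)
    · push_neg at htT
      have ht1 : (1:ℝ) ≤ t := le_trans (le_max_right a 1) htT.le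
      have hta : a ≤ t := le_trans (le_max_left a 1) htT.le
      have h1 : Γ i ((t ^ α : ℝ) • T t x) < 1 := ha t hta
      rw [map_smul_eq_mul, Real.norm_eq_abs,
        abs_of_nonneg (Real.rpow_nonneg (by linarith) _)] at h1
      have htα : t ≤ t ^ α := by
        calc t = t ^ (1:ℝ) := (Real.rpow_one t).symm
        _ ≤ t ^ α := Real.rpow_le_rpow_of_exponent_le ht1 hα.le
      have hΓ0 : 0 ≤ Γ i (T t x) := apply_nonneg _ _
      refine le_trans ?_ (le_max_right B 2)
      nlinarith
  -- Step 2 (Baire): for each seminorm, a uniform bound by another continuous seminorm.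
  have lemA : ∀ i : ι, ∃ (C : ℝ) (F : Finset ι), 0 ≤ C ∧
      ∀ (x : X) (t : ℝ), 0 ≤ t → (1 + t) * Γ i (T t x) ≤ C * (F.sup Γ) x := by
    intro i
    set E : ℕ → Set X := fun n => {x | ∀ t : ℝ, 0 ≤ t → (1 + t) * Γ i (T t x) ≤ n + 1}
      with hE
    have hEc : ∀ n, IsClosed (E n) := by
      intro n
      have : E n = ⋂ (t : ℝ) (_ : 0 ≤ t), {x | (1 + t) * Γ i (T t x) ≤ n + 1} := by
        ext x; simp [hE, Set.mem_iInter]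
      rw [this]
      refine isClosed_iInter fun t => isClosed_iInter fun ht => ?_
      exact isClosed_le (continuous_const.mul ((hcont i).comp (T t).continuous))
        continuous_const
    have hEu : ⋃ n, E n = Set.univ := by
      ext x
      simp only [Set.mem_iUnion, Set.mem_univ, iff_true]
      obtain ⟨S, hS⟩ := hbdd i x
      obtain ⟨n, hn⟩ := exists_nat_ge S
      exact ⟨n, fun t ht => le_trans (hS t ht) (by push_cast; linarith)⟩
    obtain ⟨N, x₀, hx₀⟩ := nonempty_interior_of_iUnion_of_closed hEc hEu
    have hnhds : E N ∈ 𝓝 x₀ := mem_interior_iff_mem_nhds.1 hx₀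
    have hpre : (fun v : X => x₀ + v) ⁻¹' E N ∈ 𝓝 (0 : X) := by
      have hc : Continuous fun v : X => x₀ + v := continuous_const.add continuous_id
      exact hc.continuousAt.preimage_mem_nhds (by simpa using hnhds)
    obtain ⟨s, hs, hsub⟩ := hΓ.hasBasis.mem_iff.1 hpre
    obtain ⟨F, r, hr, rfl⟩ := (SeminormFamily.basisSets_iff _).1 hs
    -- middle claim: uniform bound on a ball
    have hmid : ∀ v : X, (F.sup Γ) v < r → ∀ t : ℝ, 0 ≤ t →
        (1 + t) * Γ i (T t v) ≤ (N : ℝ) + 1 := by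
      intro v hv t ht
      have h1 : x₀ + v ∈ E N := Set.mem_preimage.1
        (hsub (show v ∈ (F.sup Γ).ball 0 r by
          simpa [Seminorm.mem_ball_zero] using hv))
      have h2 : x₀ + (-v) ∈ E N := Set.mem_preimage.1
        (hsub (show -v ∈ (F.sup Γ).ball 0 r by
          simpa [Seminorm.mem_ball_zero, map_neg_eq_map] using hv))
      have e1 : (1 + t) * Γ i (T t (x₀ + v)) ≤ (N : ℝ) + 1 := h1 t ht
      have e2 : (1 + t) * Γ i (T t (x₀ + (-v))) ≤ (N : ℝ) + 1 := h2 t ht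
      have hveq : T t v = (1/2 : ℝ) • (T t (x₀ + v) - T t (x₀ + (-v))) := by
        rw [← map_sub]
        have hv2 : (x₀ + v) - (x₀ + (-v)) = (2:ℝ) • v := by
          have : ((2:ℝ) • v : X) = v + v := two_smul ℝ v
          rw [this]; abel
        rw [hv2, map_smul, smul_smul]
        norm_num
      have hle : Γ i (T t v) ≤ (1/2) * (Γ i (T t (x₀ + v)) + Γ i (T t (x₀ + (-v)))) := by
        rw [hveq, map_smul_eq_mul, Real.norm_eq_abs,
          abs_of_nonneg (by norm_num : (0:ℝ) ≤ 1/2)]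
        have := map_sub_le_add (Γ i) (T t (x₀ + v)) (T t (x₀ + (-v)))
        linarith
      have hmul := mul_le_mul_of_nonneg_left hle (by linarith : (0:ℝ) ≤ 1 + t)
      nlinarith
    refine ⟨((N:ℝ) + 1) / r, F, by positivity, ?_⟩
    intro x t ht
    have hKpos : (0:ℝ) < ((N:ℝ) + 1) / r := by positivity
    have key : ∀ c : ℝ, (F.sup Γ) x < c → (1 + t) * Γ i (T t x) ≤ ((N:ℝ) + 1) / r * c := by
      intro c hc
      have hc0 : 0 < c := lt_of_le_of_lt (apply_nonneg _ _) hc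
      have hrc : 0 < r / c := div_pos hr hc0
      have hvmem : (F.sup Γ) ((r / c) • x) < r := by
        rw [map_smul_eq_mul, Real.norm_eq_abs, abs_of_pos hrc]
        calc r / c * (F.sup Γ) x < r / c * c := mul_lt_mul_of_pos_left hc hrc
        _ = r := div_mul_cancel₀ _ hc0.ne'
      have hm := hmid _ hvmem t ht
      rw [map_smul, map_smul_eq_mul, Real.norm_eq_abs, abs_of_pos hrc] at hm
      -- hm : (1 + t) * (r / c * Γ i (T t x)) ≤ N + 1
      have hmub := mul_le_mul_of_nonneg_left hm (le_of_lt (div_pos hc0 hr))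
      have hl : c / r * ((1 + t) * (r / c * Γ i (T t x))) = (1 + t) * Γ i (T t x) := by
        field_simp
      have hr' : c / r * ((N:ℝ) + 1) = ((N:ℝ) + 1) / r * c := by ring
      rw [hl, hr'] at hmub
      exact hmub
    refine le_of_forall_gt_imp_ge_of_dense ?_
    intro c hc
    have hc' : (F.sup Γ) x < c / (((N:ℝ) + 1) / r) := by
      rw [lt_div_iff₀ hKpos]
      calc (F.sup Γ) x * (((N:ℝ) + 1) / r) = ((N:ℝ) + 1) / r * (F.sup Γ) x := by ring
      _ < c := hc
    have := key _ hc'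
    rwa [mul_div_cancel₀ _ hKpos.ne'] at this
  -- Step 3: quadratic decay of every orbit, for every seminorm.
  have lemB : ∀ (i : ι) (x : X), ∃ D : ℝ, ∀ u : ℝ, 0 ≤ u →
      (1 + u) ^ 2 * Γ i (T u x) ≤ D := by
    intro i x
    obtain ⟨C, F, hC0, hA⟩ := lemA i
    choose Cj Fj hCj0 hAj using lemA
    set S : ℝ := ∑ j ∈ F, Cj j * (Fj j).sup Γ x with hSdef
    have hS0 : 0 ≤ S :=
      Finset.sum_nonneg fun j _ => mul_nonneg (hCj0 j) (apply_nonneg _ _)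
    refine ⟨4 * (C * S), ?_⟩
    intro u hu
    set t : ℝ := u / 2 with htdef
    have ht : 0 ≤ t := by positivity
    have h1t : (0:ℝ) < 1 + t := by linarith
    have hsplit : T u x = T t (T t x) := by
      have hu' : u = t + t := by rw [htdef]; ring
      rw [hu', hTsg t t ht ht]
      rfl
    have h1 : (1 + t) * Γ i (T t (T t x)) ≤ C * (F.sup Γ) (T t x) := hA (T t x) t ht
    have hsup : (F.sup Γ) (T t x) ≤ S / (1 + t) := by
      refine Seminorm.finset_sup_apply_le (by positivity) fun j hj => ?_
      rw [le_div_iff₀ h1t]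
      have hj1 : (1 + t) * Γ j (T t x) ≤ Cj j * (Fj j).sup Γ x := hAj j x t ht
      have hj2 : Cj j * (Fj j).sup Γ x ≤ S :=
        Finset.single_le_sum (f := fun j => Cj j * (Fj j).sup Γ x)
          (fun k _ => mul_nonneg (hCj0 k) (apply_nonneg _ _)) hj
      calc Γ j (T t x) * (1 + t) = (1 + t) * Γ j (T t x) := by ring
      _ ≤ S := le_trans hj1 hj2
    have h2 : (1 + t) * (F.sup Γ) (T t x) ≤ S := by
      rw [mul_comm]
      exact (le_div_iff₀ h1t).1 hsup
    have hG0 : 0 ≤ Γ i (T t (T t x)) := apply_nonneg _ _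
    have hsup0 : 0 ≤ (F.sup Γ) (T t x) := apply_nonneg _ _
    have e1 : 1 + u ≤ 2 * (1 + t) := by rw [htdef]; linarith
    have e2 : (1 + u) ^ 2 ≤ 4 * (1 + t) ^ 2 := by nlinarith
    rw [hsplit]
    have e3 : (1 + u) ^ 2 * Γ i (T t (T t x)) ≤ 4 * (1 + t) ^ 2 * Γ i (T t (T t x)) :=
      mul_le_mul_of_nonneg_right e2 hG0
    have p1 : (1 + t) * ((1 + t) * Γ i (T t (T t x))) ≤ (1 + t) * (C * (F.sup Γ) (T t x)) :=
      mul_le_mul_of_nonneg_left h1 h1t.le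
    have p2 : C * ((1 + t) * (F.sup Γ) (T t x)) ≤ C * S :=
      mul_le_mul_of_nonneg_left h2 hC0
    nlinarith
  -- Step 4: conclusion with `α = 3/2`.
  refine ⟨3/2, by norm_num, fun x => ?_⟩
  rw [hΓ.tendsto_nhds]
  intro i ε hε
  obtain ⟨D, hD⟩ := lemB i x
  have hsq : Tendsto (fun t : ℝ => Γ i ((t ^ ((3:ℝ)/2) : ℝ) • T t x)) atTop (𝓝 0) := by
    apply squeeze_zero' (g := fun t : ℝ => D * t ^ (-(1/2) : ℝ))
    · exact Eventually.of_forall fun t => apply_nonneg _ _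
    · filter_upwards [eventually_ge_atTop (1:ℝ)] with t ht1
      have ht0 : (0:ℝ) < t := by linarith
      rw [map_smul_eq_mul, Real.norm_eq_abs, abs_of_nonneg (Real.rpow_nonneg ht0.le _)]
      have hb := hD t ht0.le
      have hG0 : 0 ≤ Γ i (T t x) := apply_nonneg _ _
      have h2 : t ^ (2:ℕ) * Γ i (T t x) ≤ D := by nlinarith
      have heq : t ^ ((3:ℝ)/2) = t ^ (-(1/2):ℝ) * t ^ (2:ℕ) := by
        rw [← Real.rpow_natCast t 2, ← Real.rpow_add ht0]
        norm_num
      calc t ^ ((3:ℝ)/2) * Γ i (T t x)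
          = t ^ (-(1/2):ℝ) * (t ^ (2:ℕ) * Γ i (T t x)) := by rw [heq]; ring
      _ ≤ t ^ (-(1/2):ℝ) * D := mul_le_mul_of_nonneg_left h2 (Real.rpow_nonneg ht0.le _)
      _ = D * t ^ (-(1/2):ℝ) := mul_comm _ _
    · have := (tendsto_rpow_neg_atTop (y := 1/2) (by norm_num)).const_mul D
      simpa using this
  have := hsq.eventually_lt_const hε
  simpa [sub_zero] using this
end

section
/- Let X be a Mackey complete Hausdorff locally convex space whose topology is induced by a family Γ_X of continuous seminorms, and let (T(t))_{t≥0} be a C₀-semigroup on X. Then the following are equivalent: (i) for every q ∈ Γ_X there exists ω > 0 such that for every bounded set B ⊆ X one has lim_{t→∞} sup_{x∈B} q(e^{ωt} T(t)x) = 0 (pseudo uniform exponential stability); (ii) for every q ∈ Γ_X there exists ω > 0 such that for every x ∈ X one has lim_{t→∞} q(e^{ωt} T(t)x) = 0. -/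
open Filter Topology Bornology Pointwise

lemma aux_sum_mem_smul {X : Type*} [AddCommGroup X] [Module ℝ X]
    {S : Set X} (hS : Convex ℝ S) (h0 : (0:X) ∈ S)
    (F : Finset ℕ) (c : ℕ → ℝ) (v : ℕ → X) (hc : ∀ j ∈ F, 0 ≤ c j)
    (hv : ∀ j ∈ F, v j ∈ S) {β : ℝ} (hβ : 0 < β) (hsum : (∑ j ∈ F, c j) ≤ β) :
    (∑ j ∈ F, c j • v j) ∈ β • S := by
  obtain ⟨m, hm⟩ := Infinite.exists_notMem_finset F
  rw [Set.mem_smul_set_iff_inv_smul_mem₀ (ne_of_gt hβ)]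
  set w : ℕ → ℝ := fun j => if j = m then 1 - β⁻¹ * ∑ j ∈ F, c j else β⁻¹ * c j with hw
  set p : ℕ → X := fun j => if j = m then 0 else v j with hp
  have h1 : β⁻¹ • ∑ j ∈ F, c j • v j = ∑ j ∈ insert m F, w j • p j := by
    rw [Finset.sum_insert hm]
    have hpm : p m = 0 := by rw [hp]; simp
    rw [hpm, smul_zero, zero_add, Finset.smul_sum]
    refine Finset.sum_congr rfl fun j hj => ?_
    have hjm : j ≠ m := fun h => hm (h ▸ hj)
    rw [hw, hp]
    simp only [if_neg hjm, smul_smul]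
  rw [h1]
  refine hS.sum_mem (fun j hj => ?_) ?_ (fun j hj => ?_)
  · by_cases h : j = m
    · simp only [hw, h, if_pos rfl, sub_nonneg]
      rw [inv_mul_le_iff₀ hβ]
      linarith
    · have hjF : j ∈ F := Finset.mem_insert.mp hj |>.resolve_left h
      simp only [hw, if_neg h]
      exact mul_nonneg (by positivity) (hc j hjF)
  · rw [Finset.sum_insert hm]
    have : ∑ j ∈ F, w j = β⁻¹ * ∑ j ∈ F, c j := by
      rw [Finset.mul_sum]
      refine Finset.sum_congr rfl fun j hj => ?_
      have hjm : j ≠ m := fun hh => hm (hh ▸ hj)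
      rw [hw]; simp only [if_neg hjm]
    rw [this, hw]; simp
  · by_cases h : j = m
    · simp only [hp, h, if_pos rfl]; exact h0
    · have hjF : j ∈ F := Finset.mem_insert.mp hj |>.resolve_left h
      simp only [hp, if_neg h]; exact hv j hjF

lemma seminorm_sum_le {X : Type*} [AddCommGroup X] [Module ℝ X]
    (p : Seminorm ℝ X) (F : Finset ℕ) (f : ℕ → X) :
    p (∑ j ∈ F, f j) ≤ ∑ j ∈ F, p (f j) := by
  classical
  induction F using Finset.induction_on with
  | empty => simp
  | insert _ _ ha ih =>
    rw [Finset.sum_insert ha, Finset.sum_insert ha]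
    exact le_trans (map_add_le_add p _ _) (by linarith)

noncomputable def ghSeq {X : Type*} [AddCommGroup X] [Module ℝ X]
    (K : ℝ → ℝ) (P : X → ℝ) (pick : ℝ → ℝ × X) : ℕ → ℝ × X × ℝ
  | n =>
    let f : ℕ → ℝ × X × ℝ := fun j => if h : j < n then ghSeq K P pick j else (0, 0, 1)
    let c : ℝ := (2:ℝ)⁻¹ ^ n * ∏ j ∈ Finset.range n, (1 + K (f j).1)⁻¹
    let M : ℝ := (n + 2 + P (∑ j ∈ Finset.range n, (f j).2.2 • (f j).2.1)) / c
    ((pick M).1, (pick M).2, c)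
  decreasing_by exact h

noncomputable def ghc {X : Type*} [AddCommGroup X] [Module ℝ X]
    (K : ℝ → ℝ) (P : X → ℝ) (pick : ℝ → ℝ × X) (n : ℕ) : ℝ :=
  (2:ℝ)⁻¹ ^ n * ∏ j ∈ Finset.range n, (1 + K (ghSeq K P pick j).1)⁻¹

noncomputable def ghs {X : Type*} [AddCommGroup X] [Module ℝ X]
    (K : ℝ → ℝ) (P : X → ℝ) (pick : ℝ → ℝ × X) (n : ℕ) : X :=
  ∑ j ∈ Finset.range n, (ghSeq K P pick j).2.2 • (ghSeq K P pick j).2.1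

noncomputable def ghM {X : Type*} [AddCommGroup X] [Module ℝ X]
    (K : ℝ → ℝ) (P : X → ℝ) (pick : ℝ → ℝ × X) (n : ℕ) : ℝ :=
  ((n : ℝ) + 2 + P (ghs K P pick n)) / ghc K P pick n

lemma ghSeq_eq {X : Type*} [AddCommGroup X] [Module ℝ X]
    (K : ℝ → ℝ) (P : X → ℝ) (pick : ℝ → ℝ × X) (n : ℕ) :
    ghSeq K P pick n = ((pick (ghM K P pick n)).1, (pick (ghM K P pick n)).2, ghc K P pick n) := by
  rw [ghSeq]
  have hc : ((2:ℝ)⁻¹ ^ n * ∏ j ∈ Finset.range n,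
      (1 + K ((if h : j < n then ghSeq K P pick j else (0, 0, 1)).1))⁻¹) = ghc K P pick n := by
    rw [ghc]
    congr 1
    refine Finset.prod_congr rfl fun j hj => ?_
    rw [dif_pos (Finset.mem_range.mp hj)]
  have hs : (∑ j ∈ Finset.range n, (if h : j < n then ghSeq K P pick j else (0, 0, 1)).2.2 •
      (if h : j < n then ghSeq K P pick j else (0, 0, 1)).2.1) = ghs K P pick n := by
    rw [ghs]
    refine Finset.sum_congr rfl fun j hj => ?_
    rw [dif_pos (Finset.mem_range.mp hj)]
  simp only [hc, hs, ghM]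

/-- For a Mackey complete Hausdorff locally convex space `X` and a `C₀`-semigroup
on `X`, pseudo uniform exponential stability (i) is equivalent to condition (ii). -/
theorem statement7 {X : Type*} [AddCommGroup X] [Module ℝ X] [TopologicalSpace X]
    [T2Space X] (hX : MackeyComplete X)
    {ι : Type*} [Nonempty ι] (Γ : ι → Seminorm ℝ X) (hΓ : WithSeminorms Γ)
    (T : ℝ → X →L[ℝ] X)
    (hT0 : T 0 = ContinuousLinearMap.id ℝ X)
    (hTsg : ∀ s t : ℝ, 0 ≤ s → 0 ≤ t → T (s + t) = (T s).comp (T t))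
    (hTc : ∀ x : X, ContinuousOn (fun t : ℝ => T t x) (Set.Ici 0)) :
    (∀ i : ι, ∃ ω > (0:ℝ), ∀ B : Set X, IsVonNBounded ℝ B → ∀ ε > (0:ℝ),
        ∃ t₀ : ℝ, ∀ t ≥ t₀, ∀ x ∈ B, Γ i (Real.exp (ω * t) • T t x) ≤ ε) ↔
    (∀ i : ι, ∃ ω > (0:ℝ), ∀ x : X,
        Tendsto (fun t : ℝ => Γ i (Real.exp (ω * t) • T t x)) atTop (nhds 0)) := by
  haveI : IsTopologicalAddGroup X := hΓ.topologicalAddGroup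
  haveI : ContinuousSMul ℝ X := hΓ.continuousSMul
  constructor
  · -- (i) → (ii)
    intro h i
    obtain ⟨ω, hω, hB⟩ := h i
    refine ⟨ω, hω, fun x => ?_⟩
    rw [Metric.tendsto_atTop]
    intro ε hε
    obtain ⟨t₀, ht₀⟩ := hB {x} (isVonNBounded_singleton x) (ε/2) (by positivity)
    refine ⟨t₀, fun t ht => ?_⟩
    rw [Real.dist_eq, sub_zero, abs_of_nonneg (apply_nonneg _ _)]
    exact lt_of_le_of_lt (ht₀ t ht x rfl) (half_lt_self hε)
  · -- (ii) → (i)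
    intro h i
    obtain ⟨ω, hω, hpt⟩ := h i
    have hQ : ∀ (a t : ℝ) (x : X), Γ i (Real.exp a • T t x) = Real.exp a * Γ i (T t x) := by
      intro a t x
      rw [map_smul_eq_mul, Real.norm_eq_abs, abs_of_pos (Real.exp_pos _)]
    -- Step A : pointwise bound on each orbit
    have stepA : ∀ x : X, ∃ M : ℝ, ∀ t, 0 ≤ t → Γ i (Real.exp (ω * t) • T t x) ≤ M := by
      intro x
      have h1 : ∀ᶠ t in atTop, Γ i (Real.exp (ω * t) • T t x) < 1 :=
        (hpt x).eventually_lt_const one_pos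
      rw [eventually_atTop] at h1
      obtain ⟨t₀, ht₀⟩ := h1
      set t₁ : ℝ := max t₀ 0 with ht₁def
      have hne : (Set.Icc (0:ℝ) t₁).Nonempty := ⟨0, le_refl 0, le_max_right _ _⟩
      have hcont : ContinuousOn (fun t : ℝ => Γ i (Real.exp (ω * t) • T t x)) (Set.Icc 0 t₁) := by
        apply (hΓ.continuous_seminorm i).comp_continuousOn
        exact ((Real.continuous_exp.comp (continuous_const.mul continuous_id)).continuousOn).smul
          ((hTc x).mono (fun u hu => hu.1))
      obtain ⟨tm, _, hmax'⟩ := isCompact_Icc.exists_isMaxOn hne hcont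
      have hmax := isMaxOn_iff.mp hmax'
      refine ⟨max (Γ i (Real.exp (ω * tm) • T tm x)) 1, fun t ht => ?_⟩
      by_cases htt : t ≤ t₁
      · exact le_trans (hmax t ⟨ht, htt⟩) (le_max_left _ _)
      · have h2 : t₀ ≤ t := le_of_lt (lt_of_le_of_lt (le_max_left _ _) (not_le.mp htt))
        exact le_trans (le_of_lt (ht₀ t h2)) (le_max_right _ _)
    choose P hP using stepA
    -- Step B : uniform bound on bounded sets
    have key : ∀ B : Set X, IsVonNBounded ℝ B →
        ∃ M : ℝ, ∀ t, 0 ≤ t → ∀ x ∈ B, Γ i (Real.exp (ω * t) • T t x) ≤ M := by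
      intro B hB
      by_contra hcon
      push_neg at hcon
      have hpick : ∀ M : ℝ, ∃ p : ℝ × X, 0 ≤ p.1 ∧ p.2 ∈ B ∧
          M < Γ i (Real.exp (ω * p.1) • T p.1 p.2) := by
        intro M
        obtain ⟨t, ht, x, hxB, hx⟩ := hcon M
        exact ⟨(t, x), ht, hxB, hx⟩
      choose pick hpick1 hpick2 hpick3 using hpick
      have hKex : ∀ t : ℝ, ∃ r : ℝ, 0 ≤ r ∧ ∀ x ∈ B, Real.exp (ω*t) * Γ i (T t x) ≤ r := by
        intro t
        obtain ⟨r, hr, hrB⟩ := (hΓ.isVonNBounded_iff_seminorm_bounded.mp (hB.image (T t))) i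
        refine ⟨Real.exp (ω*t) * r, by positivity, fun x hx => ?_⟩
        exact mul_le_mul_of_nonneg_left (le_of_lt (hrB (T t x) ⟨x, hx, rfl⟩))
          (le_of_lt (Real.exp_pos _))
      choose K hK0 hK using hKex
      set tt : ℕ → ℝ := fun n => (ghSeq K P pick n).1 with htt
      set xx : ℕ → X := fun n => (ghSeq K P pick n).2.1 with hxx
      set cc : ℕ → ℝ := fun n => (ghSeq K P pick n).2.2 with hcc
      set ss : ℕ → X := fun n => ∑ j ∈ Finset.range n, cc j • xx j with hss
      have httn : ∀ n, tt n = (pick (ghM K P pick n)).1 := fun n => by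
        simp only [htt]; rw [ghSeq_eq]
      have hxxn : ∀ n, xx n = (pick (ghM K P pick n)).2 := fun n => by
        simp only [hxx]; rw [ghSeq_eq]
      have hccn : ∀ n, cc n = (2:ℝ)⁻¹ ^ n * ∏ j ∈ Finset.range n, (1 + K (tt j))⁻¹ := fun n => by
        simp only [hcc, htt]; rw [ghSeq_eq]; rfl
      have hssn : ∀ n, ghs K P pick n = ss n := fun n => by
        simp only [hss, hcc, hxx, ghs]
      have hMn : ∀ n, ghM K P pick n = ((n:ℝ) + 2 + P (ss n)) / cc n := fun n => by
        rw [ghM, hssn]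
        congr 1
        simp only [hcc]; rw [ghSeq_eq]
      have hfac_pos : ∀ j, (0:ℝ) < (1 + K (tt j))⁻¹ := fun j => by
        have := hK0 (tt j); positivity
      have hfac_le : ∀ j, (1 + K (tt j))⁻¹ ≤ 1 := fun j => by
        have := hK0 (tt j)
        rw [inv_le_one_iff₀]
        right; linarith
      have hcpos : ∀ n, 0 < cc n := fun n => by
        rw [hccn]
        exact mul_pos (by positivity) (Finset.prod_pos fun j _ => hfac_pos j)
      have hcle : ∀ n, cc n ≤ (2:ℝ)⁻¹ ^ n := fun n => by
        rw [hccn]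
        calc (2:ℝ)⁻¹ ^ n * ∏ j ∈ Finset.range n, (1 + K (tt j))⁻¹
            ≤ (2:ℝ)⁻¹ ^ n * 1 := by
              refine mul_le_mul_of_nonneg_left ?_ (by positivity)
              exact Finset.prod_le_one (fun j _ => le_of_lt (hfac_pos j)) (fun j _ => hfac_le j)
          _ = (2:ℝ)⁻¹ ^ n := mul_one _
      have hcle' : ∀ n j, n < j → cc j ≤ (2:ℝ)⁻¹ ^ j * (1 + K (tt n))⁻¹ := by
        intro n j hnj
        rw [hccn]
        refine mul_le_mul_of_nonneg_left ?_ (by positivity)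
        have hmem : n ∈ Finset.range j := Finset.mem_range.mpr hnj
        rw [← Finset.mul_prod_erase _ _ hmem]
        calc (1 + K (tt n))⁻¹ * ∏ x ∈ (Finset.range j).erase n, (1 + K (tt x))⁻¹
            ≤ (1 + K (tt n))⁻¹ * 1 := by
              refine mul_le_mul_of_nonneg_left ?_ (le_of_lt (hfac_pos n))
              exact Finset.prod_le_one (fun k _ => le_of_lt (hfac_pos k)) (fun k _ => hfac_le k)
          _ = (1 + K (tt n))⁻¹ := mul_one _
      have htpos : ∀ n, 0 ≤ tt n := fun n => by rw [httn]; exact hpick1 _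
      have hxB : ∀ n, xx n ∈ B := fun n => by rw [hxxn]; exact hpick2 _
      have hlow : ∀ n : ℕ, ((n:ℝ) + 2 + P (ss n)) / cc n
          < Γ i (Real.exp (ω * tt n) • T (tt n) (xx n)) := by
        intro n
        have h1 := hpick3 (ghM K P pick n)
        rw [← httn, ← hxxn, hMn] at h1
        exact h1
      -- the Mackey Cauchy argument
      set S : Set X := convexHull ℝ (insert 0 (B ∪ -B)) with hSdef
      have hS_conv : Convex ℝ S := convex_convexHull ℝ _
      have h0S : (0:X) ∈ S := subset_convexHull ℝ _ (Set.mem_insert _ _)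
      have hxS : ∀ n, xx n ∈ S := fun n =>
        subset_convexHull ℝ _ (Set.mem_insert_of_mem _ (Set.mem_union_left _ (hxB n)))
      have hnegxS : ∀ n, -xx n ∈ S := fun n => by
        refine subset_convexHull ℝ _ (Set.mem_insert_of_mem _ (Set.mem_union_right _ ?_))
        rw [Set.mem_neg, neg_neg]
        exact hxB n
      have hS_bdd : IsVonNBounded ℝ S := by
        rw [hΓ.isVonNBounded_iff_seminorm_bounded]
        intro k
        obtain ⟨r, hr, hrB⟩ := hΓ.isVonNBounded_iff_seminorm_bounded.mp hB k
        refine ⟨r, hr, fun y hy => ?_⟩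
        have hsub : insert 0 (B ∪ -B) ⊆ (Γ k).ball 0 r := by
          intro u hu
          rw [Seminorm.mem_ball_zero]
          rcases hu with rfl | hu
          · simpa using hr
          · rcases hu with hu | hu
            · exact hrB u hu
            · rw [Set.mem_neg] at hu
              rw [← map_neg_eq_map]
              exact hrB _ hu
        have hball := convexHull_min hsub ((Γ k).convex_ball 0 r)
        have hy2 := hball hy
        rwa [Seminorm.mem_ball_zero] at hy2
      have hgeo : ∀ k n : ℕ, (∑ j ∈ Finset.Ico k n, ((2:ℝ)⁻¹) ^ j) ≤ 2 * (2:ℝ)⁻¹ ^ k := by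
        intro k n
        rcases le_or_gt k n with hkn | hkn
        · rw [Finset.sum_Ico_eq_sum_range]
          calc ∑ j ∈ Finset.range (n-k), ((2:ℝ)⁻¹) ^ (k+j)
              = (2:ℝ)⁻¹ ^ k * ∑ j ∈ Finset.range (n-k), (2:ℝ)⁻¹ ^ j := by
                rw [Finset.mul_sum]
                exact Finset.sum_congr rfl fun j _ => pow_add _ _ _
            _ ≤ (2:ℝ)⁻¹ ^ k * 2 := by
                refine mul_le_mul_of_nonneg_left ?_ (by positivity)
                have := sum_geometric_two_le (n-k)
                simpa [one_div] using this
            _ = 2 * (2:ℝ)⁻¹ ^ k := mul_comm _ _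
        · rw [Finset.Ico_eq_empty (by omega)]
          simp only [Finset.sum_empty]
          positivity
      have hIco : ∀ (v : ℕ → X), (∀ j, v j ∈ S) → ∀ k n : ℕ,
          (∑ j ∈ Finset.Ico k n, cc j • v j) ∈ (2 * (2:ℝ)⁻¹ ^ k) • S := by
        intro v hv k n
        refine aux_sum_mem_smul hS_conv h0S _ _ _ (fun j _ => le_of_lt (hcpos j))
          (fun j _ => hv j) (by positivity) ?_
        calc ∑ j ∈ Finset.Ico k n, cc j ≤ ∑ j ∈ Finset.Ico k n, (2:ℝ)⁻¹ ^ j :=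
              Finset.sum_le_sum (fun j _ => hcle j)
          _ ≤ 2 * (2:ℝ)⁻¹ ^ k := hgeo k n
      have hmem : ∀ n k : ℕ, ss n - ss k ∈ (2 * (2:ℝ)⁻¹ ^ (min n k)) • S := by
        intro n k
        rcases le_total k n with hkn | hnk
        · rw [min_eq_right hkn]
          have heq : ss n - ss k = ∑ j ∈ Finset.Ico k n, cc j • xx j :=
            (Finset.sum_Ico_eq_sub _ hkn).symm
          rw [heq]
          exact hIco xx hxS k n
        · rw [min_eq_left hnk]
          have heq : ss n - ss k = ∑ j ∈ Finset.Ico n k, cc j • (-xx j) := by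
            have h1 : ss k - ss n = ∑ j ∈ Finset.Ico n k, cc j • xx j :=
              (Finset.sum_Ico_eq_sub _ hnk).symm
            have h2 : ss n - ss k = -(ss k - ss n) := by abel
            rw [h2, h1, ← Finset.sum_neg_distrib]
            exact Finset.sum_congr rfl fun j _ => (smul_neg _ _).symm
          rw [heq]
          exact hIco (fun j => -xx j) hnegxS n k
      have hbt : Tendsto (fun p : ℕ × ℕ => 2 * (2:ℝ)⁻¹ ^ (min p.1 p.2)) atTop (nhds 0) := by
        have h1 : Tendsto (fun p : ℕ × ℕ => min p.1 p.2) atTop atTop :=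
          tendsto_atTop_atTop.mpr fun b => ⟨(b, b), fun a ha => le_min ha.1 ha.2⟩
        have h2 : Tendsto (fun m : ℕ => (2:ℝ)⁻¹ ^ m) atTop (nhds 0) :=
          tendsto_pow_atTop_nhds_zero_of_lt_one (by norm_num) (by norm_num)
        have h3 := (h2.comp h1).const_mul (2:ℝ)
        simpa using h3
      obtain ⟨z, hz⟩ := hX ss ⟨S, fun n k => 2 * (2:ℝ)⁻¹ ^ (min n k), hS_bdd, hbt, hmem⟩
      -- the contradiction
      have hest : ∀ n : ℕ, (n:ℝ) + 1 ≤ Γ i (Real.exp (ω * tt n) • T (tt n) z) := by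
        intro n
        set q : Seminorm ℝ X := (Γ i).comp (Real.exp (ω * tt n) • ((T (tt n)) : X →ₗ[ℝ] X))
          with hqdef
        have hq_apply : ∀ y : X, q y = Γ i (Real.exp (ω * tt n) • T (tt n) y) := fun y => rfl
        have hq_cont : Continuous fun y : X => q y := by
          simp only [hq_apply]
          exact (hΓ.continuous_seminorm i).comp ((T (tt n)).continuous.const_smul _)
        have hsm : ∀ m : ℕ, n + 1 ≤ m → (n:ℝ) + 1 ≤ q (ss m) := by
          intro m hm
          have hsplit : ss m - ss (n+1) = ∑ j ∈ Finset.Ico (n+1) m, cc j • xx j :=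
            (Finset.sum_Ico_eq_sub _ hm).symm
          have hsucc : ss (n+1) = ss n + cc n • xx n := Finset.sum_range_succ _ n
          have e2 : (n:ℝ) + 2 + P (ss n) < q (cc n • xx n) := by
            have h1 := hlow n
            rw [div_lt_iff₀ (hcpos n)] at h1
            have h2 : q (cc n • xx n) = cc n * q (xx n) := by
              rw [map_smul_eq_mul, Real.norm_eq_abs, abs_of_pos (hcpos n)]
            rw [h2, hq_apply, mul_comm]
            exact h1
          have e3 : q (ss n) ≤ P (ss n) := by
            rw [hq_apply]
            exact hP (ss n) (tt n) (htpos n)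
          have e4 : q (∑ j ∈ Finset.Ico (n+1) m, cc j • xx j) ≤ 1 := by
            have hqx : ∀ j : ℕ, n < j →
                q (cc j • xx j) ≤ (2:ℝ)⁻¹ ^ j * ((1 + K (tt n))⁻¹ * K (tt n)) := by
              intro j hj
              have h2 : q (cc j • xx j) = cc j * q (xx j) := by
                rw [map_smul_eq_mul, Real.norm_eq_abs, abs_of_pos (hcpos j)]
              have h3 : q (xx j) ≤ K (tt n) := by
                rw [hq_apply, hQ]
                exact hK (tt n) (xx j) (hxB j)
              rw [h2]
              calc cc j * q (xx j) ≤ ((2:ℝ)⁻¹ ^ j * (1 + K (tt n))⁻¹) * K (tt n) :=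
                    mul_le_mul (hcle' n j hj) h3 (apply_nonneg q _) (mul_nonneg (by positivity) (le_of_lt (hfac_pos n)))
                _ = (2:ℝ)⁻¹ ^ j * ((1 + K (tt n))⁻¹ * K (tt n)) := by ring
            have hK0n := hK0 (tt n)
            calc q (∑ j ∈ Finset.Ico (n+1) m, cc j • xx j)
                ≤ ∑ j ∈ Finset.Ico (n+1) m, q (cc j • xx j) := seminorm_sum_le q _ _
              _ ≤ ∑ j ∈ Finset.Ico (n+1) m, (2:ℝ)⁻¹ ^ j * ((1 + K (tt n))⁻¹ * K (tt n)) :=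
                  Finset.sum_le_sum fun j hj => hqx j (by
                    have := (Finset.mem_Ico.mp hj).1; omega)
              _ = (∑ j ∈ Finset.Ico (n+1) m, (2:ℝ)⁻¹ ^ j) * ((1 + K (tt n))⁻¹ * K (tt n)) := by
                  rw [Finset.sum_mul]
              _ ≤ (2 * (2:ℝ)⁻¹ ^ (n+1)) * ((1 + K (tt n))⁻¹ * K (tt n)) := by
                  refine mul_le_mul_of_nonneg_right (hgeo (n+1) m) ?_
                  positivity
              _ ≤ 1 := by
                  have h5 : (1 + K (tt n))⁻¹ * K (tt n) ≤ 1 := by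
                    rw [inv_mul_le_iff₀ (by linarith : (0:ℝ) < 1 + K (tt n))]
                    linarith
                  have h6 : 2 * (2:ℝ)⁻¹ ^ (n+1) ≤ 1 := by
                    rw [pow_succ]
                    have h7 : (2:ℝ)⁻¹ ^ n ≤ 1 := pow_le_one₀ (by norm_num) (by norm_num)
                    nlinarith
                  have h8 : (0:ℝ) ≤ (1 + K (tt n))⁻¹ * K (tt n) := by positivity
                  nlinarith
          have e5 : q (cc n • xx n) ≤ q (ss m) + q (ss n)
              + q (∑ j ∈ Finset.Ico (n+1) m, cc j • xx j) := by
            have heq : cc n • xx n = ss m - ss n - (∑ j ∈ Finset.Ico (n+1) m, cc j • xx j) := by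
              rw [← hsplit, hsucc]
              abel
            rw [heq]
            calc q (ss m - ss n - ∑ j ∈ Finset.Ico (n+1) m, cc j • xx j)
                ≤ q (ss m - ss n) + q (∑ j ∈ Finset.Ico (n+1) m, cc j • xx j) :=
                  map_sub_le_add q _ _
              _ ≤ q (ss m) + q (ss n) + q (∑ j ∈ Finset.Ico (n+1) m, cc j • xx j) := by
                  have h9 := map_sub_le_add q (ss m) (ss n)
                  linarith
          linarith
        have hlim : Tendsto (fun m => q (ss m)) atTop (nhds (q z)) :=
          (hq_cont.tendsto z).comp hz
        have hfin2 := ge_of_tendsto hlim (eventually_atTop.mpr ⟨n+1, hsm⟩)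
        exact hq_apply z ▸ hfin2
      obtain ⟨N, hN⟩ : ∃ N : ℕ, P z < (N:ℝ) + 1 :=
        ⟨⌈P z⌉₊, lt_of_le_of_lt (Nat.le_ceil _) (lt_add_one _)⟩
      have hfin := le_trans (hest N) (hP z (tt N) (htpos N))
      linarith
    -- conclusion
    refine ⟨ω/2, half_pos hω, fun B hB ε hε => ?_⟩
    obtain ⟨M, hM⟩ := key B hB
    set M' : ℝ := max M 1 with hM'def
    have hM'pos : 0 < M' := lt_of_lt_of_le one_pos (le_max_right _ _)
    refine ⟨max 0 (2/ω * Real.log (M'/ε)), fun u hu x hx => ?_⟩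
    have hu0 : 0 ≤ u := le_trans (le_max_left _ _) hu
    have h1 : Γ i (Real.exp (ω/2*u) • T u x)
        = Real.exp (-(ω/2)*u) * (Real.exp (ω*u) * Γ i (T u x)) := by
      rw [hQ, ← mul_assoc, ← Real.exp_add]
      ring_nf
    have h2 : Real.exp (ω*u) * Γ i (T u x) ≤ M' := by
      rw [← hQ]
      exact le_trans (hM u hu0 x hx) (le_max_left _ _)
    rw [h1]
    have h3 : Real.exp (-(ω/2)*u) * (Real.exp (ω*u) * Γ i (T u x))
        ≤ Real.exp (-(ω/2)*u) * M' :=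
      mul_le_mul_of_nonneg_left h2 (le_of_lt (Real.exp_pos _))
    refine le_trans h3 ?_
    -- exp(-(ω/2)u) * M' ≤ ε
    have hlog : 2/ω * Real.log (M'/ε) ≤ u := le_trans (le_max_right _ _) hu
    have hω2 : (0:ℝ) < ω/2 := half_pos hω
    have h4 : Real.log (M'/ε) ≤ ω/2 * u := by
      rw [div_mul_eq_mul_div, div_le_iff₀ hω] at hlog
      nlinarith
    have h5 : M'/ε ≤ Real.exp (ω/2 * u) := by
      calc M'/ε = Real.exp (Real.log (M'/ε)) := (Real.exp_log (by positivity)).symm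
        _ ≤ Real.exp (ω/2*u) := Real.exp_le_exp.mpr h4
    rw [neg_mul, Real.exp_neg]
    rw [inv_mul_le_iff₀ (Real.exp_pos _)]
    calc M' = (M'/ε) * ε := by field_simp
      _ ≤ Real.exp (ω/2*u) * ε := mul_le_mul_of_nonneg_right h5 (le_of_lt hε)
      _ = Real.exp (ω/2*u) * ε := rfl
end

section
/- Let X be a Mackey complete Hausdorff locally convex space whose topology is induced by a family Γ_X of continuous seminorms, and let (T(t))_{t≥0} be a C₀-semigroup on X. Then the following are equivalent: (iii) for every q ∈ Γ_X and every x ∈ X there exists ω > 0 such that lim_{t→∞} q(e^{ωt} T(t)x) = 0 (pseudo strong exponential stability); (iv) for every q ∈ Γ_X and every bounded set B ⊆ X there exists ω > 0 such that lim_{t→∞} sup_{x∈B} q(e^{ωt} T(t)x) = 0. -/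
open Filter Topology Bornology Pointwise
set_option maxHeartbeats 1000000

/-- A continuous seminorm is bounded on a von Neumann bounded set. -/
lemma aux_bound {X : Type*} [AddCommGroup X] [Module ℝ X] [TopologicalSpace X]
    {B : Set X} (hB : IsVonNBounded ℝ B) (p : Seminorm ℝ X) (hp : Continuous p) :
    ∃ C > 0, ∀ x ∈ B, p x ≤ C := by
  have hU : p ⁻¹' Set.Iio 1 ∈ nhds (0 : X) := by
    refine (isOpen_Iio.preimage hp).mem_nhds ?_
    simp [Set.mem_preimage, map_zero]
  obtain ⟨a, ha⟩ := (hB hU).exists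
  refine ⟨‖a‖ + 1, by positivity, fun x hx => ?_⟩
  obtain ⟨y, hy, rfl⟩ := ha hx
  have : p y < 1 := hy
  calc p (a • y) = ‖a‖ * p y := map_smul_eq_mul p a y
  _ ≤ ‖a‖ * 1 := by nlinarith [norm_nonneg a, apply_nonneg p y]
  _ ≤ ‖a‖ + 1 := by nlinarith [norm_nonneg a]

lemma aux_sum {X : Type*} [AddCommGroup X] [Module ℝ X] (p : Seminorm ℝ X)
    (s : Finset ℕ) (f : ℕ → X) : p (∑ j ∈ s, f j) ≤ ∑ j ∈ s, p (f j) := by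
  classical
  induction s using Finset.induction_on with
  | empty => simp
  | insert _ _ h ih =>
      rw [Finset.sum_insert h, Finset.sum_insert h]
      exact le_trans (map_add_le_add p _ _) (by linarith)

lemma aux_geo (m M : ℕ) : (∑ j ∈ Finset.Ico m M, ((2:ℝ)⁻¹)^j) ≤ 2 * ((2:ℝ)⁻¹)^m := by
  rw [Finset.sum_Ico_eq_sum_range]
  simp_rw [pow_add]
  rw [← Finset.mul_sum]
  have h2 : (∑ i ∈ Finset.range (M - m), ((2:ℝ)⁻¹)^i) ≤ 2 := by
    simpa using sum_geometric_two_le (M - m)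
  have : ((2:ℝ)⁻¹)^m ≥ 0 := by positivity
  nlinarith

/-- Simple `Nat.rec` sequence builder. -/
def natSeq {α : Type*} (a : α) (f : ℕ → α → α) : ℕ → α
  | 0 => a
  | n+1 => f n (natSeq a f n)

/-- For a Mackey complete Hausdorff locally convex space `X` and a `C₀`-semigroup
on `X`, pseudo strong exponential stability (iii) is equivalent to condition (iv). -/
theorem statement8 {X : Type*} [AddCommGroup X] [Module ℝ X] [TopologicalSpace X]
    [T2Space X] (hX : MackeyComplete X)
    {ι : Type*} [Nonempty ι] (Γ : ι → Seminorm ℝ X) (hΓ : WithSeminorms Γ)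
    (T : ℝ → X →L[ℝ] X)
    (hT0 : T 0 = ContinuousLinearMap.id ℝ X)
    (hTsg : ∀ s t : ℝ, 0 ≤ s → 0 ≤ t → T (s + t) = (T s).comp (T t))
    (hTc : ∀ x : X, ContinuousOn (fun t : ℝ => T t x) (Set.Ici 0)) :
    (∀ i : ι, ∀ x : X, ∃ ω > (0:ℝ),
        Tendsto (fun t : ℝ => Γ i (Real.exp (ω * t) • T t x)) atTop (nhds 0)) ↔
    (∀ i : ι, ∀ B : Set X, IsVonNBounded ℝ B → ∃ ω > (0:ℝ), ∀ ε > (0:ℝ),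
        ∃ t₀ : ℝ, ∀ t ≥ t₀, ∀ x ∈ B, Γ i (Real.exp (ω * t) • T t x) ≤ ε) := by
  haveI := hΓ.continuousSMul
  haveI := hΓ.topologicalAddGroup
  constructor
  · -- hard direction (iii) → (iv)
    intro hiii i B hB
    by_contra hcon
    push_neg at hcon
    have hcont : ∀ i' : ι, Continuous (Γ i') := fun i' => hΓ.continuous_seminorm i'
    obtain ⟨ε₁, hε₁, h1⟩ := hcon 1 one_pos
    obtain ⟨t₁', ht₁', x₀, hx₀B, hx₀⟩ := h1 0
    -- choice of decay rates from (iii)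
    have L1 : ∀ x : X, ∃ ω, 0 < ω ∧ ∃ a : ℝ, ∀ t ≥ a, Γ i (Real.exp (ω * t) • T t x) ≤ 1 := by
      intro x
      obtain ⟨ω, hω, htend⟩ := hiii i x
      refine ⟨ω, hω, ?_⟩
      have h2 : ∀ᶠ t in atTop, Γ i (Real.exp (ω * t) • T t x) < 1 := htend (Iio_mem_nhds one_pos)
      rw [eventually_atTop] at h2
      obtain ⟨a, ha⟩ := h2
      exact ⟨a, fun t ht => (ha t ht).le⟩
    choose W hWpos T₁ hT₁ using L1
    -- choice of failure witnesses from ¬(iv)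
    have L2 : ∀ ω : ℝ, ∃ ε, 0 < ε ∧ ∀ t₀ : ℝ, ∃ t, t₀ ≤ t ∧ ∃ x, x ∈ B ∧
        (0 < ω → ε < Γ i (Real.exp (ω * t) • T t x)) := by
      intro ω
      by_cases hω : 0 < ω
      · obtain ⟨ε, hε, hf⟩ := hcon ω hω
        refine ⟨ε, hε, fun t₀ => ?_⟩
        obtain ⟨t, ht, x, hxB, hx⟩ := hf t₀
        exact ⟨t, ht, x, hxB, fun _ => hx⟩
      · exact ⟨1, one_pos, fun t₀ => ⟨t₀, le_refl _, x₀, hx₀B, fun h => absurd h hω⟩⟩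
    choose E hEpos tc htc xc hxcB hxc using L2
    -- bound of Γ i ∘ T t on B
    have L3 : ∀ t : ℝ, ∃ C > 0, ∀ x ∈ B, Γ i (T t x) ≤ C := by
      intro t
      exact aux_bound hB ((Γ i).comp (T t : X →ₗ[ℝ] X))
        (by exact (hcont i).comp (T t).continuous)
    choose Cb hCbpos hCb using L3
    -- bound of every seminorm on B
    have L4 : ∀ i' : ι, ∃ C > 0, ∀ x ∈ B, Γ i' x ≤ C :=
      fun i' => aux_bound hB (Γ i') (hcont i')
    choose Call hCallpos hCall using L4
    -- the recursive construction
    set ωf : X → ℕ → ℝ := fun y n => min (1/((n:ℝ)+1)) (W y) / 2 with hωf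
    set cf : ℝ → ℕ → ℝ := fun δ n => (2:ℝ)⁻¹^n * δ with hcf
    set t0f : X → ℝ → ℕ → ℝ := fun y δ n =>
      max (max (n:ℝ) (T₁ y)) (Real.log (((n:ℝ)+3)/(E (ωf y n) * cf δ n)) / (ωf y n)) with ht0f
    set F : ℕ → X × ℝ → X × ℝ := fun n p =>
      (p.1 + cf p.2 n • xc (ωf p.1 n) (t0f p.1 p.2 n),
       min p.2 (Real.exp (-(2 * ωf p.1 n * tc (ωf p.1 n) (t0f p.1 p.2 n))) /
         (Cb (tc (ωf p.1 n) (t0f p.1 p.2 n)) + 1))) with hF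
    set st : ℕ → X × ℝ := natSeq ((0:X), (1:ℝ)) F with hst
    set sq : ℕ → X := fun n => (st n).1 with hsq
    set δq : ℕ → ℝ := fun n => (st n).2 with hδq
    set ωq : ℕ → ℝ := fun n => ωf (sq n) n with hωq
    set cq : ℕ → ℝ := fun n => cf (δq n) n with hcq
    set t0q : ℕ → ℝ := fun n => t0f (sq n) (δq n) n with ht0q
    set tq : ℕ → ℝ := fun n => tc (ωq n) (t0q n) with htq
    set xq : ℕ → X := fun n => xc (ωq n) (t0q n) with hxq
    set βq : ℕ → ℝ := fun n => Real.exp (-(2 * ωq n * tq n)) / (Cb (tq n) + 1) with hβq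
    have hsq0 : sq 0 = 0 := by simp only [hsq, hst]; rfl
    have hδq0 : δq 0 = 1 := by simp only [hδq, hst]; rfl
    have hsqS : ∀ n, sq (n+1) = sq n + cq n • xq n := by
      intro n
      simp only [hsq, hcq, hxq, hωq, ht0q, hδq, hst]
      rfl
    have hδqS : ∀ n, δq (n+1) = min (δq n) (βq n) := by
      intro n
      simp only [hδq, hβq, htq, hωq, ht0q, hsq, hst]
      rfl
    clear_value ωf cf t0f F st sq δq ωq cq t0q tq xq βq
    have hβpos : ∀ n, 0 < βq n := by
      intro n
      have h1 := hCbpos (tq n)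
      rw [hβq]
      positivity
    have hδpos : ∀ n, 0 < δq n := by
      intro n
      induction n with
      | zero => rw [hδq0]; norm_num
      | succ n ih => rw [hδqS n]; exact lt_min ih (hβpos n)
    have hδle1 : ∀ n, δq n ≤ 1 := by
      intro n
      induction n with
      | zero => rw [hδq0]
      | succ n ih => rw [hδqS n]; exact le_trans (min_le_left _ _) ih
    have hδmono : ∀ k n, k ≤ n → δq n ≤ δq k := by
      intro k n h
      induction n, h using Nat.le_induction with
      | base => exact le_refl _
      | succ n hkn ih => rw [hδqS n]; exact le_trans (min_le_left _ _) ih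
    have hcqpos : ∀ n, 0 < cq n := by
      intro n
      have := hδpos n
      rw [hcq, hcf]
      positivity
    have hcqle : ∀ n, cq n ≤ (2:ℝ)⁻¹^n := by
      intro n
      rw [hcq, hcf]
      calc (2:ℝ)⁻¹^n * δq n ≤ (2:ℝ)⁻¹^n * 1 := by
            have := hδle1 n
            have : (0:ℝ) < (2:ℝ)⁻¹^n := by positivity
            nlinarith [hδle1 n]
      _ = (2:ℝ)⁻¹^n := mul_one _
    have hcqβ : ∀ n j, n < j → cq j ≤ (2:ℝ)⁻¹^j * βq n := by
      intro n j hnj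
      rw [hcq, hcf]
      have h1 : δq j ≤ βq n := by
        have h2 : δq j ≤ δq (n+1) := hδmono _ _ hnj
        rw [hδqS n] at h2
        exact le_trans h2 (min_le_right _ _)
      have : (0:ℝ) < (2:ℝ)⁻¹^j := by positivity
      nlinarith
    have hωpos : ∀ n, 0 < ωq n := by
      intro n
      rw [hωq, hωf]
      have h1 : (0:ℝ) < 1/((n:ℝ)+1) := by positivity
      have h2 := hWpos (sq n)
      simp only []
      have := lt_min h1 h2
      linarith
    have hω2a : ∀ n, 2 * ωq n ≤ W (sq n) := by
      intro n
      rw [hωq, hωf]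
      simp only []
      have := min_le_right (1/((n:ℝ)+1)) (W (sq n))
      linarith
    have hω2b : ∀ n, 2 * ωq n ≤ 1/((n:ℝ)+1) := by
      intro n
      rw [hωq, hωf]
      simp only []
      have := min_le_left (1/((n:ℝ)+1)) (W (sq n))
      linarith
    have ht0a : ∀ n : ℕ, (n:ℝ) ≤ t0q n := by
      intro n
      rw [ht0q, ht0f]
      exact le_trans (le_max_left _ _) (le_max_left _ _)
    have ht0b : ∀ n, T₁ (sq n) ≤ t0q n := by
      intro n
      rw [ht0q, ht0f]
      exact le_trans (le_max_right _ _) (le_max_left _ _)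
    have ht0c : ∀ n : ℕ, Real.log (((n:ℝ)+3)/(E (ωq n) * cq n)) / (ωq n) ≤ t0q n := by
      intro n
      rw [ht0q, ht0f, hωq, hcq]
      exact le_max_right _ _
    have htqge : ∀ n, t0q n ≤ tq n := by
      intro n
      rw [htq]
      exact htc _ _
    have htq0 : ∀ n, 0 ≤ tq n := by
      intro n
      exact le_trans (Nat.cast_nonneg n) (le_trans (ht0a n) (htqge n))
    have hxqB : ∀ n, xq n ∈ B := by
      intro n
      rw [hxq]
      exact hxcB _ _
    have hxqlow : ∀ n, E (ωq n) < Γ i (Real.exp (ωq n * tq n) • T (tq n) (xq n)) := by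
      intro n
      rw [hxq, htq]
      exact hxc _ _ (hωpos n)
    have hbig : ∀ n : ℕ, ((n:ℝ)+3) ≤ cq n * E (ωq n) * Real.exp (ωq n * tq n) := by
      intro n
      have hω := hωpos n
      have hc := hcqpos n
      have hE := hEpos (ωq n)
      have hupos : 0 < ((n:ℝ)+3)/(E (ωq n) * cq n) := div_pos (by positivity) (mul_pos hE hc)
      have h1 : Real.log (((n:ℝ)+3)/(E (ωq n) * cq n)) / ωq n ≤ tq n :=
        le_trans (ht0c n) (htqge n)
      rw [div_le_iff₀ hω] at h1
      have h3 : ((n:ℝ)+3)/(E (ωq n) * cq n) ≤ Real.exp (ωq n * tq n) := by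
        calc ((n:ℝ)+3)/(E (ωq n) * cq n)
            = Real.exp (Real.log (((n:ℝ)+3)/(E (ωq n) * cq n))) := (Real.exp_log hupos).symm
        _ ≤ Real.exp (ωq n * tq n) := Real.exp_le_exp.mpr (by nlinarith)
      rw [div_le_iff₀ (mul_pos hE hc)] at h3
      nlinarith
    have hhead : ∀ n : ℕ, Real.exp (2 * ωq n * tq n) * Γ i (T (tq n) (sq n)) ≤ 1 := by
      intro n
      have h1 := hT₁ (sq n) (tq n) (le_trans (ht0b n) (htqge n))
      rw [map_smul_eq_mul, Real.norm_eq_abs, abs_of_pos (Real.exp_pos _)] at h1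
      have h3 : Real.exp (2 * ωq n * tq n) ≤ Real.exp (W (sq n) * tq n) :=
        Real.exp_le_exp.mpr (mul_le_mul_of_nonneg_right (hω2a n) (htq0 n))
      have h4 := apply_nonneg (Γ i) (T (tq n) (sq n))
      nlinarith
    have hsum : ∀ n, sq n = ∑ j ∈ Finset.range n, cq j • xq j := by
      intro n
      induction n with
      | zero => simpa using hsq0
      | succ n ih => rw [Finset.sum_range_succ, ← ih, hsqS n]
    -- the Mackey Cauchy data
    set b : ℕ → ℕ → ℝ := fun n k => ∑ j ∈ Finset.Ico (min n k) (max n k), cq j with hbdef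
    set B' : Set X := {w | ∀ i', Γ i' w ≤ Call i'} with hB'def
    have h0B' : (0:X) ∈ B' := by
      simp only [hB'def, Set.mem_setOf_eq]
      intro i'
      rw [map_zero]
      exact (hCallpos i').le
    have hB'bd : IsVonNBounded ℝ B' := by
      rw [hΓ.isVonNBounded_iff_seminorm_bounded]
      intro i'
      refine ⟨Call i' + 1, by linarith [hCallpos i'], fun x hx => ?_⟩
      simp only [hB'def, Set.mem_setOf_eq] at hx
      linarith [hx i']
    have hdiff : ∀ k n : ℕ, k ≤ n → sq n - sq k = ∑ j ∈ Finset.Ico k n, cq j • xq j := by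
      intro k n h
      rw [hsum n, hsum k, Finset.sum_Ico_eq_sub _ h]
    have hnegmem : ∀ (r : ℝ) (w : X), w ∈ r • B' → -w ∈ r • B' := by
      rintro r w ⟨y, hy, rfl⟩
      refine ⟨-y, ?_, smul_neg r y⟩
      simp only [hB'def, Set.mem_setOf_eq] at hy ⊢
      intro i'
      rw [map_neg_eq_map]
      exact hy i'
    have hmemkey : ∀ k n : ℕ, k ≤ n → sq n - sq k ∈ b n k • B' := by
      intro k n hkn
      have hbeq : b n k = ∑ j ∈ Finset.Ico k n, cq j := by
        rw [hbdef]
        simp only []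
        rw [min_eq_right hkn, max_eq_left hkn]
      by_cases hnk : k = n
      · subst hnk
        have hb0 : b k k = 0 := by rw [hbeq]; simp
        rw [sub_self, hb0, Set.zero_smul_set ⟨0, h0B'⟩]
        exact Set.mem_zero.mpr rfl
      · have hlt : k < n := lt_of_le_of_ne hkn hnk
        have hbpos : 0 < b n k := by
          rw [hbeq]
          exact Finset.sum_pos (fun j _ => hcqpos j) (Finset.nonempty_Ico.mpr hlt)
        rw [Set.mem_smul_set_iff_inv_smul_mem₀ hbpos.ne']
        simp only [hB'def, Set.mem_setOf_eq]
        intro i'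
        have hg : Γ i' (sq n - sq k) ≤ b n k * Call i' := by
          rw [hdiff k n hkn, hbeq, Finset.sum_mul]
          refine le_trans (aux_sum _ _ _) (Finset.sum_le_sum ?_)
          intro j _
          rw [map_smul_eq_mul, Real.norm_eq_abs, abs_of_pos (hcqpos j)]
          exact mul_le_mul_of_nonneg_left (hCall i' _ (hxqB j)) (hcqpos j).le
        rw [map_smul_eq_mul, Real.norm_eq_abs, abs_of_pos (inv_pos.mpr hbpos)]
        exact (inv_mul_le_iff₀ hbpos).mpr hg
    have hmem : ∀ n k : ℕ, sq n - sq k ∈ b n k • B' := by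
      intro n k
      rcases le_total k n with h | h
      · exact hmemkey k n h
      · have h2 := hmemkey n k h
        have hbsymm : b n k = b k n := by
          rw [hbdef]
          simp only []
          rw [min_comm, max_comm]
        rw [(neg_sub (sq k) (sq n)).symm, hbsymm]
        exact hnegmem _ _ h2
    have hbtend : Tendsto (fun p : ℕ × ℕ => b p.1 p.2) atTop (𝓝 0) := by
      have hup : ∀ p : ℕ × ℕ, b p.1 p.2 ≤ 2 * (2:ℝ)⁻¹ ^ (min p.1 p.2) := by
        intro p
        calc b p.1 p.2 ≤ ∑ j ∈ Finset.Ico (min p.1 p.2) (max p.1 p.2), (2:ℝ)⁻¹^j := by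
              rw [hbdef]
              exact Finset.sum_le_sum fun j _ => hcqle j
        _ ≤ _ := aux_geo _ _
      have hnn : ∀ p : ℕ × ℕ, 0 ≤ b p.1 p.2 := fun p => by
        rw [hbdef]
        exact Finset.sum_nonneg fun j _ => (hcqpos j).le
      have hmin : Tendsto (fun p : ℕ × ℕ => min p.1 p.2) atTop atTop := by
        rw [tendsto_atTop_atTop]
        intro m
        exact ⟨(m, m), fun a ha => le_min ha.1 ha.2⟩
      have hpow : Tendsto (fun m : ℕ => (2:ℝ)⁻¹ ^ m) atTop (𝓝 0) :=
        tendsto_pow_atTop_nhds_zero_of_lt_one (by norm_num) (by norm_num)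
      have h2 := (hpow.comp hmin).const_mul (2:ℝ)
      simp only [mul_zero] at h2
      exact squeeze_zero hnn hup h2
    obtain ⟨z, hz⟩ := hX sq ⟨B', b, hB'bd, hbtend, fun n k => hmem n k⟩
    -- choose the contradicting index
    obtain ⟨N, hN⟩ := exists_nat_ge (max (max (T₁ z) (1/(W z))) 1)
    have hT1z : T₁ z ≤ (N:ℝ) := le_trans (le_trans (le_max_left _ _) (le_max_left _ _)) hN
    have hWzN : 1/(W z) ≤ (N:ℝ) := le_trans (le_trans (le_max_right _ _) (le_max_left _ _)) hN
    have h1N : (1:ℝ) ≤ (N:ℝ) := le_trans (le_max_right _ _) hN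
    have hWn : 1/((N:ℝ)+1) ≤ W z := by
      have hw := hWpos z
      rw [div_le_iff₀ hw] at hWzN
      rw [div_le_iff₀ (show (0:ℝ) < (N:ℝ)+1 by positivity)]
      nlinarith
    set e2 := Real.exp (2 * ωq N * tq N) with he2
    have he2pos : 0 < e2 := Real.exp_pos _
    set G : X → ℝ := fun w => e2 * Γ i (T (tq N) w) with hG
    have hGcont : Continuous G := continuous_const.mul ((hcont i).comp (T (tq N)).continuous)
    have htail : ∀ M : ℕ, N+1 ≤ M → e2 * Γ i (T (tq N) (sq M - sq (N+1))) ≤ 1 := by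
      intro M hM
      rw [hdiff (N+1) M hM, map_sum]
      have h1 : Γ i (∑ j ∈ Finset.Ico (N+1) M, T (tq N) (cq j • xq j))
          ≤ ∑ j ∈ Finset.Ico (N+1) M, cq j * Cb (tq N) := by
        refine le_trans (aux_sum _ _ _) (Finset.sum_le_sum ?_)
        intro j _
        rw [map_smul, map_smul_eq_mul, Real.norm_eq_abs, abs_of_pos (hcqpos j)]
        exact mul_le_mul_of_nonneg_left (hCb _ _ (hxqB j)) (hcqpos j).le
      have h3 : ∑ j ∈ Finset.Ico (N+1) M, cq j ≤ βq N := by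
        calc ∑ j ∈ Finset.Ico (N+1) M, cq j
            ≤ ∑ j ∈ Finset.Ico (N+1) M, (2:ℝ)⁻¹^j * βq N := by
              refine Finset.sum_le_sum fun j hj => hcqβ N j ?_
              have := (Finset.mem_Ico.mp hj).1
              omega
        _ = (∑ j ∈ Finset.Ico (N+1) M, (2:ℝ)⁻¹^j) * βq N := by rw [Finset.sum_mul]
        _ ≤ (2 * (2:ℝ)⁻¹^(N+1)) * βq N :=
              mul_le_mul_of_nonneg_right (aux_geo _ _) (hβpos N).le
        _ ≤ 1 * βq N := by
              have h4 : (2:ℝ)⁻¹^N ≤ 1 := by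
                apply pow_le_one₀ <;> norm_num
              have h5 : (2:ℝ) * (2:ℝ)⁻¹^(N+1) ≤ 1 := by
                rw [pow_succ]
                nlinarith
              nlinarith [hβpos N]
        _ = βq N := one_mul _
      have h2 : ∑ j ∈ Finset.Ico (N+1) M, cq j * Cb (tq N) ≤ βq N * Cb (tq N) := by
        rw [← Finset.sum_mul]
        exact mul_le_mul_of_nonneg_right h3 (hCbpos _).le
      have h5 : e2 * (βq N * Cb (tq N)) ≤ 1 := by
        have hC := hCbpos (tq N)
        have hee : e2 * Real.exp (-(2 * ωq N * tq N)) = 1 := by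
          rw [he2, ← Real.exp_add]
          simp
        calc e2 * (βq N * Cb (tq N))
            = (e2 * Real.exp (-(2 * ωq N * tq N))) * (Cb (tq N) / (Cb (tq N) + 1)) := by
              rw [hβq]
              ring
        _ = Cb (tq N) / (Cb (tq N) + 1) := by rw [hee, one_mul]
        _ ≤ 1 := by
              rw [div_le_one (by linarith)]
              linarith
      have h6 : Γ i (∑ j ∈ Finset.Ico (N+1) M, T (tq N) (cq j • xq j)) ≤ βq N * Cb (tq N) :=
        le_trans h1 h2
      nlinarith [apply_nonneg (Γ i) (∑ j ∈ Finset.Ico (N+1) M, T (tq N) (cq j • xq j))]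
    have hlow : ∀ M : ℕ, N+1 ≤ M → ((N:ℝ)+1) ≤ G (sq M) := by
      intro M hM
      have htri : Γ i (T (tq N) (cq N • xq N)) ≤ Γ i (T (tq N) (sq M)) + Γ i (T (tq N) (sq N))
          + Γ i (T (tq N) (sq M - sq (N+1))) := by
        have hv : T (tq N) (cq N • xq N) = T (tq N) (sq M) - T (tq N) (sq N)
            - T (tq N) (sq M - sq (N+1)) := by
          rw [← map_sub, ← map_sub]
          congr 1
          rw [hsqS N]
          abel
        rw [hv]
        calc Γ i (T (tq N) (sq M) - T (tq N) (sq N) - T (tq N) (sq M - sq (N+1)))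
            ≤ Γ i (T (tq N) (sq M) - T (tq N) (sq N)) + Γ i (T (tq N) (sq M - sq (N+1))) :=
              map_sub_le_add _ _ _
        _ ≤ Γ i (T (tq N) (sq M)) + Γ i (T (tq N) (sq N)) + Γ i (T (tq N) (sq M - sq (N+1))) := by
              have := map_sub_le_add (Γ i) (T (tq N) (sq M)) (T (tq N) (sq N))
              linarith
      have hmain : ((N:ℝ)+3) ≤ e2 * Γ i (T (tq N) (cq N • xq N)) := by
        have h6 : e2 * Γ i (T (tq N) (cq N • xq N))
            = cq N * ((Real.exp (ωq N * tq N)) * (Real.exp (ωq N * tq N) * Γ i (T (tq N) (xq N)))) := by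
          rw [map_smul, map_smul_eq_mul, Real.norm_eq_abs, abs_of_pos (hcqpos N), he2,
            show (2:ℝ) * ωq N * tq N = ωq N * tq N + ωq N * tq N by ring, Real.exp_add]
          ring
        have h7 : E (ωq N) ≤ Real.exp (ωq N * tq N) * Γ i (T (tq N) (xq N)) := by
          have h8 := hxqlow N
          rw [map_smul_eq_mul, Real.norm_eq_abs, abs_of_pos (Real.exp_pos _)] at h8
          exact h8.le
        rw [h6]
        have hexp := Real.exp_pos (ωq N * tq N)
        have hc := hcqpos N
        calc ((N:ℝ)+3) ≤ cq N * E (ωq N) * Real.exp (ωq N * tq N) := hbig N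
        _ ≤ _ := by nlinarith [mul_le_mul_of_nonneg_left h7 (mul_pos hc hexp).le]
      have hh := hhead N
      have ht' := htail M hM
      have h9 := mul_le_mul_of_nonneg_left htri he2pos.le
      rw [hG]
      simp only []
      nlinarith
    have hzlow : ((N:ℝ)+1) ≤ G z :=
      ge_of_tendsto ((hGcont.tendsto z).comp hz) (eventually_atTop.mpr ⟨N+1, fun M hM => hlow M hM⟩)
    have hzup : G z ≤ 1 := by
      have h9 : T₁ z ≤ tq N := le_trans hT1z (le_trans (ht0a N) (htqge N))
      have h10 := hT₁ z (tq N) h9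
      rw [map_smul_eq_mul, Real.norm_eq_abs, abs_of_pos (Real.exp_pos _)] at h10
      have h11 : e2 ≤ Real.exp (W z * tq N) := by
        rw [he2]
        exact Real.exp_le_exp.mpr
          (mul_le_mul_of_nonneg_right (le_trans (hω2b N) hWn) (htq0 N))
      rw [hG]
      simp only []
      nlinarith [apply_nonneg (Γ i) (T (tq N) z)]
    linarith
  · -- easy direction (iv) → (iii)
    intro hiv i x
    obtain ⟨ω, hω, h⟩ := hiv i {x} (Bornology.isVonNBounded_singleton x)
    refine ⟨ω, hω, ?_⟩
    rw [Metric.tendsto_atTop]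
    intro ε hε
    obtain ⟨t₀, ht₀⟩ := h (ε/2) (by linarith)
    refine ⟨t₀, fun t ht => ?_⟩
    have := ht₀ t ht x rfl
    rw [Real.dist_eq, sub_zero, abs_of_nonneg (apply_nonneg _ _)]
    linarith
end

section
/- Let X be a Montel space, i.e., a barrelled Hausdorff locally convex space in which every bounded subset is relatively compact, with topology induced by a family Γ_X of continuous seminorms, and let (T(t))_{t≥0} be a bounded C₀-semigroup on X (i.e., for every bounded B ⊆ X and q ∈ Γ_X there is C ≥ 0 with sup_{x∈B} q(T(t)x) ≤ C for all t ≥ 0). Then the following are equivalent: (i) for every bounded set B ⊆ X and every q ∈ Γ_X one has lim_{t→∞} sup_{x∈B} q(T(t)x) = 0 (uniform stability); (ii) T(t)x → 0 in X as t → ∞ for every x ∈ X (strong stability). -/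
open Filter Topology Bornology

/-- Let `X` be a Montel space (barrelled, and every bounded set relatively compact)
and `(T(t))_{t ≥ 0}` a bounded `C₀`-semigroup on `X`. Then uniform stability is equivalent to
strong stability. -/
theorem statement9 {X : Type*} [AddCommGroup X] [Module ℝ X] [TopologicalSpace X]
    [T2Space X] [BarrelledSpace ℝ X]
    (hMontel : ∀ B : Set X, IsVonNBounded ℝ B → IsCompact (closure B))
    {ι : Type*} [Nonempty ι] (Γ : ι → Seminorm ℝ X) (hΓ : WithSeminorms Γ)
    (T : ℝ → X →L[ℝ] X)
    (hT0 : T 0 = ContinuousLinearMap.id ℝ X)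
    (hTsg : ∀ s t : ℝ, 0 ≤ s → 0 ≤ t → T (s + t) = (T s).comp (T t))
    (hTc : ∀ x : X, ContinuousOn (fun t : ℝ => T t x) (Set.Ici 0))
    (hbdd : ∀ B : Set X, IsVonNBounded ℝ B → ∀ i : ι, ∃ C : ℝ, 0 ≤ C ∧
      ∀ t : ℝ, 0 ≤ t → ∀ x ∈ B, Γ i (T t x) ≤ C) :
    (∀ B : Set X, IsVonNBounded ℝ B → ∀ i : ι, ∀ ε > (0:ℝ),
        ∃ t₀ : ℝ, ∀ t ≥ t₀, ∀ x ∈ B, Γ i (T t x) ≤ ε) ↔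
    (∀ x : X, Tendsto (fun t : ℝ => T t x) atTop (nhds 0)) := by
  haveI := hΓ.topologicalAddGroup
  haveI := hΓ.continuousSMul
  constructor
  · -- uniform ⇒ strong
    intro h x
    rw [hΓ.tendsto_nhds _ 0]
    intro i ε hε
    obtain ⟨t₀, ht₀⟩ := h {x} (Bornology.isVonNBounded_singleton x) i (ε/2) (by linarith)
    rw [eventually_atTop]
    exact ⟨t₀, fun t ht => by
      have := ht₀ t ht x rfl
      simpa [sub_zero] using lt_of_le_of_lt this (by linarith)⟩
  · -- strong ⇒ uniform
    intro h B hB i ε hε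
    -- Equicontinuity via Banach–Steinhaus (continuous sup seminorm)
    set q : {t : ℝ // 0 ≤ t} → Seminorm ℝ X :=
      fun t => (Γ i).comp (T t.1).toLinearMap with hq
    have hbddq : BddAbove (Set.range q) := by
      rw [Seminorm.bddAbove_range_iff]
      intro x
      obtain ⟨C, hC0, hC⟩ := hbdd {x} (Bornology.isVonNBounded_singleton x) i
      exact ⟨C, by rintro r ⟨t, rfl⟩; exact hC t.1 t.2 x rfl⟩
    have hqc : ∀ t, Continuous (q t) := fun t =>
      (hΓ.continuous_seminorm i).comp (T t.1).continuous
    set p : Seminorm ℝ X := ⨆ t, q t with hp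
    have hpc : Continuous (p : X → ℝ) := by
      rw [hp, Seminorm.coe_iSup_eq hbddq]
      exact Seminorm.continuous_iSup q hqc hbddq
    have hple : ∀ (t : ℝ), 0 ≤ t → ∀ z : X, Γ i (T t z) ≤ p z := by
      intro t ht z
      have h1 : BddAbove (Set.range fun s => q s z) := by
        rw [Seminorm.bddAbove_range_iff] at hbddq
        exact hbddq z
      have h2 : q ⟨t, ht⟩ z ≤ ⨆ s, q s z := le_ciSup h1 ⟨t, ht⟩
      have h3 : p z = ⨆ s, q s z := by
        rw [show p z = (⇑p : X → ℝ) z from rfl, hp, Seminorm.coe_iSup_eq hbddq]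
        exact iSup_apply
      rw [h3]
      simpa [hq, Seminorm.comp_apply] using h2
    -- compactness of closure B
    have hK : IsCompact (closure B) := hMontel B hB
    -- neighborhoods
    set U : X → Set X := fun x => {y | p (y - x) < ε/2} with hU
    have hUnhds : ∀ x ∈ closure B, U x ∈ 𝓝 x := by
      intro x _
      have hopen : IsOpen (U x) :=
        isOpen_lt (hpc.comp (continuous_id.sub continuous_const)) continuous_const
      exact hopen.mem_nhds (by simp [hU, map_zero p, half_pos hε])
    obtain ⟨s, hsK, hscover⟩ := hK.elim_nhds_subcover U hUnhds
    -- for each x, some time after which Γ i (T t x) < ε/2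
    have hτ : ∀ x : X, ∃ τ : ℝ, 0 ≤ τ ∧ ∀ t ≥ τ, Γ i (T t x) < ε/2 := by
      intro x
      have := (hΓ.tendsto_nhds (fun t : ℝ => T t x) 0).mp (h x) i (ε/2) (half_pos hε)
      rw [eventually_atTop] at this
      obtain ⟨τ, hτ⟩ := this
      exact ⟨max τ 0, le_max_right _ _, fun t ht => by
        simpa [sub_zero] using hτ t (le_trans (le_max_left _ _) ht)⟩
    choose τ hτ0 hτlt using hτ
    obtain ⟨M, hM⟩ := Finset.exists_le (s.image τ)
    refine ⟨max M 0, fun t ht y hy => ?_⟩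
    have ht0 : (0:ℝ) ≤ t := le_trans (le_max_right _ _) ht
    have hyK : y ∈ closure B := subset_closure hy
    obtain ⟨x, hxs, hyU⟩ := Set.mem_iUnion₂.mp (hscover hyK)
    have htx : τ x ≤ t := by
      have : τ x ≤ M := hM _ (Finset.mem_image_of_mem τ hxs)
      exact le_trans this (le_trans (le_max_left _ _) ht)
    have h1 : Γ i (T t y - T t x) < ε/2 := by
      have : T t y - T t x = T t (y - x) := by rw [map_sub]
      rw [this]
      exact lt_of_le_of_lt (hple t ht0 _) hyU
    have h2 : Γ i (T t x) < ε/2 := hτlt x t htx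
    calc Γ i (T t y) = Γ i ((T t y - T t x) + T t x) := by rw [sub_add_cancel]
      _ ≤ Γ i (T t y - T t x) + Γ i (T t x) := map_add_le_add _ _ _
      _ ≤ ε := by linarith
end

section
/- Let X be a Mackey complete, barrelled Hausdorff locally convex space whose topology is induced by a family Γ_X of continuous seminorms, and let (T(t))_{t≥0} be an exponentially bounded C₀-semigroup on X. If (T(t))_{t≥0} is pseudo strongly exponentially stable, i.e., for every q ∈ Γ_X and every x ∈ X there exists ω > 0 with lim_{t→∞} q(e^{ωt} T(t)x) = 0, then (T(t))_{t≥0} is super polynomially stable, i.e., for every α > 1, every bounded set B ⊆ X and every q ∈ Γ_X one has lim_{t→∞} sup_{x∈B} q(t^α T(t)x) = 0. -/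
open Filter Topology Bornology Pointwise

/-- On a Mackey complete barrelled Hausdorff locally convex space, an exponentially
bounded, pseudo strongly exponentially stable `C₀`-semigroup is super polynomially stable. -/
theorem statement10 {X : Type*} [AddCommGroup X] [Module ℝ X] [TopologicalSpace X]
    [T2Space X] [BarrelledSpace ℝ X] (hX : MackeyComplete X)
    {ι : Type*} [Nonempty ι] (Γ : ι → Seminorm ℝ X) (hΓ : WithSeminorms Γ)
    (T : ℝ → X →L[ℝ] X)
    (hT0 : T 0 = ContinuousLinearMap.id ℝ X)
    (hTsg : ∀ s t : ℝ, 0 ≤ s → 0 ≤ t → T (s + t) = (T s).comp (T t))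
    (hTc : ∀ x : X, ContinuousOn (fun t : ℝ => T t x) (Set.Ici 0))
    (hexp : ∀ i : ι, ∃ j : ι, ∃ M : ℝ, 1 ≤ M ∧ ∃ ω : ℝ,
      ∀ t : ℝ, 0 ≤ t → ∀ x : X, Γ i (T t x) ≤ M * Real.exp (ω * t) * Γ j x)
    (hpse : ∀ i : ι, ∀ x : X, ∃ ω > (0:ℝ),
      Tendsto (fun t : ℝ => Γ i (Real.exp (ω * t) • T t x)) atTop (nhds 0)) :
    ∀ α > (1:ℝ), ∀ B : Set X, IsVonNBounded ℝ B → ∀ i : ι, ∀ ε > (0:ℝ),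
      ∃ t₀ : ℝ, ∀ t ≥ t₀, ∀ x ∈ B, Γ i ((t ^ α : ℝ) • T t x) ≤ ε := by
  intro α hα B hB i ε hε
  set β : ℝ := α + 1 with hβ
  have hβpos : 0 < β := by simp only [hβ]; linarith
  set g : Set.Ici (0:ℝ) → Seminorm ℝ X :=
    fun t => ((t : ℝ) ^ β).toNNReal • ((Γ i).comp ((T (t : ℝ)) : X →ₗ[ℝ] X)) with hg
  have hg_apply : ∀ (t : Set.Ici (0:ℝ)) (x : X),
      g t x = (t : ℝ) ^ β * Γ i (T (t : ℝ) x) := by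
    intro t x
    have ht : (0:ℝ) ≤ (t : ℝ) ^ β := Real.rpow_nonneg t.2 β
    rw [hg]
    simp only [Seminorm.smul_apply, Seminorm.comp_apply, NNReal.smul_def, smul_eq_mul,
      LinearMap.coe_coe]
    rw [Real.coe_toNNReal _ ht]
    rfl
  -- pointwise boundedness
  have hbdd : BddAbove (Set.range g) := by
    rw [Seminorm.bddAbove_range_iff]
    intro x
    obtain ⟨ω, hω, htend⟩ := hpse i x
    have key : Tendsto (fun t : ℝ => t ^ β * Γ i (T t x)) atTop (nhds 0) := by
      have h1 : Tendsto (fun t : ℝ => t ^ β * Real.exp (-ω * t)) atTop (nhds 0) :=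
        tendsto_rpow_mul_exp_neg_mul_atTop_nhds_zero β ω hω
      have h2 := h1.mul htend
      rw [mul_zero] at h2
      refine h2.congr fun t => ?_
      have hs : Γ i (Real.exp (ω * t) • T t x) = Real.exp (ω * t) * Γ i (T t x) := by
        rw [map_smul_eq_mul, Real.norm_eq_abs, abs_of_pos (Real.exp_pos _)]
      have he : Real.exp (-ω * t) * Real.exp (ω * t) = 1 := by
        rw [← Real.exp_add]
        ring_nf
        exact Real.exp_zero
      rw [hs]
      linear_combination t ^ β * Γ i (T t x) * he
    obtain ⟨t₁, ht₁⟩ := (Filter.tendsto_atTop'.mp key.norm (Set.Iio 1)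
      (Iio_mem_nhds (by simp : ‖(0:ℝ)‖ < 1)))
    set t₂ : ℝ := max t₁ 0 with ht₂def
    have hcont : ContinuousOn (fun t : ℝ => t ^ β * Γ i (T t x)) (Set.Icc 0 t₂) := by
      apply ContinuousOn.mul
      · intro t ht
        exact (Real.continuousAt_rpow_const t β (Or.inr hβpos.le)).continuousWithinAt
      · exact (hΓ.continuous_seminorm i).comp_continuousOn
          ((hTc x).mono Set.Icc_subset_Ici_self)
    obtain ⟨C₁, hC₁⟩ := (isCompact_Icc.image_of_continuousOn hcont).bddAbove
    refine ⟨max C₁ 1, ?_⟩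
    rintro r ⟨t, rfl⟩
    show g t x ≤ max C₁ 1
    rw [hg_apply]
    rcases le_or_gt (t : ℝ) t₂ with h | h
    · exact le_trans (hC₁ (Set.mem_image_of_mem _ ⟨t.2, h⟩)) (le_max_left _ _)
    · have h1 := ht₁ (t : ℝ) (le_of_lt (lt_of_le_of_lt (le_max_left t₁ 0) h))
      have h2 : (t : ℝ) ^ β * Γ i (T (t : ℝ) x) ≤ 1 :=
        le_of_lt (lt_of_le_of_lt (le_abs_self _) h1)
      exact le_trans h2 (le_max_right _ _)
  -- the sup seminorm is continuous by barrelledness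
  set p : Seminorm ℝ X := ⨆ t, g t with hp
  have hgc : ∀ t : Set.Ici (0:ℝ), Continuous (g t) := by
    intro t
    have : ⇑(g t) = fun x => (t : ℝ) ^ β * Γ i (T (t : ℝ) x) := funext (hg_apply t)
    rw [this]
    exact continuous_const.mul ((hΓ.continuous_seminorm i).comp (T (t : ℝ)).continuous)
  have hp_cont : Continuous p := by
    have h := Seminorm.continuous_iSup g hgc hbdd
    rw [hp, Seminorm.coe_iSup_eq hbdd]
    exact h
  have hgp : ∀ (t : Set.Ici (0:ℝ)) (x : X), g t x ≤ p x := by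
    intro t x
    exact Seminorm.le_def.mp (le_ciSup hbdd t) x
  -- B is bounded so p is bounded on B
  have hU : {x : X | p x < 1} ∈ nhds (0 : X) := by
    have ho : IsOpen {x : X | p x < 1} := isOpen_lt hp_cont continuous_const
    exact ho.mem_nhds (by simp)
  obtain ⟨c, hcB⟩ := (hB hU).exists
  have hCbound : ∀ x ∈ B, p x ≤ ‖c‖ := by
    intro x hx
    obtain ⟨y, hy, rfl⟩ := hcB hx
    calc p (c • y) = ‖c‖ * p y := map_smul_eq_mul p c y
      _ ≤ ‖c‖ * 1 := mul_le_mul_of_nonneg_left (le_of_lt hy) (norm_nonneg c)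
      _ = ‖c‖ := mul_one _
  -- finish
  refine ⟨max 1 (‖c‖ / ε), fun t ht x hx => ?_⟩
  have ht1 : (1:ℝ) ≤ t := le_trans (le_max_left _ _) ht
  have htpos : (0:ℝ) < t := lt_of_lt_of_le one_pos ht1
  have htβ : t ^ β = t ^ α * t := by
    rw [hβ, Real.rpow_add htpos, Real.rpow_one]
  have hkey : t ^ β * Γ i (T t x) ≤ ‖c‖ := by
    have h := hgp ⟨t, le_of_lt htpos⟩ x
    rw [hg_apply] at h
    exact le_trans h (hCbound x hx)
  have hΓnn : 0 ≤ Γ i (T t x) := apply_nonneg _ _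
  have h3 : Γ i ((t ^ α : ℝ) • T t x) = t ^ α * Γ i (T t x) := by
    rw [map_smul_eq_mul, Real.norm_eq_abs, abs_of_nonneg (Real.rpow_nonneg (le_of_lt htpos) α)]
  rw [h3]
  have h4 : t ^ α * Γ i (T t x) * t ≤ ‖c‖ := by
    calc t ^ α * Γ i (T t x) * t = t ^ β * Γ i (T t x) := by rw [htβ]; ring
      _ ≤ ‖c‖ := hkey
  have h5 : ‖c‖ / ε ≤ t := le_trans (le_max_right _ _) ht
  have h6 : ‖c‖ ≤ ε * t := by
    rw [div_le_iff₀ hε] at h5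
    linarith
  nlinarith
end

section
/- Let X be a barrelled Hausdorff locally convex space whose topology is induced by a family Γ_X of continuous seminorms, and let (T(t))_{t≥0} be a C₀-semigroup on X such that lim_{t→∞} sup_{x∈B} q(T(t)x) = 0 for every bounded set B ⊆ X and every q ∈ Γ_X. Then (T(t))_{t≥0} is bounded, i.e., for every bounded set B ⊆ X and every q ∈ Γ_X there exists C ≥ 0 such that sup_{x∈B} q(T(t)x) ≤ C for all t ≥ 0. -/
open Filter Topology Bornology

/-- Observation 3.2: A `C₀`-semigroup on a barrelled Hausdorff locally convex
space which tends to `0` uniformly on bounded sets is bounded. -/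
theorem statement11 {X : Type*} [AddCommGroup X] [Module ℝ X] [TopologicalSpace X]
    [T2Space X] [BarrelledSpace ℝ X]
    {ι : Type*} [Nonempty ι] (Γ : ι → Seminorm ℝ X) (hΓ : WithSeminorms Γ)
    (T : ℝ → X →L[ℝ] X)
    (hT0 : T 0 = ContinuousLinearMap.id ℝ X)
    (hTsg : ∀ s t : ℝ, 0 ≤ s → 0 ≤ t → T (s + t) = (T s).comp (T t))
    (hTc : ∀ x : X, ContinuousOn (fun t : ℝ => T t x) (Set.Ici 0))
    (hconv : ∀ B : Set X, IsVonNBounded ℝ B → ∀ i : ι, ∀ ε > (0:ℝ),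
      ∃ t₀ : ℝ, ∀ t ≥ t₀, ∀ x ∈ B, Γ i (T t x) ≤ ε) :
    ∀ B : Set X, IsVonNBounded ℝ B → ∀ i : ι, ∃ C : ℝ, 0 ≤ C ∧
      ∀ t : ℝ, 0 ≤ t → ∀ x ∈ B, Γ i (T t x) ≤ C := by
  intro B hB i
  obtain ⟨t₀, ht₀⟩ := hconv B hB i 1 one_pos
  set s : ℝ := max t₀ 0 with hs
  -- the family of seminorms x ↦ Γ i (T t x), t ∈ [0, s]
  set P : Set.Icc (0:ℝ) s → Seminorm ℝ X :=
    fun k => (Γ i).comp (T k.1).toLinearMap with hP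
  haveI : Nonempty (Set.Icc (0:ℝ) s) := ⟨⟨0, le_refl 0, le_max_right _ _⟩⟩
  -- pointwise boundedness
  have hbdd : ∀ x : X, BddAbove (Set.range fun k : Set.Icc (0:ℝ) s => P k x) := by
    intro x
    have hcont : ContinuousOn (fun t : ℝ => Γ i (T t x)) (Set.Icc 0 s) :=
      (hΓ.continuous_seminorm i).comp_continuousOn
        ((hTc x).mono Set.Icc_subset_Ici_self)
    have hcomp := (isCompact_Icc (a := (0:ℝ)) (b := s)).bddAbove_image hcont
    have heq : (Set.range fun k : Set.Icc (0:ℝ) s => P k x)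
        = (fun t : ℝ => Γ i (T t x)) '' Set.Icc 0 s := by
      ext y
      constructor
      · rintro ⟨⟨t, ht⟩, rfl⟩; exact ⟨t, ht, rfl⟩
      · rintro ⟨t, ht, rfl⟩; exact ⟨⟨t, ht⟩, rfl⟩
    rwa [heq]
  have hbddP : BddAbove (Set.range P) := by
    rw [Seminorm.bddAbove_range_iff]; exact hbdd
  -- the sup seminorm is continuous by barrelledness
  set p : Seminorm ℝ X := ⨆ k, P k with hp
  have hscont : Continuous (⇑p) := by
    rw [hp, Seminorm.coe_iSup_eq hbddP]
    exact Seminorm.continuous_iSup P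
      (fun k => (hΓ.continuous_seminorm i).comp (T k.1).continuous) hbddP
  have hple : ∀ (k : Set.Icc (0:ℝ) s) (x : X), P k x ≤ p x := by
    intro k x
    have h2 : p x = ⨆ k, P k x := by
      rw [hp, Seminorm.coe_iSup_eq hbddP, iSup_apply]
    rw [h2]
    exact le_ciSup (hbdd x) k
  -- bound p on B by absorption
  have hU : {x : X | p x < 1} ∈ 𝓝 (0 : X) := by
    have : ({x : X | p x < 1}) = p ⁻¹' Set.Iio 1 := rfl
    rw [this]
    apply hscont.continuousAt.preimage_mem_nhds
    rw [map_zero]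
    exact Iio_mem_nhds one_pos
  obtain ⟨r, hr⟩ := absorbs_iff_norm.mp (hB hU)
  set a : ℝ := max r 1 with ha
  have ha1 : (1:ℝ) ≤ a := le_max_right _ _
  have haB := hr a (by
    rw [Real.norm_eq_abs, abs_of_pos (by linarith : (0:ℝ) < a)]; exact le_max_left _ _)
  have hpB : ∀ x ∈ B, p x ≤ a := by
    intro x hx
    obtain ⟨y, hy, rfl⟩ := haB hx
    have : p (a • y) = ‖a‖ * p y := by rw [map_smul_eq_mul]
    rw [this, Real.norm_eq_abs, abs_of_pos (by linarith)]
    exact mul_le_of_le_one_right (by linarith) (le_of_lt hy)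
  refine ⟨a, by linarith, fun t ht x hx => ?_⟩
  rcases le_or_gt t₀ t with h | h
  · exact (ht₀ t h x hx).trans ha1
  · have hts : t ∈ Set.Icc (0:ℝ) s := ⟨ht, le_trans h.le (le_max_left _ _)⟩
    exact le_trans (hple ⟨t, hts⟩ x) (hpB x hx)
end

section
/- (Principle of condensation of singularities) Let Y be a topological vector space which is a Baire space, let X be a (not necessarily Hausdorff) locally convex space whose topology is induced by a family Γ_X of continuous seminorms, and for each ν ∈ ℕ and μ ∈ [0,∞) let T_{ν,μ} : Y → X be a continuous linear map. Then the following are equivalent: (i) for every ν ∈ ℕ there exists y ∈ Y such that the set {T_{ν,μ} y : μ ≥ 0} is unbounded in X; (ii) there exists y ∈ Y such that for every ν ∈ ℕ the set {T_{ν,μ} y : μ ≥ 0} is unbounded in X. -/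
open Filter Topology Bornology

/-- Principle of condensation of singularities: Let `Y` be a topological vector
space which is a Baire space and `X` a (not necessarily Hausdorff) locally convex space with
topology induced by the seminorm family `Γ`.  For continuous linear maps
`T ν μ : Y → X` (`ν ∈ ℕ`, `μ ≥ 0`): singularities for each `ν` separately occur iff there is one
point `y` at which they all condense.  Here a set `S` is unbounded iff `sup_{x ∈ S} q x = ∞`
for some seminorm `q` of the family. -/
theorem statement12 {Y : Type*} [AddCommGroup Y] [Module ℝ Y] [TopologicalSpace Y]
    [IsTopologicalAddGroup Y] [ContinuousSMul ℝ Y] [BaireSpace Y]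
    {X : Type*} [AddCommGroup X] [Module ℝ X] [TopologicalSpace X]
    {ι : Type*} [Nonempty ι] (Γ : ι → Seminorm ℝ X) (hΓ : WithSeminorms Γ)
    (T : ℕ → ℝ → Y →L[ℝ] X) :
    (∀ ν : ℕ, ∃ y : Y, ∃ i : ι, ∀ C : ℝ, ∃ μ : ℝ, 0 ≤ μ ∧ C < Γ i (T ν μ y)) ↔
    (∃ y : Y, ∀ ν : ℕ, ∃ i : ι, ∀ C : ℝ, ∃ μ : ℝ, 0 ≤ μ ∧ C < Γ i (T ν μ y)) := by
  constructor
  · intro h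
    -- choose for each ν a witness point and seminorm index of unboundedness
    choose y₀ i₀ hy₀ using h
    haveI : Nonempty Y := ⟨y₀ 0⟩
    by_contra hc
    push_neg at hc
    -- closed sets
    set E : ℕ × ℕ → Set Y :=
      fun p => {y | ∀ μ : ℝ, 0 ≤ μ → Γ (i₀ p.1) (T p.1 μ y) ≤ (p.2 : ℝ)} with hE
    have hclosed : ∀ p, IsClosed (E p) := by
      intro p
      have : E p = ⋂ μ ∈ Set.Ici (0 : ℝ),
          (fun y => Γ (i₀ p.1) (T p.1 μ y)) ⁻¹' Set.Iic (p.2 : ℝ) := by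
        ext y; simp [hE, Set.mem_iInter]
      rw [this]
      exact isClosed_biInter fun μ _ =>
        IsClosed.preimage ((hΓ.continuous_seminorm (i₀ p.1)).comp (T p.1 μ).continuous)
          isClosed_Iic
    have hcover : ⋃ p, E p = Set.univ := by
      apply Set.eq_univ_of_forall
      intro y
      obtain ⟨ν, hν⟩ := hc y
      obtain ⟨C, hC⟩ := hν (i₀ ν)
      refine Set.mem_iUnion.2 ⟨(ν, ⌈C⌉₊), fun μ hμ => ?_⟩
      exact (hC μ hμ).trans (Nat.le_ceil C)
    obtain ⟨⟨ν, n⟩, x₀, hx₀⟩ := nonempty_interior_of_iUnion_of_closed hclosed hcover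
    -- W is a neighborhood of 0 on which all the maps are bounded by 2n
    set W : Set Y := (fun v => x₀ + v) ⁻¹' interior (E (ν, n)) with hW
    have hWnhds : W ∈ 𝓝 (0 : Y) := by
      have hcont : Continuous fun v : Y => x₀ + v := continuous_const.add continuous_id
      have := hcont.continuousAt (x := (0 : Y))
      apply this
      simpa using isOpen_interior.mem_nhds hx₀
    have hx₀E : x₀ ∈ E (ν, n) := interior_subset hx₀
    have hWbound : ∀ v ∈ W, ∀ μ : ℝ, 0 ≤ μ → Γ (i₀ ν) (T ν μ v) ≤ 2 * n := by
      intro v hv μ hμ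
      have h1 : Γ (i₀ ν) (T ν μ (x₀ + v)) ≤ (n : ℝ) := (interior_subset hv) μ hμ
      have h2 : Γ (i₀ ν) (T ν μ x₀) ≤ (n : ℝ) := hx₀E μ hμ
      have : T ν μ v = T ν μ (x₀ + v) - T ν μ x₀ := by
        rw [map_add]; abel
      rw [this]
      calc Γ (i₀ ν) (T ν μ (x₀ + v) - T ν μ x₀)
          ≤ Γ (i₀ ν) (T ν μ (x₀ + v)) + Γ (i₀ ν) (T ν μ x₀) := map_sub_le_add _ _ _
        _ ≤ 2 * n := by linarith
    -- W absorbs y₀ ν, contradiction with unboundedness at y₀ ν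
    have habs : Absorbent ℝ W := absorbent_nhds_zero hWnhds
    obtain ⟨c, hcW, hc0⟩ :=
      ((habs.eventually_nhdsNE_zero (y₀ ν)).and self_mem_nhdsWithin).exists
    have hc0 : c ≠ 0 := hc0
    obtain ⟨μ, hμ, hlt⟩ := hy₀ ν (|c|⁻¹ * (2 * n))
    have : Γ (i₀ ν) (T ν μ (y₀ ν)) ≤ |c|⁻¹ * (2 * n) := by
      have hy : y₀ ν = c⁻¹ • (c • y₀ ν) := by
        rw [smul_smul, inv_mul_cancel₀ hc0, one_smul]
      have hb := hWbound _ hcW μ hμ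
      calc Γ (i₀ ν) (T ν μ (y₀ ν)) = Γ (i₀ ν) (T ν μ (c⁻¹ • (c • y₀ ν))) := by rw [← hy]
        _ = |c⁻¹| * Γ (i₀ ν) (T ν μ (c • y₀ ν)) := by
            rw [map_smul]; exact map_smul_eq_mul _ _ _
        _ ≤ |c|⁻¹ * (2 * n) := by
            rw [abs_inv]
            exact mul_le_mul_of_nonneg_left hb (inv_nonneg.2 (abs_nonneg c))
    exact absurd this (not_le.2 hlt)
  · rintro ⟨y, hy⟩ ν
    exact ⟨y, hy ν⟩
end
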